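/- arXiv:1309.7236 — 9 statements merged into one kernel-verified Lean document; each statement's English description precedes it below -/
import Mathlib

section
/- Let L be an order-theoretic lattice equipped with a strictly monotone, additive rank function rk : L → ℕ and a subadditive function logvol : L → ℝ (i.e. logvol(W ⊓ W') + logvol(W ⊔ W') ≤ logvol(W) + logvol(W') for all W, W'). For W distinct from the top and bottom elements, define c_W as the infimum over all W₀ < W < W₂ of slope(W₂,W) − slope(W,W₀), where slope(A,B) = (logvol(A) − logvol(B))/(rk(A) − rk(B)). Then for any two incomparable elements V, W ∈ L, c_W ≤ 0 or c_V ≤ 0. -/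
/-- For an order-theoretic lattice `L` with a strictly monotone, additive
rank function and a subadditive `logvol`, any two incomparable elements `V, W` satisfy
`c W ≤ 0 ∨ c V ≤ 0`, where `c` is the infimum of slope differences. -/
theorem canonical_filtration_incomparable {L : Type*} [Lattice L] [BoundedOrder L]
    (rk : L → ℕ) (logvol : L → ℝ)
    (hmono : ∀ W W' : L, W < W' → rk W < rk W')
    (hadd : ∀ W W' : L, rk (W ⊓ W') + rk (W ⊔ W') = rk W + rk W')
    (hsub : ∀ W W' : L, logvol (W ⊓ W') + logvol (W ⊔ W') ≤ logvol W + logvol W')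
    (slope : L → L → ℝ)
    (hslope : ∀ A B : L, slope A B = (logvol A - logvol B) / ((rk A : ℝ) - (rk B : ℝ)))
    (c : L → ℝ)
    (hc : ∀ W : L, W ≠ ⊥ → W ≠ ⊤ →
      c W = sInf {x : ℝ | ∃ W₀ W₂ : L, W₀ < W ∧ W < W₂ ∧ x = slope W₂ W - slope W W₀})
    (V W : L) (hVW : ¬ V ≤ W) (hWV : ¬ W ≤ V) :
    c W ≤ 0 ∨ c V ≤ 0 := by
  have hmW : V ⊓ W < W := inf_lt_right.mpr hWV
  have hmV : V ⊓ W < V := inf_lt_left.mpr hVW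
  have hMW : W < V ⊔ W := right_lt_sup.mpr hVW
  have hMV : V < V ⊔ W := left_lt_sup.mpr hWV
  -- rank facts
  have hp : (rk W : ℝ) < rk (V ⊔ W) := by exact_mod_cast hmono _ _ hMW
  have hq : (rk (V ⊓ W) : ℝ) < rk W := by exact_mod_cast hmono _ _ hmW
  have hp' : (rk V : ℝ) < rk (V ⊔ W) := by exact_mod_cast hmono _ _ hMV
  have hq' : (rk (V ⊓ W) : ℝ) < rk V := by exact_mod_cast hmono _ _ hmV
  have hradd : (rk (V ⊓ W) : ℝ) + rk (V ⊔ W) = rk V + rk W := by exact_mod_cast hadd V W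
  have hvol := hsub V W
  -- the key claim on the explicit slope differences
  have key : slope (V ⊔ W) W - slope W (V ⊓ W) ≤ 0 ∨
      slope (V ⊔ W) V - slope V (V ⊓ W) ≤ 0 := by
    by_contra h
    push_neg at h
    obtain ⟨h1, h2⟩ := h
    clear hVW hWV
    rw [hslope, hslope] at h1 h2
    have e1 : (logvol W - logvol (V ⊓ W)) / ((rk W : ℝ) - rk (V ⊓ W))
        < (logvol (V ⊔ W) - logvol W) / ((rk (V ⊔ W) : ℝ) - rk W) := by linarith
    have e2 : (logvol V - logvol (V ⊓ W)) / ((rk V : ℝ) - rk (V ⊓ W))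
        < (logvol (V ⊔ W) - logvol V) / ((rk (V ⊔ W) : ℝ) - rk V) := by linarith
    rw [div_lt_div_iff₀ (by linarith) (by linarith)] at e1 e2
    have a1 : (rk (V ⊔ W) : ℝ) - rk V = (rk W : ℝ) - rk (V ⊓ W) := by linarith
    have a2 : (rk V : ℝ) - rk (V ⊓ W) = (rk (V ⊔ W) : ℝ) - rk W := by linarith
    rw [a1, a2] at e2
    have m1 := mul_le_mul_of_nonneg_right hvol (by linarith : (0:ℝ) ≤ (rk (V ⊔ W) : ℝ) - rk W)
    have m2 := mul_le_mul_of_nonneg_right hvol (by linarith : (0:ℝ) ≤ (rk W : ℝ) - rk (V ⊓ W))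
    nlinarith [e1, e2, m1, m2]
  -- from membership to the infimum
  have finish : ∀ X : L, V ⊓ W < X → X < V ⊔ W →
      slope (V ⊔ W) X - slope X (V ⊓ W) ≤ 0 → c X ≤ 0 := by
    intro X h1 h2 hx
    have hXbot : X ≠ ⊥ := by
      intro e; rw [e] at h1; exact absurd h1 (by simp)
    have hXtop : X ≠ ⊤ := by
      intro e; rw [e] at h2; exact absurd h2 (by simp)
    rw [hc X hXbot hXtop]
    set S : Set ℝ := {x : ℝ | ∃ W₀ W₂ : L, W₀ < X ∧ X < W₂ ∧ x = slope W₂ X - slope X W₀}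
    have hmem : slope (V ⊔ W) X - slope X (V ⊓ W) ∈ S := ⟨V ⊓ W, V ⊔ W, h1, h2, rfl⟩
    by_cases hbdd : BddBelow S
    · exact le_trans (csInf_le hbdd hmem) hx
    · rw [Real.sInf_of_not_bddBelow hbdd]
  rcases key with hk | hk
  · exact Or.inl (finish W hmW hMW hk)
  · exact Or.inr (finish V hmV hMV hk)
end

section
/- Let L be an order-theoretic lattice with rank function rk and volume function logvol satisfying: rk strictly monotone, rk additive, logvol subadditive. If two elements V, V' of L (both distinct from top and bottom) satisfy c_V > 0 and c_{V'} > 0 and rk(V) = rk(V'), then V = V'. -/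
/-- In an order-theoretic lattice with strictly monotone additive rank and
subadditive `logvol`, two elements (distinct from `⊥` and `⊤`) with positive `c`-value
and the same rank coincide. -/
theorem canonical_filtration_unique {L : Type*} [Lattice L] [BoundedOrder L]
    (rk : L → ℕ) (logvol : L → ℝ)
    (hmono : ∀ W W' : L, W < W' → rk W < rk W')
    (hadd : ∀ W W' : L, rk (W ⊓ W') + rk (W ⊔ W') = rk W + rk W')
    (hsub : ∀ W W' : L, logvol (W ⊓ W') + logvol (W ⊔ W') ≤ logvol W + logvol W')
    (slope : L → L → ℝ)
    (hslope : ∀ A B : L, slope A B = (logvol A - logvol B) / ((rk A : ℝ) - (rk B : ℝ)))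
    (c : L → ℝ)
    (hc : ∀ W : L, W ≠ ⊥ → W ≠ ⊤ →
      c W = sInf {x : ℝ | ∃ W₀ W₂ : L, W₀ < W ∧ W < W₂ ∧ x = slope W₂ W - slope W W₀})
    (V V' : L) (hV : V ≠ ⊥) (hV' : V' ≠ ⊥) (hVt : V ≠ ⊤) (hV't : V' ≠ ⊤)
    (hcV : 0 < c V) (hcV' : 0 < c V') (hrk : rk V = rk V') :
    V = V' := by
  by_contra hne
  -- key lemma: if 0 < c W and A < W < B with rk A + rk B = 2 rk W, then
  -- 2 logvol W < logvol A + logvol B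
  have key : ∀ W : L, W ≠ ⊥ → W ≠ ⊤ → 0 < c W → ∀ A B : L, A < W → W < B →
      (rk A : ℝ) + (rk B : ℝ) = 2 * (rk W : ℝ) →
      2 * logvol W < logvol A + logvol B := by
    intro W hWb hWt hcW A B hAW hWB hsum
    have hcW' := hc W hWb hWt
    set S := {x : ℝ | ∃ W₀ W₂ : L, W₀ < W ∧ W < W₂ ∧ x = slope W₂ W - slope W W₀} with hS
    have hmem : slope B W - slope W A ∈ S := ⟨A, B, hAW, hWB, rfl⟩
    have hbdd : BddBelow S := by
      by_contra h
      rw [hcW', Real.sInf_of_not_bddBelow h] at hcW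
      exact lt_irrefl 0 hcW
    have hx : 0 < slope B W - slope W A :=
      lt_of_lt_of_le (hcW'.symm ▸ hcW) (csInf_le hbdd hmem)
    have hra : rk A < rk W := hmono A W hAW
    have hrb : rk W < rk B := hmono W B hWB
    have hra' : (rk A : ℝ) < (rk W : ℝ) := by exact_mod_cast hra
    have hrb' : (rk W : ℝ) < (rk B : ℝ) := by exact_mod_cast hrb
    have hd : (rk B : ℝ) - (rk W : ℝ) = (rk W : ℝ) - (rk A : ℝ) := by linarith
    rw [hslope, hslope, hd] at hx
    have hpos : (0:ℝ) < (rk W : ℝ) - (rk A : ℝ) := by linarith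
    rw [div_sub_div_same] at hx
    have hX : 0 < (logvol B - logvol W) - (logvol W - logvol A) := by
      have h2 := mul_pos hx hpos
      rwa [div_mul_cancel₀ _ (ne_of_gt hpos)] at h2
    linarith
  -- V and V' are incomparable
  have hnle : ¬ V ≤ V' := by
    intro h
    have hlt : V < V' := lt_of_le_of_ne h hne
    exact absurd hrk (Nat.ne_of_lt (hmono V V' hlt))
  have hnle' : ¬ V' ≤ V := by
    intro h
    have hlt : V' < V := lt_of_le_of_ne h (Ne.symm hne)
    exact absurd hrk.symm (Nat.ne_of_lt (hmono V' V hlt))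
  have hAV : V ⊓ V' < V := lt_of_le_of_ne inf_le_left (fun h => hnle (inf_eq_left.mp h))
  have hAV' : V ⊓ V' < V' := lt_of_le_of_ne inf_le_right (fun h => hnle' (inf_eq_right.mp h))
  have hVB : V < V ⊔ V' := lt_of_le_of_ne le_sup_left (fun h => hnle' (sup_eq_left.mp h.symm))
  have hV'B : V' < V ⊔ V' := lt_of_le_of_ne le_sup_right (fun h => hnle (sup_eq_right.mp h.symm))
  have hsum : (rk (V ⊓ V') : ℝ) + (rk (V ⊔ V') : ℝ) = 2 * (rk V : ℝ) := by
    have := hadd V V'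
    have h2 : (rk (V ⊓ V') : ℝ) + (rk (V ⊔ V') : ℝ) = (rk V : ℝ) + (rk V' : ℝ) := by
      exact_mod_cast this
    rw [h2, hrk]; ring
  have hsum' : (rk (V ⊓ V') : ℝ) + (rk (V ⊔ V') : ℝ) = 2 * (rk V' : ℝ) := by
    rw [hsum, hrk]
  have h1 := key V hV hVt hcV (V ⊓ V') (V ⊔ V') hAV hVB hsum
  have h2 := key V' hV' hV't hcV' (V ⊓ V') (V ⊔ V') hAV' hV'B hsum'
  have h3 := hsub V V'
  linarith only [h1, h2, h3]
end

section
/- Let L be an order-theoretic lattice with a strictly monotone additive rank and subadditive logvol as above. Then the set of elements V ∈ L \ {⊥, ⊤} with c_V > 0 forms a chain: for any two such elements V, W, either V ≤ W or W ≤ V. -/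
/-- Helper: if the infimum of a set of reals is positive, every member is positive. -/
lemma pos_of_mem_of_sInf_pos {S : Set ℝ} {x : ℝ} (hx : x ∈ S) (h : 0 < sInf S) : 0 < x := by
  by_cases hb : BddBelow S
  · exact lt_of_lt_of_le h (csInf_le hb hx)
  · rw [Real.sInf_of_not_bddBelow hb] at h
    exact absurd h (lt_irrefl 0)

/-- In an order-theoretic lattice with strictly monotone additive rank and
subadditive `logvol`, the elements distinct from `⊥` and `⊤` with positive `c`-value form
a chain. -/
theorem canonical_filtration_chain {L : Type*} [Lattice L] [BoundedOrder L]
    (rk : L → ℕ) (logvol : L → ℝ)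
    (hmono : ∀ W W' : L, W < W' → rk W < rk W')
    (hadd : ∀ W W' : L, rk (W ⊓ W') + rk (W ⊔ W') = rk W + rk W')
    (hsub : ∀ W W' : L, logvol (W ⊓ W') + logvol (W ⊔ W') ≤ logvol W + logvol W')
    (slope : L → L → ℝ)
    (hslope : ∀ A B : L, slope A B = (logvol A - logvol B) / ((rk A : ℝ) - (rk B : ℝ)))
    (c : L → ℝ)
    (hc : ∀ W : L, W ≠ ⊥ → W ≠ ⊤ →
      c W = sInf {x : ℝ | ∃ W₀ W₂ : L, W₀ < W ∧ W < W₂ ∧ x = slope W₂ W - slope W W₀})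
    (V W : L) (hV : V ≠ ⊥) (hW : W ≠ ⊥) (hVt : V ≠ ⊤) (hWt : W ≠ ⊤)
    (hcV : 0 < c V) (hcW : 0 < c W) :
    V ≤ W ∨ W ≤ V := by
  by_contra hcon
  push_neg at hcon
  obtain ⟨h1, h2⟩ := hcon
  have hAV : V ⊓ W < V := inf_lt_left.2 h1
  have hAW : V ⊓ W < W := inf_lt_right.2 h2
  have hVB : V < V ⊔ W := left_lt_sup.2 h2
  have hWB : W < V ⊔ W := right_lt_sup.2 h1
  -- membership in the defining sets
  have hxV : slope (V ⊔ W) V - slope V (V ⊓ W) ∈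
      {x : ℝ | ∃ W₀ W₂ : L, W₀ < V ∧ V < W₂ ∧ x = slope W₂ V - slope V W₀} :=
    ⟨V ⊓ W, V ⊔ W, hAV, hVB, rfl⟩
  have hxW : slope (V ⊔ W) W - slope W (V ⊓ W) ∈
      {x : ℝ | ∃ W₀ W₂ : L, W₀ < W ∧ W < W₂ ∧ x = slope W₂ W - slope W W₀} :=
    ⟨V ⊓ W, V ⊔ W, hAW, hWB, rfl⟩
  rw [hc V hV hVt] at hcV
  rw [hc W hW hWt] at hcW
  have hpV : 0 < slope (V ⊔ W) V - slope V (V ⊓ W) := pos_of_mem_of_sInf_pos hxV hcV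
  have hpW : 0 < slope (V ⊔ W) W - slope W (V ⊓ W) := pos_of_mem_of_sInf_pos hxW hcW
  set la := logvol (V ⊓ W)
  set lb := logvol (V ⊔ W)
  set lv := logvol V
  set lw := logvol W
  have hra : (rk (V ⊓ W) : ℝ) + (rk (V ⊔ W) : ℝ) = (rk V : ℝ) + (rk W : ℝ) := by
    exact_mod_cast congrArg (Nat.cast : ℕ → ℝ) (hadd V W)
  have hsublv : la + lb ≤ lv + lw := hsub V W
  have d1 : (0 : ℝ) < (rk V : ℝ) - (rk (V ⊓ W) : ℝ) := by
    have := hmono _ _ hAV; exact sub_pos.2 (by exact_mod_cast this)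
  have d2 : (0 : ℝ) < (rk (V ⊔ W) : ℝ) - (rk V : ℝ) := by
    have := hmono _ _ hVB; exact sub_pos.2 (by exact_mod_cast this)
  have d3 : (0 : ℝ) < (rk W : ℝ) - (rk (V ⊓ W) : ℝ) := by
    have := hmono _ _ hAW; exact sub_pos.2 (by exact_mod_cast this)
  have d4 : (0 : ℝ) < (rk (V ⊔ W) : ℝ) - (rk W : ℝ) := by
    have := hmono _ _ hWB; exact sub_pos.2 (by exact_mod_cast this)
  rw [hslope, hslope, sub_pos, div_lt_div_iff₀ d1 d2] at hpV
  rw [hslope, hslope, sub_pos, div_lt_div_iff₀ d3 d4] at hpW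
  clear h1 h2 hxV hxW hcV hcW
  have e1 : (rk (V ⊔ W) : ℝ) - (rk V : ℝ) = (rk W : ℝ) - (rk (V ⊓ W) : ℝ) := by linarith
  have e2 : (rk (V ⊔ W) : ℝ) - (rk W : ℝ) = (rk V : ℝ) - (rk (V ⊓ W) : ℝ) := by linarith
  rw [e1] at hpV
  rw [e2] at hpW
  nlinarith [hpV, hpW,
    mul_nonneg (by linarith : (0:ℝ) ≤ lv + lw - la - lb) (by linarith : (0:ℝ) ≤
      ((rk V : ℝ) - (rk (V ⊓ W) : ℝ)) + ((rk W : ℝ) - (rk (V ⊓ W) : ℝ)))]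
end

section
/- Let s be an inner product on ℝ^n. For every real number C there are only finitely many direct summands W of ℤ^n with ln vol_W(s) ≤ C. -/
open Matrix Finset

namespace SmallSummands

variable {R : Type*} [CommRing R] {n m : ℕ}

def plk (m : ℕ) (M : Matrix (Fin m) (Fin n) R) (s : Finset (Fin n)) : R :=
  if h : s.card = m then (M.submatrix id (s.orderEmbOfFin h)).det else 0

def minorCons (M : Matrix (Fin m) (Fin n) R) (x : Fin n → R) (s : Finset (Fin n))
    (h : s.card = m + 1) : R :=
  ((Matrix.of (Matrix.vecCons x (fun i => M i))).submatrix id (s.orderEmbOfFin h)).det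

section detCons

def detCons (B : Matrix (Fin m) (Fin (m + 1)) R) : (Fin (m + 1) → R) →ₗ[R] R where
  toFun y := ((Matrix.of (Matrix.vecCons 0 (fun i => B i))).updateRow 0 y).det
  map_add' a b := Matrix.det_updateRow_add _ 0 a b
  map_smul' c a := Matrix.det_updateRow_smul _ 0 c a

lemma of_vecCons_eq_updateRow (B : Matrix (Fin m) (Fin (m + 1)) R) (y : Fin (m + 1) → R) :
    (Matrix.of (Matrix.vecCons y (fun i => B i))) =
      (Matrix.of (Matrix.vecCons 0 (fun i => B i))).updateRow 0 y := by
  ext i j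
  refine Fin.cases ?_ (fun i => ?_) i
  · simp
  · rw [Matrix.updateRow_ne (Fin.succ_ne_zero i)]
    simp

lemma detCons_apply (B : Matrix (Fin m) (Fin (m + 1)) R) (y : Fin (m + 1) → R) :
    detCons B y = (Matrix.of (Matrix.vecCons y (fun i => B i))).det := by
  rw [detCons]; dsimp only [LinearMap.coe_mk, AddHom.coe_mk]
  rw [← of_vecCons_eq_updateRow]

omit [CommRing R] in
lemma submatrix_vecCons (M : Matrix (Fin m) (Fin n) R) (x : Fin n → R)
    (e : Fin (m + 1) → Fin n) :
    (Matrix.of (Matrix.vecCons x (fun i => M i))).submatrix id e =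
      Matrix.of (Matrix.vecCons (x ∘ e) (fun i => (M.submatrix id e) i)) := by
  ext i j
  refine Fin.cases ?_ (fun i => ?_) i <;> simp [Matrix.submatrix_apply]

lemma minorCons_eq_detCons (M : Matrix (Fin m) (Fin n) R) (x : Fin n → R) (s : Finset (Fin n))
    (h : s.card = m + 1) :
    minorCons M x s h = detCons (M.submatrix id (s.orderEmbOfFin h)) (x ∘ (s.orderEmbOfFin h)) := by
  rw [minorCons, submatrix_vecCons, detCons_apply]

/-- prepending a row of `M` to `M` gives vanishing minors. -/
lemma minorCons_self (M : Matrix (Fin m) (Fin n) R) (i : Fin m) (s : Finset (Fin n))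
    (h : s.card = m + 1) : minorCons M (M i) s h = 0 := by
  refine Matrix.det_zero_of_row_eq (i := 0) (j := i.succ) (Fin.succ_ne_zero i).symm ?_
  ext j
  simp [Matrix.submatrix_apply]

/-- `minorCons` as a sum over an expansion of `x` in given vectors. -/
lemma minorCons_sum {ι : Type*} [Fintype ι] (M : Matrix (Fin m) (Fin n) R) (c : ι → R)
    (v : ι → (Fin n → R)) (s : Finset (Fin n)) (h : s.card = m + 1) :
    minorCons M (∑ i, c i • v i) s h = ∑ i, c i * minorCons M (v i) s h := by
  simp_rw [minorCons_eq_detCons]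
  have : (∑ i, c i • v i) ∘ (s.orderEmbOfFin h) = ∑ i, c i • (v i ∘ (s.orderEmbOfFin h)) := by
    funext k; simp [Finset.sum_apply]
  rw [this, map_sum]
  exact Finset.sum_congr rfl fun i _ => by rw [LinearMap.map_smul]; simp

end detCons

/-- FWD: if `x` is in the row span of `M` then all the minors of `x ::ᵥ M` vanish. -/
lemma minorCons_eq_zero_of_mem (M : Matrix (Fin m) (Fin n) R) (x : Fin n → R)
    (hx : x ∈ Submodule.span R (Set.range fun i => M i)) (s : Finset (Fin n))
    (h : s.card = m + 1) : minorCons M x s h = 0 := by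
  obtain ⟨c, rfl⟩ := (Submodule.mem_span_range_iff_exists_fun _).1 hx
  refine (minorCons_sum M c (fun i => M i) s h).trans ?_
  simp [minorCons_self]

/-- L1: a real matrix with independent rows has a nonzero maximal minor. -/
lemma exists_minor_ne_zero {p : ℕ} (N : Matrix (Fin p) (Fin n) ℝ)
    (hN : LinearIndependent ℝ (fun i => N i)) :
    ∃ (s : Finset (Fin n)) (h : s.card = p), (N.submatrix id (s.orderEmbOfFin h)).det ≠ 0 := by
  classical
  -- the columns of `N` span `ℝ^p`
  have hrank : N.rank = p := by simpa using hN.rank_matrix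
  have hspan : Submodule.span ℝ (Set.range Nᵀ) = ⊤ := by
    apply Submodule.eq_top_of_finrank_eq
    rw [show Set.range Nᵀ = Set.range N.col from rfl, ← Matrix.range_mulVecLin, ← Matrix.rank, hrank]
    simp [Module.finrank_fin_fun]
  obtain ⟨b, hb_sub, hb_span, hb_ind⟩ := exists_linearIndependent ℝ (Set.range Nᵀ)
  rw [hspan] at hb_span
  have hb_fin : b.Finite := hb_ind.finite
  haveI : Fintype b := hb_fin.fintype
  let bas : Module.Basis b ℝ (Fin p → ℝ) := Module.Basis.mk hb_ind (by rw [Subtype.range_coe, hb_span])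
  have hcard : Fintype.card b = p := by
    have := Module.finrank_eq_card_basis bas
    rw [Module.finrank_fin_fun] at this
    omega
  -- choose column indices realizing the elements of `b`
  have hex : ∀ v : b, ∃ j : Fin n, Nᵀ j = (v : Fin p → ℝ) := fun v => hb_sub v.2
  choose f hf using hex
  have hfinj : Function.Injective f := by
    intro v w hvw
    have : (v : Fin p → ℝ) = w := by rw [← hf v, ← hf w, hvw]
    exact Subtype.ext this
  let s : Finset (Fin n) := Finset.univ.image f
  have hs : s.card = p := by
    rw [Finset.card_image_of_injective _ hfinj, Finset.card_univ, hcard]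
  refine ⟨s, hs, ?_⟩
  -- the square submatrix has independent columns
  have hφ : ∀ k : Fin p, ∃ v : b, f v = s.orderEmbOfFin hs k := by
    intro k
    have : s.orderEmbOfFin hs k ∈ s := s.orderEmbOfFin_mem hs k
    simpa [s, eq_comm] using Finset.mem_image.1 this
  choose φ hφ using hφ
  have hφinj : Function.Injective φ := by
    intro k l hkl
    apply (s.orderEmbOfFin hs).injective
    rw [← hφ k, ← hφ l, hkl]
  have hcols : LinearIndependent ℝ (fun k : Fin p => (N.submatrix id (s.orderEmbOfFin hs))ᵀ k) := by
    have : (fun k : Fin p => (N.submatrix id (s.orderEmbOfFin hs))ᵀ k) =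
        (Subtype.val : b → (Fin p → ℝ)) ∘ φ := by
      funext k
      have := hf (φ k)
      rw [hφ k] at this
      ext i
      have := congrFun this i
      simpa [Matrix.submatrix_apply] using this.symm ▸ rfl
    rw [this]
    exact hb_ind.comp φ hφinj
  have hU : IsUnit (N.submatrix id (s.orderEmbOfFin hs)) :=
    Matrix.linearIndependent_cols_iff_isUnit.1 hcols
  exact ((Matrix.isUnit_iff_isUnit_det _).1 hU).ne_zero


lemma minorCons_eq_lapl (M : Matrix (Fin m) (Fin n) R) (x : Fin n → R) (s : Finset (Fin n))
    (h : s.card = m + 1) :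
    minorCons M x s h = ∑ j : Fin (m + 1), (-1) ^ (j : ℕ) * x (s.orderEmbOfFin h j) *
      plk m M (s.erase (s.orderEmbOfFin h j)) := by
  rw [minorCons, Matrix.det_succ_row_zero]
  refine Finset.sum_congr rfl fun j _ => ?_
  have hmem : s.orderEmbOfFin h j ∈ s := s.orderEmbOfFin_mem h j
  have hcard : (s.erase (s.orderEmbOfFin h j)).card = m := by
    rw [Finset.card_erase_of_mem hmem, h]; rfl
  have hemb : ((Fin.succAboveOrderEmb j).trans (s.orderEmbOfFin h)) =
      (s.erase (s.orderEmbOfFin h j)).orderEmbOfFin hcard := by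
    refine Finset.orderEmbOfFin_unique' hcard fun i => ?_
    refine Finset.mem_erase.2 ⟨?_, s.orderEmbOfFin_mem h _⟩
    exact fun hc => (j.succAbove_ne i) ((s.orderEmbOfFin h).injective hc)
  have hsub : (Matrix.of (Matrix.vecCons x (fun i => M i))).submatrix Fin.succ
      ((s.orderEmbOfFin h) ∘ j.succAbove) =
      M.submatrix id ((s.erase (s.orderEmbOfFin h j)).orderEmbOfFin hcard) := by
    ext i k
    have : ((Fin.succAboveOrderEmb j).trans (s.orderEmbOfFin h)) k =
        ((s.erase (s.orderEmbOfFin h j)).orderEmbOfFin hcard) k := by rw [hemb]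
    simp only [RelEmbedding.coe_trans, Function.comp_apply, Fin.succAboveOrderEmb_apply] at this
    simp [Matrix.submatrix_apply, ← this]
  rw [plk, dif_pos hcard, ← hsub]
  simp [Matrix.submatrix_apply]


lemma minorCons_map {S' : Type*} [CommRing S'] (f : R →+* S') (M : Matrix (Fin m) (Fin n) R)
    (x : Fin n → R) (s : Finset (Fin n)) (h : s.card = m + 1) :
    minorCons (M.map f) (f ∘ x) s h = f (minorCons M x s h) := by
  rw [minorCons, minorCons]
  have : ((Matrix.of (Matrix.vecCons (⇑f ∘ x) fun i => M.map (⇑f) i)).submatrix id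
      (s.orderEmbOfFin h)) = (((Matrix.of (Matrix.vecCons x fun i => M i)).submatrix id
      (s.orderEmbOfFin h))).map f := by
    ext i j
    refine Fin.cases ?_ (fun i => ?_) i <;>
      simp [Matrix.submatrix_apply, Matrix.map_apply]
  rw [this]
  exact (RingHom.map_det f _).symm

-- sum over `Fin n` of terms supported on indices `< m`
lemma sum_fin_lt {M' : Type*} [AddCommMonoid M'] (hmn : m ≤ n) (f : Fin n → M')
    (hf : ∀ j : Fin n, m ≤ (j : ℕ) → f j = 0) :
    ∑ j, f j = ∑ i : Fin m, f (Fin.castLE hmn i) := by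
  classical
  have : ∑ i : Fin m, f (Fin.castLE hmn i) = ∑ j ∈ Finset.univ.map (Fin.castLEEmb hmn), f j := by
    rw [Finset.sum_map]
    rfl
  rw [this]
  refine (Finset.sum_subset (Finset.subset_univ _) fun j _ hj => ?_).symm
  refine hf j ?_
  by_contra hc
  push_neg at hc
  exact hj (Finset.mem_map.2 ⟨⟨(j : ℕ), hc⟩, Finset.mem_univ _, by
    simp [Fin.castLEEmb, Fin.castLE]⟩)



/-- BWD: if all the `(m+1)`-minors of `x ::ᵥ M` vanish, where `M` consists of the top `m`
rows of a unimodular matrix `A`, then `x` is in the row span of `M`. -/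
lemma mem_of_minorCons_zero (hmn : m ≤ n) (A : Matrix (Fin n) (Fin n) ℤ)
    (hA : IsUnit A.det) (x : Fin n → ℤ)
    (hx : ∀ (s : Finset (Fin n)) (h : s.card = m + 1),
      minorCons (A.submatrix (Fin.castLE hmn) id) x s h = 0) :
    x ∈ Submodule.span ℤ (Set.range fun i => A.submatrix (Fin.castLE hmn) id i) := by
  classical
  set M : Matrix (Fin m) (Fin n) ℤ := A.submatrix (Fin.castLE hmn) id with hMdef
  haveI := A.invertibleOfIsUnitDet hA
  set c : Fin n → ℤ := Matrix.vecMul x (⅟A) with hcdef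
  have hxc : x = Matrix.vecMul c A := by
    rw [hcdef, Matrix.vecMul_vecMul, invOf_mul_self, Matrix.vecMul_one]
  have hxsum : ∀ k, x k = ∑ j, c j * A j k := by
    intro k
    conv_lhs => rw [hxc]
    simp [Matrix.vecMul, dotProduct]
  set ι : ℤ →+* ℝ := Int.castRingHom ℝ with hιdef
  set AR : Matrix (Fin n) (Fin n) ℝ := A.map (⇑ι) with hARdef
  set MR : Matrix (Fin m) (Fin n) ℝ := M.map (⇑ι) with hMRdef
  have hMRrow : ∀ i : Fin m, MR i = AR (Fin.castLE hmn i) := fun i => rfl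
  have hARdet : IsUnit AR.det := by
    have h' := hA.map ι
    rw [RingHom.map_det] at h'
    exact h'
  have hrows : LinearIndependent ℝ (fun j => AR j) :=
    Matrix.linearIndependent_rows_iff_isUnit.2 ((Matrix.isUnit_iff_isUnit_det _).2 hARdet)
  -- the key claim: the coordinates of `x` on the rows of `A` of index `≥ m` vanish
  have hczero : ∀ j : Fin n, m ≤ (j : ℕ) → c j = 0 := by
    intro j0 hj0m
    by_contra hc0
    set e : Fin n → ℝ := fun j => if m ≤ (j : ℕ) then (c j : ℝ) else 0 with hedef
    set y : Fin n → ℝ := ∑ j, e j • AR j with hydef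
    have hminorrow : ∀ (j : Fin n), (j : ℕ) < m → ∀ (s : Finset (Fin n)) (h : s.card = m + 1),
        minorCons MR (AR j) s h = 0 := by
      intro j hj s h
      have hrow : AR j = MR ⟨(j : ℕ), hj⟩ := by
        rw [hMRrow]
        congr 1
      rw [hrow]
      exact minorCons_self MR _ s h
    have hxR : (fun k => ((x k : ℤ) : ℝ)) = ∑ j, (c j : ℝ) • AR j := by
      funext k
      rw [Finset.sum_apply, hxsum k]
      push_cast
      refine Finset.sum_congr rfl fun j _ => ?_
      simp [hARdef, Matrix.map_apply]
    have hminors : ∀ (s : Finset (Fin n)) (h : s.card = m + 1), minorCons MR y s h = 0 := by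
      intro s h
      have h1 : minorCons MR y s h = ∑ j, e j * minorCons MR (AR j) s h := by
        rw [hydef]; exact minorCons_sum MR e (fun j => AR j) s h
      have h2 : minorCons MR (fun k => ((x k : ℤ) : ℝ)) s h
          = ∑ j, (c j : ℝ) * minorCons MR (AR j) s h := by
        rw [hxR]; exact minorCons_sum MR _ (fun j => AR j) s h
      have h3 : ∀ j, e j * minorCons MR (AR j) s h = (c j : ℝ) * minorCons MR (AR j) s h := by
        intro j
        by_cases hj : m ≤ (j : ℕ)
        · simp [hedef, hj]
        · push_neg at hj
          rw [hminorrow j hj s h]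
          ring
      have h4 : minorCons MR (fun k => ((x k : ℤ) : ℝ)) s h = 0 := by
        have h5 : minorCons MR ((⇑ι) ∘ x) s h = ι (minorCons M x s h) := by
          rw [hMRdef]; exact minorCons_map ι M x s h
        rw [show (fun k => ((x k : ℤ) : ℝ)) = (⇑ι) ∘ x from rfl, h5, hx s h]
        simp
      rw [h1]
      simp_rw [h3]
      rw [← h2, h4]
    -- but the rows of `y ::ᵥ MR` are linearly independent
    have hLI : LinearIndependent ℝ
        (fun i => (Matrix.of (Matrix.vecCons y (fun i => MR i))) i) := by
      rw [Fintype.linearIndependent_iff]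
      intro g hg
      have hg' : g 0 • y + ∑ i : Fin m, g i.succ • MR i = 0 := by
        rw [Fin.sum_univ_succ] at hg
        exact hg
      have hA1 : g 0 • y = ∑ j, (g 0 * e j) • AR j := by
        rw [hydef, Finset.smul_sum]
        simp [smul_smul]
      have hA2 : (∑ j, (if hj : ((j : Fin n) : ℕ) < m
            then g (⟨((j : Fin n) : ℕ), hj⟩ : Fin m).succ else 0) • AR j)
          = ∑ i : Fin m, g i.succ • MR i := by
        rw [sum_fin_lt hmn
          (fun j => (if hj : ((j : Fin n) : ℕ) < m
            then g (⟨((j : Fin n) : ℕ), hj⟩ : Fin m).succ else 0) • AR j)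
          (fun j hj => by
            show (if hj : ((j : Fin n) : ℕ) < m
              then g (⟨((j : Fin n) : ℕ), hj⟩ : Fin m).succ else 0) • AR j = 0
            rw [dif_neg (by omega)]
            exact zero_smul _ _)]
        refine Finset.sum_congr rfl fun i _ => ?_
        rw [hMRrow i]
        rw [dif_pos (show ((Fin.castLE hmn i : Fin n) : ℕ) < m from i.isLt)]
        rfl
      have hD : ∑ j, (g 0 * e j + (if hj : ((j : Fin n) : ℕ) < m
          then g (⟨((j : Fin n) : ℕ), hj⟩ : Fin m).succ else 0)) • AR j = 0 := by
        calc ∑ j, (g 0 * e j + (if hj : ((j : Fin n) : ℕ) < m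
              then g (⟨((j : Fin n) : ℕ), hj⟩ : Fin m).succ else 0)) • AR j
            = ∑ j, ((g 0 * e j) • AR j + (if hj : ((j : Fin n) : ℕ) < m
              then g (⟨((j : Fin n) : ℕ), hj⟩ : Fin m).succ else 0) • AR j) := by
              refine Finset.sum_congr rfl fun j _ => add_smul _ _ _
          _ = g 0 • y + ∑ i : Fin m, g i.succ • MR i := by
              rw [Finset.sum_add_distrib, ← hA1, hA2]
          _ = 0 := hg'
      have hDz := (Fintype.linearIndependent_iff.1 hrows) _ hD
      have hg0 : g 0 = 0 := by
        have h5 : g 0 * e j0 + (if hj : ((j0 : Fin n) : ℕ) < m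
            then g (⟨((j0 : Fin n) : ℕ), hj⟩ : Fin m).succ else 0) = 0 := hDz j0
        rw [dif_neg (by omega)] at h5
        have he : e j0 = (c j0 : ℝ) := by
          simp only [hedef]
          rw [if_pos hj0m]
        rw [he, add_zero] at h5
        rcases mul_eq_zero.1 h5 with h | h
        · exact h
        · exact absurd h (Int.cast_ne_zero.2 hc0)
      intro i
      refine Fin.cases hg0 (fun i => ?_) i
      have h6 : g 0 * e (Fin.castLE hmn i) + (if hj : ((Fin.castLE hmn i : Fin n) : ℕ) < m
          then g (⟨((Fin.castLE hmn i : Fin n) : ℕ), hj⟩ : Fin m).succ else 0) = 0 :=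
        hDz (Fin.castLE hmn i)
      rw [dif_pos (show ((Fin.castLE hmn i : Fin n) : ℕ) < m from i.isLt), hg0, zero_mul,
        zero_add] at h6
      exact h6
    obtain ⟨s, hcard, hdet⟩ := exists_minor_ne_zero _ hLI
    exact hdet (hminors s hcard)
  -- conclude: `x` is an integer combination of the rows of `M`
  refine (Submodule.mem_span_range_iff_exists_fun _).2 ⟨fun i => c (Fin.castLE hmn i), ?_⟩
  funext k
  have hsum : (∑ i : Fin m, c (Fin.castLE hmn i) • M i) k
      = ∑ i : Fin m, c (Fin.castLE hmn i) * A (Fin.castLE hmn i) k := by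
    simp [Finset.sum_apply, hMdef, Matrix.submatrix_apply]
  rw [hsum, hxsum k]
  exact (sum_fin_lt hmn (fun j => c j * A j k)
    (fun j hj => by show c j * A j k = 0; rw [hczero j hj, zero_mul])).symm


/-- INJ: two direct summands with the same rank and Plücker coordinates coincide. -/
lemma span_le_of_plk_eq (hmn : m ≤ n) (A₁ A₂ : Matrix (Fin n) (Fin n) ℤ)
    (h2 : IsUnit A₂.det)
    (hq : plk m (A₁.submatrix (Fin.castLE hmn) id) = plk m (A₂.submatrix (Fin.castLE hmn) id)) :
    Submodule.span ℤ (Set.range fun i => A₁.submatrix (Fin.castLE hmn) id i) ≤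
      Submodule.span ℤ (Set.range fun i => A₂.submatrix (Fin.castLE hmn) id i) := by
  intro x hx
  refine mem_of_minorCons_zero hmn A₂ h2 x fun s h => ?_
  rw [minorCons_eq_lapl]
  simp_rw [← hq]
  rw [← minorCons_eq_lapl]
  exact minorCons_eq_zero_of_mem _ x hx s h

/-- SUMMAND: every direct summand of `ℤ^n` is the row span of the top `m` rows of a
unimodular matrix, and those rows form a basis of it. -/
lemma exists_unimodular (W W' : Submodule ℤ (Fin n → ℤ)) (h : IsCompl W W') :
    ∃ (m : ℕ) (hmn : m ≤ n) (A : Matrix (Fin n) (Fin n) ℤ) (b : Module.Basis (Fin m) ℤ W),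
      IsUnit A.det ∧
      (∀ i : Fin m, (b i : Fin n → ℤ) = A.submatrix (Fin.castLE hmn) id i) ∧
      W = Submodule.span ℤ (Set.range fun i => A.submatrix (Fin.castLE hmn) id i) := by
  classical
  obtain ⟨m, bW⟩ := Submodule.basisOfPid (Pi.basisFun ℤ (Fin n)) W
  obtain ⟨m', bW'⟩ := Submodule.basisOfPid (Pi.basisFun ℤ (Fin n)) W'
  let eq1 : (W × W') ≃ₗ[ℤ] (Fin n → ℤ) := Submodule.prodEquivOfIsCompl W W' h
  let b0 : Module.Basis (Fin m ⊕ Fin m') ℤ (Fin n → ℤ) := (bW.prod bW').map eq1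
  have hn : m + m' = n := by
    have hcard := Module.finrank_eq_card_basis b0
    rw [Module.finrank_fin_fun] at hcard
    simp [Fintype.card_sum] at hcard
    omega
  have hmn : m ≤ n := by omega
  let eq2 : (Fin m ⊕ Fin m') ≃ Fin n := finSumFinEquiv.trans (finCongr hn)
  let b2 : Module.Basis (Fin n) ℤ (Fin n → ℤ) := b0.reindex eq2
  let A : Matrix (Fin n) (Fin n) ℤ := Matrix.of (fun i j => (b2 i) j)
  have hrow : ∀ i : Fin m, A.submatrix (Fin.castLE hmn) id i = (bW i : Fin n → ℤ) := by
    intro i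
    have he : eq2 (Sum.inl i) = Fin.castLE hmn i := by
      apply Fin.ext
      simp [eq2, finSumFinEquiv]
    have hb2 : b2 (Fin.castLE hmn i) = b0 (Sum.inl i) := by
      rw [← he, Module.Basis.reindex_apply, Equiv.symm_apply_apply]
    funext k
    have : A.submatrix (Fin.castLE hmn) id i k = (b2 (Fin.castLE hmn i)) k := rfl
    rw [this, hb2]
    have : b0 (Sum.inl i) = eq1 ((bW.prod bW') (Sum.inl i)) := Module.Basis.map_apply _ _ _
    rw [this]
    have hprod : (bW.prod bW') (Sum.inl i) = (bW i, 0) := by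
      ext
      · rw [Module.Basis.prod_apply_inl_fst]
      · rw [Module.Basis.prod_apply_inl_snd]
    rw [hprod]
    have : eq1 (bW i, (0 : W')) = (bW i : Fin n → ℤ) + ((0 : W') : Fin n → ℤ) := rfl
    rw [this]
    simp
  have hspan : W = Submodule.span ℤ (Set.range fun i => A.submatrix (Fin.castLE hmn) id i) := by
    have hfun : (fun i => A.submatrix (Fin.castLE hmn) id i) = W.subtype ∘ ⇑bW := by
      funext i
      rw [hrow i]
      rfl
    rw [hfun, Set.range_comp, ← Submodule.map_span, Module.Basis.span_eq, Submodule.map_subtype_top]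
  have hdet : IsUnit A.det := by
    have hPA : (Pi.basisFun ℤ (Fin n)).toMatrix (⇑b2) = Aᵀ := by
      ext i j
      rw [Module.Basis.toMatrix_apply, Pi.basisFun_repr]
      rfl
    have hmul := Module.Basis.toMatrix_mul_toMatrix_flip (Pi.basisFun ℤ (Fin n)) b2
    have hd : ((Pi.basisFun ℤ (Fin n)).toMatrix ⇑b2).det
        * (b2.toMatrix ⇑(Pi.basisFun ℤ (Fin n))).det = 1 := by
      rw [← Matrix.det_mul, hmul, Matrix.det_one]
    have : IsUnit ((Pi.basisFun ℤ (Fin n)).toMatrix ⇑b2).det := IsUnit.of_mul_eq_one _ hd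
    rw [hPA, Matrix.det_transpose] at this
    exact this
  exact ⟨m, hmn, A, bW, hdet, fun i => (hrow i).symm, hspan⟩


section Analytic

/-- determinant of a real positive semidefinite matrix is nonnegative. -/
lemma psd_det_nonneg {p : ℕ} {P : Matrix (Fin p) (Fin p) ℝ} (hP : P.PosSemidef) :
    0 ≤ P.det := by
  rw [hP.1.det_eq_prod_eigenvalues]
  refine Finset.prod_nonneg fun i _ => ?_
  have := hP.eigenvalues_nonneg i
  simpa using this

/-- `det (1 + K) ≥ 1` for `K` real positive semidefinite. -/
lemma one_le_det_one_add_psd {p : ℕ} {K : Matrix (Fin p) (Fin p) ℝ} (hK : K.PosSemidef) :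
    1 ≤ ((1 : Matrix (Fin p) (Fin p) ℝ) + K).det := by
  classical
  set U : Matrix (Fin p) (Fin p) ℝ := ↑hK.1.eigenvectorUnitary with hU
  have hUU : U * star U = 1 := Subtype.ext_iff.1 (Unitary.mul_star_self hK.1.eigenvectorUnitary)
  have hspec := hK.1.spectral_theorem
  set D : Matrix (Fin p) (Fin p) ℝ :=
    (1 : Matrix (Fin p) (Fin p) ℝ) + diagonal (RCLike.ofReal ∘ hK.1.eigenvalues) with hD
  have h1 : (1 : Matrix (Fin p) (Fin p) ℝ) + K = U * D * star U := by
    rw [hD, mul_add, add_mul, mul_one, hUU,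
      show U * diagonal (RCLike.ofReal ∘ hK.1.eigenvalues) * star U = K from hspec.symm]
  have hd : (1 : ℝ) ≤ D.det := by
    rw [hD, show (1 : Matrix (Fin p) (Fin p) ℝ) = diagonal (fun _ => 1) from
      (Matrix.diagonal_one).symm, Matrix.diagonal_add, Matrix.det_diagonal]
    refine le_trans (le_of_eq (Finset.prod_const_one).symm)
      (Finset.prod_le_prod (fun i _ => zero_le_one) fun i _ => ?_)
    have := hK.eigenvalues_nonneg i
    simp only [Function.comp_apply, RCLike.ofReal_real_eq_id, id_eq, Pi.add_apply]
    linarith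
  have hdetU : U.det * (star U).det = 1 := by
    rw [← Matrix.det_mul, hUU, Matrix.det_one]
  rw [h1, Matrix.det_mul, Matrix.det_mul]
  nlinarith [hdetU, hd, sq_nonneg (U.det - (star U).det), sq_nonneg (U.det + (star U).det)]

open scoped MatrixOrder in
/-- KEY: monotonicity of determinants for positive semidefinite matrices. -/
lemma det_le_det_add_psd {p : ℕ} {P N : Matrix (Fin p) (Fin p) ℝ}
    (hP : P.PosSemidef) (hN : N.PosSemidef) : P.det ≤ (P + N).det := by
  classical
  by_cases hdet : P.det = 0
  · rw [hdet]
    exact psd_det_nonneg (hP.add hN)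
  · set R : Matrix (Fin p) (Fin p) ℝ := CFC.sqrt P with hR
    have hRR : R * R = P := CFC.sqrt_mul_sqrt_self P hP.nonneg
    have hdetR : R.det * R.det = P.det := by rw [← Matrix.det_mul, hRR]
    have hRdet : R.det ≠ 0 := fun hc => hdet (by rw [← hdetR, hc, mul_zero])
    have hRunit : IsUnit R.det := isUnit_iff_ne_zero.2 hRdet
    have hRinv : R * R⁻¹ = 1 := Matrix.mul_nonsing_inv R hRunit
    have hRinv' : R⁻¹ * R = 1 := Matrix.nonsing_inv_mul R hRunit
    have hKpsd : ((R⁻¹) * N * (R⁻¹)ᴴ).PosSemidef := hN.mul_mul_conjTranspose_same R⁻¹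
    have hRh : Rᴴ = R := (CFC.sqrt_nonneg P).posSemidef.1
    have hRinvh : (R⁻¹)ᴴ = R⁻¹ := by rw [Matrix.conjTranspose_nonsing_inv, hRh]
    rw [hRinvh] at hKpsd
    have hNval : R * (R⁻¹ * N * R⁻¹) * R = N := by
      have : R * (R⁻¹ * N * R⁻¹) * R = (R * R⁻¹) * N * (R⁻¹ * R) := by
        simp only [Matrix.mul_assoc]
      rw [this, hRinv, hRinv', Matrix.one_mul, Matrix.mul_one]
    have hPN : P + N = R * ((1 : Matrix (Fin p) (Fin p) ℝ) + R⁻¹ * N * R⁻¹) * R := by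
      rw [mul_add, add_mul, mul_one, hRR, hNval]
    rw [hPN, Matrix.det_mul, Matrix.det_mul]
    have hPpos : 0 < P.det := lt_of_le_of_ne (psd_det_nonneg hP) (Ne.symm hdet)
    have h1K := one_le_det_one_add_psd hKpsd
    nlinarith [hdetR, hPpos, h1K]


/-- the Gram matrix of independent rows w.r.t. a positive definite form is positive definite. -/
lemma gram_posDef {m : ℕ} (S : Matrix (Fin n) (Fin n) ℝ) (hS : S.PosDef)
    (M : Matrix (Fin m) (Fin n) ℝ) (hM : LinearIndependent ℝ (fun i => M i)) :
    (M * S * Mᵀ).PosDef := by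
  have hSt : Sᵀ = S := by
    rw [← Matrix.conjTranspose_eq_transpose_of_trivial, hS.1]
  rw [Matrix.posDef_iff_dotProduct_mulVec]
  constructor
  · show (M * S * Mᵀ)ᴴ = M * S * Mᵀ
    rw [Matrix.conjTranspose_eq_transpose_of_trivial]
    simp [Matrix.transpose_mul, hSt, Matrix.mul_assoc]
  · intro x hx
    have hw : Mᵀ *ᵥ x = Matrix.vecMul x M := Matrix.mulVec_transpose M x
    have hcalc : dotProduct (star x) ((M * S * Mᵀ) *ᵥ x)
        = dotProduct (star (Matrix.vecMul x M)) (S *ᵥ (Matrix.vecMul x M)) := by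
      rw [star_trivial, ← Matrix.mulVec_mulVec, ← Matrix.mulVec_mulVec,
        Matrix.dotProduct_mulVec x (M) _, hw, star_trivial]
    rw [hcalc]
    refine (Matrix.posDef_iff_dotProduct_mulVec.1 hS).2 (x := _) fun hw0 => hx ?_
    have hsum : Matrix.vecMul x M = ∑ i, x i • M i := by
      funext k
      simp [Matrix.vecMul, dotProduct, Finset.sum_apply]
    have := Fintype.linearIndependent_iff.1 hM x (by rw [← hsum, hw0])
    funext i
    exact this i

/-- the squared Plücker coordinates are bounded by the Gram determinant. -/
lemma plk_sq_le {m : ℕ} (Mz : Matrix (Fin m) (Fin n) ℤ) (s : Finset (Fin n)) :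
    ((plk m Mz s : ℤ) : ℝ) ^ 2 ≤
      ((Mz.map (Int.cast : ℤ → ℝ)) * (Mz.map (Int.cast : ℤ → ℝ))ᵀ).det := by
  classical
  set MR : Matrix (Fin m) (Fin n) ℝ := Mz.map (Int.cast : ℤ → ℝ) with hMR
  have hpsd0 : (MR * MRᵀ).PosSemidef := by
    have := Matrix.posSemidef_self_mul_conjTranspose MR
    rwa [Matrix.conjTranspose_eq_transpose_of_trivial] at this
  rw [plk]
  by_cases h : s.card = m
  · rw [dif_pos h]
    set e := s.orderEmbOfFin h with he
    set Cs : Matrix (Fin m) (Fin m) ℝ := MR.submatrix id e with hCs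
    set Ds : Matrix (Fin m) {k // k ∈ sᶜ} ℝ :=
      MR.submatrix id (fun k : {k // k ∈ sᶜ} => (k : Fin n)) with hDs
    have hsplit : MR * MRᵀ = Cs * Csᵀ + Ds * Dsᵀ := by
      ext i j
      have h1 : (MR * MRᵀ) i j = ∑ k, MR i k * MR j k := by
        simp [Matrix.mul_apply]
      have h2 : (Cs * Csᵀ) i j = ∑ k ∈ s, MR i k * MR j k := by
        have him : s = Finset.univ.image e := by
          apply Finset.coe_injective
          rw [Finset.coe_image, Finset.coe_univ, Set.image_univ, Finset.range_orderEmbOfFin]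
        rw [Matrix.mul_apply]
        conv_rhs => rw [him]
        rw [Finset.sum_image (fun a _ b _ hab => e.injective hab)]
        simp [hCs, Matrix.submatrix_apply]
      have h3 : (Ds * Dsᵀ) i j = ∑ k ∈ sᶜ, MR i k * MR j k := by
        rw [Matrix.mul_apply, ← Finset.sum_coe_sort (sᶜ) (fun k => MR i k * MR j k)]
        simp [hDs, Matrix.submatrix_apply]
      rw [Matrix.add_apply, h1, h2, h3]
      exact (Finset.sum_add_sum_compl s _).symm
    have hCpsd : (Cs * Csᵀ).PosSemidef := by
      have := Matrix.posSemidef_self_mul_conjTranspose Cs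
      rwa [Matrix.conjTranspose_eq_transpose_of_trivial] at this
    have hDpsd : (Ds * Dsᵀ).PosSemidef := by
      have := Matrix.posSemidef_self_mul_conjTranspose Ds
      rwa [Matrix.conjTranspose_eq_transpose_of_trivial] at this
    have hdetC : Cs.det = ((Mz.submatrix id (e : Fin m → Fin n)).det : ℝ) := by
      have hCmap : Cs = (Mz.submatrix id (e : Fin m → Fin n)).map
          (⇑(Int.castRingHom ℝ)) := by
        ext i j
        simp [hCs, hMR, Matrix.submatrix_apply, Matrix.map_apply]
      rw [hCmap]
      exact (RingHom.map_det (Int.castRingHom ℝ) _).symm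
    calc ((Mz.submatrix id (e : Fin m → Fin n)).det : ℝ) ^ 2
        = Cs.det * Csᵀ.det := by rw [Matrix.det_transpose, hdetC]; ring
      _ = (Cs * Csᵀ).det := (Matrix.det_mul _ _).symm
      _ ≤ (Cs * Csᵀ + Ds * Dsᵀ).det := det_le_det_add_psd hCpsd hDpsd
      _ = (MR * MRᵀ).det := by rw [← hsplit]
  · rw [dif_neg h]
    simpa using psd_det_nonneg hpsd0


/-- comparison of the Gram determinant w.r.t. `S` with the standard Gram determinant. -/
lemma c_det_le {m : ℕ} (S : Matrix (Fin n) (Fin n) ℝ) (c : ℝ) (hc0 : 0 ≤ c)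
    (hc : (S - c • (1 : Matrix (Fin n) (Fin n) ℝ)).PosSemidef)
    (MR : Matrix (Fin m) (Fin n) ℝ) :
    c ^ m * (MR * MRᵀ).det ≤ (MR * S * MRᵀ).det := by
  have hsplit : MR * S * MRᵀ = c • (MR * MRᵀ) +
      MR * (S - c • (1 : Matrix (Fin n) (Fin n) ℝ)) * MRᵀ := by
    have h1 : MR * (c • (1 : Matrix (Fin n) (Fin n) ℝ)) * MRᵀ = c • (MR * MRᵀ) := by
      rw [Matrix.mul_smul, Matrix.mul_one, Matrix.smul_mul]
    rw [Matrix.mul_sub, Matrix.sub_mul, h1]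
    abel
  have hpsd1 : (c • (MR * MRᵀ)).PosSemidef := by
    have key : (Real.sqrt c • MR) * (Real.sqrt c • MR)ᵀ = c • (MR * MRᵀ) := by
      rw [Matrix.transpose_smul, Matrix.smul_mul, Matrix.mul_smul, smul_smul,
        Real.mul_self_sqrt hc0]
    rw [← key]
    have := Matrix.posSemidef_self_mul_conjTranspose (Real.sqrt c • MR)
    rwa [Matrix.conjTranspose_eq_transpose_of_trivial] at this
  have hpsd2 : (MR * (S - c • (1 : Matrix (Fin n) (Fin n) ℝ)) * MRᵀ).PosSemidef := by
    have := hc.mul_mul_conjTranspose_same MR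
    rwa [Matrix.conjTranspose_eq_transpose_of_trivial] at this
  calc c ^ m * (MR * MRᵀ).det = (c • (MR * MRᵀ)).det := by
        rw [Matrix.det_smul, Fintype.card_fin]
    _ ≤ (c • (MR * MRᵀ) + MR * (S - c • (1 : Matrix (Fin n) (Fin n) ℝ)) * MRᵀ).det :=
        det_le_det_add_psd hpsd1 hpsd2
    _ = (MR * S * MRᵀ).det := by rw [← hsplit]

/-- a positive definite matrix dominates a positive multiple of the identity. -/
lemma exists_c (hn : 0 < n) (S : Matrix (Fin n) (Fin n) ℝ) (hS : S.PosDef) :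
    ∃ c : ℝ, 0 < c ∧ c ≤ 1 ∧ (S - c • (1 : Matrix (Fin n) (Fin n) ℝ)).PosSemidef := by
  classical
  haveI : Nonempty (Fin n) := ⟨⟨0, hn⟩⟩
  set ev := hS.1.eigenvalues with hev
  set c0 : ℝ := Finset.univ.inf' Finset.univ_nonempty ev with hc0
  set c : ℝ := min c0 1 with hc
  have hc0pos : 0 < c0 := by
    rw [hc0, Finset.lt_inf'_iff]
    exact fun i _ => hS.eigenvalues_pos i
  refine ⟨c, lt_min hc0pos one_pos, min_le_right _ _, ?_⟩
  set U : Matrix (Fin n) (Fin n) ℝ := ↑hS.1.eigenvectorUnitary with hU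
  have hUU : U * star U = 1 := Subtype.ext_iff.1 (Unitary.mul_star_self hS.1.eigenvectorUnitary)
  have hspec := hS.1.spectral_theorem
  have hkey : S - c • (1 : Matrix (Fin n) (Fin n) ℝ)
      = U * (diagonal (fun i => ev i - c)) * star U := by
    have hdiag : diagonal (fun i => ev i - c)
        = diagonal (RCLike.ofReal ∘ ev) - c • (1 : Matrix (Fin n) (Fin n) ℝ) := by
      rw [show c • (1 : Matrix (Fin n) (Fin n) ℝ) = diagonal (fun _ => c) by
        ext i j
        by_cases hij : i = j <;>
          simp [hij, Matrix.one_apply, Matrix.diagonal_apply], ← Matrix.diagonal_sub]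
      congr 1
    rw [hdiag, Matrix.mul_sub, Matrix.sub_mul]
    have hc1 : U * (c • (1 : Matrix (Fin n) (Fin n) ℝ)) * star U
        = c • (1 : Matrix (Fin n) (Fin n) ℝ) := by
      rw [Matrix.mul_smul, Matrix.mul_one, Matrix.smul_mul, hUU]
    rw [hc1, show U * diagonal (RCLike.ofReal ∘ ev) * star U = S from hspec.symm]
  rw [hkey]
  have hd : (diagonal (fun i => ev i - c)).PosSemidef := by
    refine Matrix.posSemidef_diagonal_iff.2 fun i => ?_
    have h1 : c ≤ ev i := le_trans (min_le_left _ _) (Finset.inf'_le ev (Finset.mem_univ i))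
    linarith
  have := hd.mul_mul_conjTranspose_same U
  rwa [← Matrix.star_eq_conjTranspose] at this

/-- the real rows of the top of a unimodular integer matrix are independent. -/
lemma rows_indep (hmn : m ≤ n) (A : Matrix (Fin n) (Fin n) ℤ) (hA : IsUnit A.det) :
    LinearIndependent ℝ
      (fun i : Fin m => ((A.submatrix (Fin.castLE hmn) id).map (Int.cast : ℤ → ℝ)) i) := by
  have hARdet : IsUnit (A.map (Int.cast : ℤ → ℝ)).det := by
    have h' := hA.map (Int.castRingHom ℝ)
    rw [RingHom.map_det] at h'
    exact h'
  have hrows : LinearIndependent ℝ (fun j => (A.map (Int.cast : ℤ → ℝ)) j) :=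
    Matrix.linearIndependent_rows_iff_isUnit.2 ((Matrix.isUnit_iff_isUnit_det _).2 hARdet)
  exact hrows.comp (Fin.castLE hmn) (Fin.castLE_injective hmn)

end Analytic


/-- the encoding predicate: `W` is the row span of the top `d.1` rows of a unimodular matrix
whose Plücker coordinates are `d.2`. -/
def good (W : Submodule ℤ (Fin n → ℤ)) (d : ℕ × (Finset (Fin n) → ℤ)) : Prop :=
  ∃ (hmn : d.1 ≤ n) (A : Matrix (Fin n) (Fin n) ℤ), IsUnit A.det ∧
    W = Submodule.span ℤ (Set.range fun i => A.submatrix (Fin.castLE hmn) id i) ∧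
    d.2 = plk d.1 (A.submatrix (Fin.castLE hmn) id)

lemma good_unique {W₁ W₂ : Submodule ℤ (Fin n → ℤ)} {d : ℕ × (Finset (Fin n) → ℤ)}
    (h₁ : good W₁ d) (h₂ : good W₂ d) : W₁ = W₂ := by
  obtain ⟨hmn₁, A₁, hdet₁, hW₁, hq₁⟩ := h₁
  obtain ⟨hmn₂, A₂, hdet₂, hW₂, hq₂⟩ := h₂
  have hq : plk d.1 (A₁.submatrix (Fin.castLE hmn₁) id)
      = plk d.1 (A₂.submatrix (Fin.castLE hmn₁) id) := hq₁.symm.trans hq₂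
  have hq' : plk d.1 (A₂.submatrix (Fin.castLE hmn₁) id)
      = plk d.1 (A₁.submatrix (Fin.castLE hmn₁) id) := hq.symm
  rw [hW₁, hW₂]
  exact le_antisymm (span_le_of_plk_eq hmn₁ A₁ A₂ hdet₂ hq)
    (span_le_of_plk_eq hmn₁ A₂ A₁ hdet₁ hq')

end SmallSummands

/-- for any inner product `S` on `ℝ^n` and any real `C`, there are only
finitely many direct summands `W` of `ℤ^n` with `ln vol_W(S) ≤ C`. -/
theorem finitely_many_small_direct_summands {n : ℕ}
    (S : Matrix (Fin n) (Fin n) ℝ) (hS : S.PosDef)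
    (vol : Submodule ℤ (Fin n → ℤ) → ℝ)
    (hvol : ∀ (W : Submodule ℤ (Fin n → ℤ)) (m : ℕ) (b : Module.Basis (Fin m) ℤ W),
      vol W = Real.sqrt (Matrix.det (Matrix.of (fun i j =>
        dotProduct (fun k => ((b i : Fin n → ℤ) k : ℝ))
          (S.mulVec (fun k => ((b j : Fin n → ℤ) k : ℝ)))))))
    (C : ℝ) :
    {W : Submodule ℤ (Fin n → ℤ) |
      (∃ W' : Submodule ℤ (Fin n → ℤ), IsCompl W W') ∧ Real.log (vol W) ≤ C}.Finite := by
  classical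
  rcases Nat.eq_zero_or_pos n with hn | hn
  · subst hn
    haveI : Finite (Submodule ℤ (Fin 0 → ℤ)) := Finite.of_subsingleton
    exact Set.toFinite _
  obtain ⟨c, hcpos, hc1, hcpsd⟩ := SmallSummands.exists_c hn S hS
  set V : ℝ := Real.exp C ^ 2 / c ^ n with hV
  have hVnn : 0 ≤ V := div_nonneg (sq_nonneg _) (pow_nonneg hcpos.le n)
  set B : ℤ := ⌈Real.sqrt V⌉ with hB
  set T : Set (ℕ × (Finset (Fin n) → ℤ)) :=
    Set.Iic n ×ˢ Set.univ.pi (fun _ => Set.Icc (-B) B) with hT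
  have hTfin : T.Finite := (Set.finite_Iic n).prod (Set.Finite.pi fun _ => Set.finite_Icc _ _)
  set SS : Set (Submodule ℤ (Fin n → ℤ)) := {W : Submodule ℤ (Fin n → ℤ) |
      (∃ W' : Submodule ℤ (Fin n → ℤ), IsCompl W W') ∧ Real.log (vol W) ≤ C} with hSS
  -- step 1: every element of `SS` is encoded by an element of `T`
  have hstep1 : ∀ W ∈ SS, ∃ d, d ∈ T ∧ SmallSummands.good W d := by
    rintro W ⟨⟨W', hcompl⟩, hlog⟩
    obtain ⟨m, hmn, A, b, hdet, hb, hWspan⟩ := SmallSummands.exists_unimodular W W' hcompl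
    set Mz : Matrix (Fin m) (Fin n) ℤ := A.submatrix (Fin.castLE hmn) id with hMz
    set MR : Matrix (Fin m) (Fin n) ℝ := Mz.map (Int.cast : ℤ → ℝ) with hMR
    have hrows : LinearIndependent ℝ (fun i => MR i) := SmallSummands.rows_indep hmn A hdet
    have hgram : (MR * S * MRᵀ).PosDef := SmallSummands.gram_posDef S hS MR hrows
    have hgmatrix : (Matrix.of (fun i j =>
        dotProduct (fun k => ((b i : Fin n → ℤ) k : ℝ))
          (S.mulVec (fun k => ((b j : Fin n → ℤ) k : ℝ))))) = MR * S * MRᵀ := by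
      ext i j
      have hbi : ∀ (i : Fin m) (k : Fin n), ((b i : Fin n → ℤ) k : ℝ) = MR i k := by
        intro i k
        rw [hb i]
        rfl
      simp only [Matrix.of_apply, dotProduct, Matrix.mulVec, Matrix.mul_apply,
        Matrix.transpose_apply, hbi]
      rw [show (∑ k, MR i k * ∑ l, S k l * MR j l)
          = ∑ k, ∑ l, MR i k * (S k l * MR j l) from
        Finset.sum_congr rfl fun k _ => by rw [Finset.mul_sum], Finset.sum_comm]
      refine Finset.sum_congr rfl fun l _ => ?_
      rw [Finset.sum_mul]
      refine Finset.sum_congr rfl fun k _ => ?_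
      ring
    have hdetpos : 0 < (MR * S * MRᵀ).det := hgram.det_pos
    have hvolW : vol W = Real.sqrt (MR * S * MRᵀ).det := by rw [hvol W m b, hgmatrix]
    have hvolpos : 0 < vol W := by
      rw [hvolW]
      exact Real.sqrt_pos.2 hdetpos
    have hvle : vol W ≤ Real.exp C := (Real.log_le_iff_le_exp hvolpos).1 hlog
    have hdetle : (MR * S * MRᵀ).det ≤ Real.exp C ^ 2 := by
      have hsq : vol W ^ 2 ≤ Real.exp C ^ 2 := by
        have := pow_le_pow_left₀ hvolpos.le hvle 2
        exact this
      rw [hvolW, Real.sq_sqrt hdetpos.le] at hsq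
      exact hsq
    refine ⟨(m, SmallSummands.plk m Mz), ⟨Set.mem_Iic.2 hmn, ?_⟩, hmn, A, hdet, hWspan, rfl⟩
    intro s _
    -- bound the Plücker coordinates
    have hq2 : ((SmallSummands.plk m Mz s : ℤ) : ℝ) ^ 2 ≤ V := by
      have h1 := SmallSummands.plk_sq_le Mz s
      have h2 := SmallSummands.c_det_le S c hcpos.le hcpsd MR
      have h3 : c ^ n ≤ c ^ m := pow_le_pow_of_le_one hcpos.le hc1 hmn
      have h4 : c ^ n * (((SmallSummands.plk m Mz s : ℤ) : ℝ) ^ 2) ≤ Real.exp C ^ 2 := by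
        calc c ^ n * (((SmallSummands.plk m Mz s : ℤ) : ℝ) ^ 2)
            ≤ c ^ m * (((SmallSummands.plk m Mz s : ℤ) : ℝ) ^ 2) :=
              mul_le_mul_of_nonneg_right h3 (sq_nonneg _)
          _ ≤ c ^ m * (MR * MRᵀ).det := by
              have := mul_le_mul_of_nonneg_left h1 (pow_nonneg hcpos.le m)
              rw [← hMR] at this
              exact this
          _ ≤ (MR * S * MRᵀ).det := h2
          _ ≤ Real.exp C ^ 2 := hdetle
      rw [hV, le_div_iff₀ (pow_pos hcpos n)]
      calc ((SmallSummands.plk m Mz s : ℤ) : ℝ) ^ 2 * c ^ n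
          = c ^ n * (((SmallSummands.plk m Mz s : ℤ) : ℝ) ^ 2) := by ring
        _ ≤ Real.exp C ^ 2 := h4
    have habs : |((SmallSummands.plk m Mz s : ℤ) : ℝ)| ≤ Real.sqrt V := by
      rw [← Real.sqrt_sq_eq_abs]
      exact Real.sqrt_le_sqrt hq2
    have hup : ((SmallSummands.plk m Mz s : ℤ) : ℝ) ≤ (B : ℝ) :=
      le_trans (le_abs_self _) (le_trans habs (Int.le_ceil _))
    have hlow : (-B : ℝ) ≤ ((SmallSummands.plk m Mz s : ℤ) : ℝ) := by
      have := neg_abs_le ((SmallSummands.plk m Mz s : ℤ) : ℝ)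
      have h5 : -(B : ℝ) ≤ -|((SmallSummands.plk m Mz s : ℤ) : ℝ)| := by
        have := le_trans habs (Int.le_ceil _)
        linarith
      push_cast
      linarith
    constructor
    · exact_mod_cast hlow
    · exact_mod_cast hup
  -- step 2: finiteness via the injective encoding
  set g : Submodule ℤ (Fin n → ℤ) → ℕ × (Finset (Fin n) → ℤ) := fun W =>
    if h : ∃ d, d ∈ T ∧ SmallSummands.good W d then h.choose else (0, fun _ => 0) with hg
  refine Set.Finite.of_finite_image (f := g) ?_ ?_
  · refine hTfin.subset ?_
    rintro _ ⟨W, hW, rfl⟩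
    have hex := hstep1 W hW
    rw [hg]
    simp only [dif_pos hex]
    exact hex.choose_spec.1
  · intro W₁ h₁ W₂ h₂ hgeq
    have hex₁ := hstep1 W₁ h₁
    have hex₂ := hstep1 W₂ h₂
    rw [hg] at hgeq
    simp only [dif_pos hex₁, dif_pos hex₂] at hgeq
    exact SmallSummands.good_unique (hgeq ▸ hex₁.choose_spec.2) hex₂.choose_spec.2
end

section
/- Let F be a finite field, Z = F[t], Q = F(t), and ν : Q → ℤ ∪ {∞} the valuation ν(p/q) = deg q − deg p with valuation ring R = {x ∈ Q : ν(x) ≥ 0}. Let (V,S) be a volume space (V a finitely generated free Z-module, S an R-lattice in Q ⊗_Z V of the same rank). If W' ⊆ W ⊆ V are Z-submodules of the same rank m and A is a matrix representing the inclusion W' → W with respect to chosen bases, then logvol_{W'}(S) = logvol_W(S) + (−ν(det A)), and moreover −ν(det A) = dim_F(W/W'). -/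
set_option synthInstance.maxHeartbeats 1000000
set_option maxHeartbeats 1000000

/-- The valuation ring of the valuation `ν(p/q) = deg q - deg p` on `F(t)`,
i.e. rational functions of nonpositive `intDegree`. -/
noncomputable def valR (F : Type*) [Field F] : Subring (RatFunc F) where
  carrier := {x | x.intDegree ≤ 0}
  zero_mem' := by simp [Set.mem_setOf_eq, RatFunc.intDegree_zero]
  one_mem' := by simp [Set.mem_setOf_eq, RatFunc.intDegree_one]
  add_mem' := by
    intro a b ha hb
    rcases eq_or_ne b 0 with rfl | hb0
    · simpa using ha
    rcases eq_or_ne (a + b) 0 with h | h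
    · simp [Set.mem_setOf_eq, h, RatFunc.intDegree_zero]
    · simp only [Set.mem_setOf_eq] at ha hb ⊢
      exact le_trans (RatFunc.intDegree_add_le hb0 h) (sup_le ha hb)
  mul_mem' := by
    intro a b ha hb
    rcases eq_or_ne a 0 with rfl | ha0
    · simp [Set.mem_setOf_eq, RatFunc.intDegree_zero]
    rcases eq_or_ne b 0 with rfl | hb0
    · simp [Set.mem_setOf_eq, RatFunc.intDegree_zero]
    · simp only [Set.mem_setOf_eq] at ha hb ⊢
      rw [RatFunc.intDegree_mul ha0 hb0]
      omega
  neg_mem' := by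
    intro a ha
    simpa [Set.mem_setOf_eq, RatFunc.intDegree_neg] using ha

/-- `v` is the logarithmic volume of the `F[t]`-submodule `W` with respect to the
lattice basis family `B`: writing a wedge of any basis of `W` in terms of wedges of
the `B j`, it is the maximum of `-ν` (that is, `intDegree`) of the nonzero minors of
the coefficient matrix. -/
def IsLogVolume (F : Type*) [Field F] {M : Type*} [AddCommGroup M]
    [Module (RatFunc F) M] [Module (Polynomial F) M]
    {ι : Type*} [Fintype ι] [DecidableEq ι] (B : ι → M)
    (W : Submodule (Polynomial F) M) (v : ℝ) : Prop :=
  ∀ (m : ℕ) (b : Module.Basis (Fin m) (Polynomial F) W) (lam : Matrix (Fin m) ι (RatFunc F)),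
    (∀ i, (b i : M) = ∑ j, lam i j • B j) →
    v = sSup {x : ℝ | ∃ g : Fin m ↪ ι,
      (lam.submatrix id ⇑g).det ≠ 0 ∧ x = (((lam.submatrix id ⇑g).det.intDegree : ℤ) : ℝ)}

theorem aux_sSup_translate {s : Set ℝ} (hne : s.Nonempty) (hb : BddAbove s) (c : ℝ) :
    sSup ((fun x => c + x) '' s) = c + sSup s := by
  have h1 : IsLUB s (sSup s) := isLUB_csSup hne hb
  have h2 : IsLUB ((fun x => c + x) '' s) (c + sSup s) := by
    constructor
    · rintro _ ⟨x, hx, rfl⟩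
      dsimp only
      have := h1.1 hx
      linarith
    · intro y hy
      have : sSup s ≤ y - c := h1.2 (fun x hx => by
        have := hy (Set.mem_image_of_mem _ hx); linarith)
      linarith
  exact h2.csSup_eq (hne.image _)

open Polynomial Module Matrix in
theorem aux_exists_minor {K : Type*} [Field K] {m n : ℕ} (M : Matrix (Fin m) (Fin n) K)
    (h : LinearIndependent K (fun i => M i)) :
    ∃ g : Fin m ↪ Fin n, (M.submatrix id ⇑g).det ≠ 0 := by
  classical
  have hrank : M.rank = m := by
    rw [Matrix.rank_eq_finrank_span_row]
    exact (finrank_span_eq_card h).trans (Fintype.card_fin m)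
  have hcols : Submodule.span K (Set.range Mᵀ) = ⊤ := by
    apply Submodule.eq_top_of_finrank_eq
    have hcr := Matrix.rank_eq_finrank_span_cols M
    rw [hrank] at hcr
    rw [Module.finrank_pi, Fintype.card_fin]
    exact hcr.symm
  obtain ⟨b, hbsub, hbspan, hbind⟩ := exists_linearIndependent K (Set.range Mᵀ)
  rw [hcols] at hbspan
  haveI : Fintype b := Set.Finite.fintype ((Set.finite_range Mᵀ).subset hbsub)
  let C : Basis b K (Fin m → K) := Basis.mk hbind (by rw [Subtype.range_coe_subtype, Set.setOf_mem_eq, hbspan])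
  have hcard : Fintype.card b = m := by
    have h1 := Module.finrank_eq_card_basis C
    rw [Module.finrank_pi, Fintype.card_fin] at h1
    omega
  -- choose column index for each element of b
  have hpick : ∀ x : b, ∃ j : Fin n, Mᵀ j = (x : Fin m → K) := fun x => hbsub x.2
  choose pick hpickEq using hpick
  have hpick_inj : Function.Injective pick := by
    intro x y hxy
    have : (x : Fin m → K) = y := by rw [← hpickEq x, ← hpickEq y, hxy]
    exact Subtype.ext this
  let e : Fin m ≃ b := (Fintype.equivFinOfCardEq hcard).symm
  refine ⟨⟨fun i => pick (e i), fun i j hij => e.injective (hpick_inj hij)⟩, ?_⟩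
  have hdet : LinearIndependent K (fun j => (M.submatrix id (fun i => pick (e i)))ᵀ j) := by
    have : (fun j => (M.submatrix id (fun i => pick (e i)))ᵀ j)
        = fun j => (C (e j) : Fin m → K) := by
      funext j
      have := hpickEq (e j)
      simp only [C, Basis.mk_apply]
      ext i
      exact congr_fun this.symm i ▸ rfl
    rw [this]
    exact C.linearIndependent.comp e e.injective
  have := Matrix.linearIndependent_cols_iff_isUnit.mp hdet
  rw [Matrix.isUnit_iff_isUnit_det] at this
  exact (by simpa using this.ne_zero : (M.submatrix id (fun i => pick (e i))).det ≠ 0)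

open Polynomial Module Matrix in

theorem aux_span_single {R : Type*} [CommRing R] {m : ℕ} (d : Fin m → R) :
    Submodule.span R (Set.range (fun j => d j • (Pi.single j (1 : R) : Fin m → R))) =
      Submodule.pi Set.univ (fun j => Ideal.span {d j}) := by
  classical
  apply le_antisymm
  · rw [Submodule.span_le]
    rintro _ ⟨j, rfl⟩
    intro k _
    simp only [Pi.smul_apply, smul_eq_mul]
    rcases eq_or_ne k j with rfl | hk
    · simp [Ideal.mem_span_singleton]
    · simp [Pi.single_eq_of_ne hk]
  · intro x hx
    have hc : ∀ j, ∃ c, c * d j = x j := fun j => Ideal.mem_span_singleton'.mp (hx j trivial)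
    choose c hc using hc
    have hxx : x = ∑ j, (c j) • d j • (Pi.single j (1 : R) : Fin m → R) := by
      ext k
      simp only [Finset.sum_apply, Pi.smul_apply, Pi.single_apply, smul_eq_mul, mul_ite,
        mul_one, mul_zero, Finset.sum_ite_eq, Finset.mem_univ, if_true]
      exact (hc k).symm
    rw [hxx]
    exact Submodule.sum_mem _ fun j _ => Submodule.smul_mem _ _
      (Submodule.subset_span (Set.mem_range_self j))


theorem aux_det_finrank (F : Type*) [Field F] (n m : ℕ)
    (W' W : Submodule (Polynomial F) (Fin n → RatFunc F)) (hWW : W' ≤ W)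
    (bW : Module.Basis (Fin m) (Polynomial F) W) (bW' : Module.Basis (Fin m) (Polynomial F) W')
    (A : Matrix (Fin m) (Fin m) (Polynomial F))
    (hA : ∀ i, (bW' i : Fin n → RatFunc F) = ∑ j, A i j • (bW j : Fin n → RatFunc F)) :
    A.det ≠ 0 ∧
      A.det.natDegree = Module.finrank F (↥W ⧸ (Submodule.comap W.subtype W')) := by
  classical
  set N := Submodule.comap W.subtype W' with hNdef
  obtain ⟨k, bM, bN, f, a, hsnf⟩ := Submodule.smithNormalForm bW N
  have hkm : k = m := by
    have h1 := Module.finrank_eq_card_basis (R := Polynomial F) (M := N) (ι := Fin k) bN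
    have h2 := Module.finrank_eq_card_basis (R := Polynomial F) (M := N) (ι := Fin m)
      (bW'.map (Submodule.comapSubtypeEquivOfLe hWW).symm)
    rw [h1] at h2
    simpa using h2
  subst hkm
  let σ := f.equivOfFiniteSelfEmbedding
  have hσ : ∀ i, σ i = f i := fun i => rfl
  have ha : ∀ i, a i ≠ 0 := by
    intro i h0
    have h1 := hsnf i
    rw [h0, zero_smul] at h1
    exact bN.ne_zero i (ZeroMemClass.coe_eq_zero.mp h1)
  -- the inclusion and its matrices
  let incl : W' →ₗ[Polynomial F] W := Submodule.inclusion hWW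
  let bNW' := bN.map (Submodule.comapSubtypeEquivOfLe hWW)
  have hincl2 : ∀ i, incl (bNW' i) = a i • bM (f i) := by
    intro i
    rw [← hsnf i]
    rfl
  set M2 := LinearMap.toMatrix bNW' bM incl with hM2def
  have hM2 : M2 = (Matrix.diagonal a).submatrix ⇑σ.symm id := by
    refine Matrix.ext fun i j => ?_
    rw [hM2def, LinearMap.toMatrix_apply, hincl2 j, _root_.map_smul]
    simp only [Module.Basis.repr_self, Finsupp.smul_single, smul_eq_mul, mul_one,
      Finsupp.single_apply, Matrix.submatrix_apply, Matrix.diagonal_apply, id_eq]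
    by_cases h : f j = i
    · have hji : σ.symm i = j := by rw [← h, ← hσ j, Equiv.symm_apply_apply]
      rw [if_pos h, if_pos hji, hji]
    · have hji : ¬(σ.symm i = j) := fun hc => h (by rw [← hσ, ← hc, Equiv.apply_symm_apply])
      rw [if_neg h, if_neg hji]
  set M1 := LinearMap.toMatrix bW' bW incl with hM1def
  have hM1 : M1 = A.transpose := by
    refine Matrix.ext fun i j => ?_
    rw [hM1def, LinearMap.toMatrix_apply]
    have hj : incl (bW' j) = ∑ k, A j k • bW k := by
      apply Subtype.ext
      show ((incl (bW' j) : W) : Fin n → RatFunc F) = _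
      rw [Submodule.coe_inclusion, hA j]
      push_cast
      rfl
    rw [hj]
    have := Module.Basis.repr_sum_self bW (A j)
    calc (bW.repr (∑ k, A j k • bW k)) i = (⇑(bW.repr (∑ k, A j k • bW k))) i := rfl
      _ = A j i := by rw [this]
      _ = A.transpose i j := rfl
  have hcomp : M1 = (LinearMap.toMatrix bM bW LinearMap.id) * M2 *
      (LinearMap.toMatrix bW' bNW' LinearMap.id) := by
    rw [hM1def, hM2def, ← LinearMap.toMatrix_comp bNW' bM bW, ← LinearMap.toMatrix_comp bW' bNW' bW,
      LinearMap.id_comp, LinearMap.comp_id]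
  have hP : IsUnit (LinearMap.toMatrix bM bW (LinearMap.id : W →ₗ[Polynomial F] W)).det := by
    apply IsUnit.of_mul_eq_one (LinearMap.toMatrix bW bM LinearMap.id).det
    rw [← Matrix.det_mul, ← LinearMap.toMatrix_comp bW bM bW, LinearMap.id_comp,
      LinearMap.toMatrix_id, Matrix.det_one]
  have hQ : IsUnit (LinearMap.toMatrix bW' bNW' (LinearMap.id : W' →ₗ[Polynomial F] W')).det := by
    apply IsUnit.of_mul_eq_one (LinearMap.toMatrix bNW' bW' LinearMap.id).det
    rw [← Matrix.det_mul, ← LinearMap.toMatrix_comp bNW' bW' bNW', LinearMap.id_comp,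
      LinearMap.toMatrix_id, Matrix.det_one]
  set ε : Polynomial F := ((Equiv.Perm.sign σ.symm : ℤ) : Polynomial F) with hεdef
  have hε : IsUnit ε := by
    rcases Int.units_eq_one_or (Equiv.Perm.sign σ.symm) with h | h <;>
      · rw [hεdef, h]; simp
  have hdetM2 : M2.det = ε * ∏ i, a i := by
    rw [hM2, Matrix.det_permute, Matrix.det_diagonal]
  have hdetA : A.det = ((LinearMap.toMatrix bM bW LinearMap.id).det * ε *
      (LinearMap.toMatrix bW' bNW' LinearMap.id).det) * ∏ i, a i := by
    rw [← Matrix.det_transpose A, ← hM1, hcomp, Matrix.det_mul, Matrix.det_mul, hdetM2]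
    ring
  have hu : IsUnit ((LinearMap.toMatrix bM bW (LinearMap.id : W →ₗ[Polynomial F] W)).det * ε *
      (LinearMap.toMatrix bW' bNW' (LinearMap.id : W' →ₗ[Polynomial F] W')).det) :=
    (hP.mul hε).mul hQ
  have hprod : (∏ i, a i) ≠ 0 := Finset.prod_ne_zero_iff.mpr fun i _ => ha i
  have hdetne : A.det ≠ 0 := by
    rw [hdetA]
    exact mul_ne_zero hu.ne_zero hprod
  refine ⟨hdetne, ?_⟩
  have hnd : A.det.natDegree = ∑ i, (a i).natDegree := by
    rw [hdetA, Polynomial.natDegree_mul hu.ne_zero hprod,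
      Polynomial.natDegree_eq_zero_of_isUnit hu, zero_add,
      Polynomial.natDegree_prod _ _ fun i _ => ha i]
  rw [hnd]
  have hNspan : N = Submodule.span (Polynomial F) (Set.range fun i => ((bN i : W))) := by
    have h3 : Submodule.map N.subtype ⊤ = N := Submodule.map_subtype_top N
    rw [← bN.span_eq, Submodule.map_span] at h3
    refine h3.symm.trans ?_
    congr 1
    rw [← Set.range_comp]
    rfl
  let eqv : W ≃ₗ[Polynomial F] (Fin k → Polynomial F) := bM.equivFun
  have hmap : N.map (eqv : W →ₗ[Polynomial F] (Fin k → Polynomial F)) =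
      Submodule.pi Set.univ (fun j => Ideal.span {a (σ.symm j)}) := by
    rw [hNspan, Submodule.map_span, ← aux_span_single (fun j => a (σ.symm j))]
    congr 1
    rw [← Set.range_comp]
    have hco : (⇑(eqv : W →ₗ[Polynomial F] (Fin k → Polynomial F)) ∘ fun i => ((bN i : W)))
        = (fun j => a (σ.symm j) • (Pi.single j (1 : Polynomial F) : Fin k → Polynomial F)) ∘ ⇑σ := by
      funext i
      simp only [Function.comp_apply, hsnf i, _root_.map_smul, Equiv.symm_apply_apply]
      congr 1
      funext j
      simp [eqv, Module.Basis.equivFun_apply, Module.Basis.repr_self, Finsupp.single_apply,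
        Pi.single_apply, hσ, eq_comm]
    rw [hco, Function.Surjective.range_comp σ.surjective]
  let e0 := Submodule.Quotient.equiv N _ eqv hmap
  let e1 := Submodule.quotientPi
    (fun j : Fin k => (Ideal.span {a (σ.symm j)} : Submodule (Polynomial F) (Polynomial F)))
  let E := (e0.trans e1).restrictScalars F
  have hfr := LinearEquiv.finrank_eq E
  haveI : ∀ j : Fin k, Module.Finite F
      (Polynomial F ⧸ Ideal.span ({a (σ.symm j)} : Set (Polynomial F))) :=
    fun j => PowerBasis.finite (AdjoinRoot.powerBasis (ha (σ.symm j)))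
  have hfin : Module.finrank F
      (∀ j : Fin k, Polynomial F ⧸ Ideal.span ({a (σ.symm j)} : Set (Polynomial F)))
      = ∑ j, (a (σ.symm j)).natDegree := by
    rw [Module.finrank_pi_fintype]
    exact Finset.sum_congr rfl fun j _ => (AdjoinRoot.powerBasis (ha (σ.symm j))).finrank
  calc ∑ i, (a i).natDegree = ∑ j, (a (σ.symm j)).natDegree :=
        (Equiv.sum_comp σ.symm fun i => (a i).natDegree).symm
    _ = _ := by rw [← hfin, ← hfr]

/-- for `Z = F[t]`-submodules `W' ⊆ W` of the same rank `m` inside a volume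
space `(V, S)`, with `A` a matrix representing the inclusion `W' → W` in chosen bases,
`logvol_{W'}(S) = logvol_W(S) + (-ν(det A))`, and `-ν(det A) = dim_F (W / W')`. -/
theorem logvol_of_finite_index (F : Type*) [Field F] [Finite F] (n m : ℕ)
    (S : Submodule (valR F) (Fin n → RatFunc F))
    (B : Module.Basis (Fin n) (valR F) S)
    (hBspan : Submodule.span (RatFunc F)
      (Set.range (fun j => (B j : Fin n → RatFunc F))) = ⊤)
    (W' W : Submodule (Polynomial F) (Fin n → RatFunc F)) (hWW : W' ≤ W)
    (bW : Module.Basis (Fin m) (Polynomial F) W) (bW' : Module.Basis (Fin m) (Polynomial F) W')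
    (A : Matrix (Fin m) (Fin m) (Polynomial F))
    (hA : ∀ i, (bW' i : Fin n → RatFunc F) =
      ∑ j, A i j • (bW j : Fin n → RatFunc F))
    (lW lW' : ℝ)
    (hlW : IsLogVolume F (fun j => (B j : Fin n → RatFunc F)) W lW)
    (hlW' : IsLogVolume F (fun j => (B j : Fin n → RatFunc F)) W' lW') :
    lW' = lW + (((algebraMap (Polynomial F) (RatFunc F) A.det).intDegree : ℤ) : ℝ) ∧
    ((algebraMap (Polynomial F) (RatFunc F) A.det).intDegree : ℤ) =
      (Module.finrank F (↥W ⧸ (Submodule.comap W.subtype W')) : ℤ) := by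
  classical
  have hfr : Module.finrank (RatFunc F) (Fin n → RatFunc F) = n := by
    simp [Module.finrank_pi]
  let Bf : Fin n → (Fin n → RatFunc F) := fun j => (B j : Fin n → RatFunc F)
  let C : Module.Basis (Fin n) (RatFunc F) (Fin n → RatFunc F) :=
    basisOfTopLeSpanOfCardEqFinrank Bf (le_of_eq hBspan.symm) (by simp [hfr])
  have hC : ∀ j, C j = Bf j := fun j => by
    rw [coe_basisOfTopLeSpanOfCardEqFinrank]
  let lam : Matrix (Fin m) (Fin n) (RatFunc F) := fun i j => C.repr (bW i : Fin n → RatFunc F) j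
  have hlam : ∀ i, (bW i : Fin n → RatFunc F) = ∑ j, lam i j • Bf j := by
    intro i
    conv_lhs => rw [← C.sum_repr ((bW i : Fin n → RatFunc F))]
    exact Finset.sum_congr rfl fun j _ => by rw [hC]
  obtain ⟨hdetne0, hdeg⟩ := aux_det_finrank F n m W' W hWW bW bW' A hA
  set dA : RatFunc F := algebraMap (Polynomial F) (RatFunc F) A.det with hdA
  have hdAne : dA ≠ 0 := by
    rw [hdA]
    exact (map_ne_zero_iff _ (RatFunc.algebraMap_injective F)).mpr hdetne0
  have hdAdeg : dA.intDegree = (A.det.natDegree : ℤ) := by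
    rw [hdA, RatFunc.intDegree_polynomial]
  let lam' : Matrix (Fin m) (Fin n) (RatFunc F) :=
    (A.map (algebraMap (Polynomial F) (RatFunc F))) * lam
  have hlam' : ∀ i, (bW' i : Fin n → RatFunc F) = ∑ j, lam' i j • Bf j := by
    intro i
    rw [hA i]
    calc ∑ k, A i k • (bW k : Fin n → RatFunc F)
        = ∑ k, A i k • (∑ j, lam k j • Bf j) :=
          Finset.sum_congr rfl fun k _ => by rw [← hlam k]
      _ = ∑ k, ∑ j, (algebraMap (Polynomial F) (RatFunc F) (A i k) * lam k j) • Bf j := by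
          refine Finset.sum_congr rfl fun k _ => ?_
          rw [← algebraMap_smul (RatFunc F) (A i k), Finset.smul_sum]
          exact Finset.sum_congr rfl fun j _ => by rw [smul_smul]
      _ = ∑ j, (∑ k, algebraMap (Polynomial F) (RatFunc F) (A i k) * lam k j) • Bf j := by
          rw [Finset.sum_comm]
          exact Finset.sum_congr rfl fun j _ => by rw [Finset.sum_smul]
      _ = ∑ j, lam' i j • Bf j := by
          refine Finset.sum_congr rfl fun j _ => ?_
          congr 1
  have e1 := hlW m bW lam hlam
  have e2 := hlW' m bW' lam' hlam'
  set sW := {x : ℝ | ∃ g : Fin m ↪ Fin n, (lam.submatrix id ⇑g).det ≠ 0 ∧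
    x = (((lam.submatrix id ⇑g).det.intDegree : ℤ) : ℝ)} with hsW
  have hsub : ∀ g : Fin m ↪ Fin n, lam'.submatrix id ⇑g
      = (A.map (algebraMap (Polynomial F) (RatFunc F))) * (lam.submatrix id ⇑g) := by
    intro g
    refine Matrix.ext fun i j => ?_
    simp [lam', Matrix.mul_apply, Matrix.submatrix_apply]
  have hdet' : ∀ g : Fin m ↪ Fin n,
      (lam'.submatrix id ⇑g).det = dA * (lam.submatrix id ⇑g).det := by
    intro g
    rw [hsub g, Matrix.det_mul, hdA, RingHom.map_det, RingHom.mapMatrix_apply]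
  -- linear independence of the rows of `lam`
  have h1 : LinearIndependent (Polynomial F) (fun i => (bW i : Fin n → RatFunc F)) :=
    bW.linearIndependent.map' W.subtype (Submodule.ker_subtype W)
  have h2 : LinearIndependent (RatFunc F) (fun i => (bW i : Fin n → RatFunc F)) :=
    (LinearIndependent.iff_fractionRing (Polynomial F) (RatFunc F)).mp h1
  have h3 : LinearIndependent (RatFunc F) (fun i => lam i) := by
    have h4 := h2.map' (C.equivFun : (Fin n → RatFunc F) →ₗ[RatFunc F] (Fin n → RatFunc F))
      C.equivFun.ker
    have h5 : (fun i => lam i) = fun i => C.equivFun (bW i : Fin n → RatFunc F) := by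
      funext i
      funext j
      rw [Module.Basis.equivFun_apply]
    rw [h5]
    exact h4
  obtain ⟨g0, hg0⟩ := aux_exists_minor lam h3
  have hne : sW.Nonempty := ⟨_, g0, hg0, rfl⟩
  have hbdd : BddAbove sW := by
    apply Set.Finite.bddAbove
    apply Set.Finite.subset (Set.finite_range
      (fun g : Fin m ↪ Fin n => (((lam.submatrix id ⇑g).det.intDegree : ℤ) : ℝ)))
    rintro x ⟨g, -, rfl⟩
    exact ⟨g, rfl⟩
  set c : ℝ := ((dA.intDegree : ℤ) : ℝ) with hc
  have himage : {x : ℝ | ∃ g : Fin m ↪ Fin n, (lam'.submatrix id ⇑g).det ≠ 0 ∧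
      x = (((lam'.submatrix id ⇑g).det.intDegree : ℤ) : ℝ)} = (fun x => c + x) '' sW := by
    ext x
    constructor
    · rintro ⟨g, hgne, rfl⟩
      have hd : (lam.submatrix id ⇑g).det ≠ 0 := by
        intro h0
        apply hgne
        rw [hdet' g, h0, mul_zero]
      refine ⟨(((lam.submatrix id ⇑g).det.intDegree : ℤ) : ℝ), ⟨g, hd, rfl⟩, ?_⟩
      rw [hdet' g, RatFunc.intDegree_mul hdAne hd]
      push_cast
      ring
    · rintro ⟨y, ⟨g, hd, rfl⟩, rfl⟩
      refine ⟨g, ?_, ?_⟩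
      · rw [hdet' g]
        exact mul_ne_zero hdAne hd
      · rw [hdet' g, RatFunc.intDegree_mul hdAne hd]
        push_cast
        ring
  constructor
  · rw [e2, himage, aux_sSup_translate hne hbdd c, e1, hc, hdAdeg]
    push_cast
    ring
  · rw [hdAdeg, hdeg]
end

section
/- Let (V,S) be a volume space over Z = F[t] (F a finite field), and let W₁, W₂ be finitely generated Z-submodules of V. Then logvol_{W₁∩W₂}(S) + logvol_{W₁+W₂}(S) ≤ logvol_{W₁}(S) + logvol_{W₂}(S). -/
set_option synthInstance.maxHeartbeats 1000000
set_option maxHeartbeats 1000000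

open Matrix

section Helpers
set_option linter.unusedSectionVars false

variable {F : Type*} [Field F]

lemma mem_valR_iff {x : RatFunc F} : x ∈ valR F ↔ x.intDegree ≤ 0 := Iff.rfl

lemma intDegree_prod_le {α : Type*} {s : Finset α} {f : α → RatFunc F}
    (h : ∀ i ∈ s, (f i).intDegree ≤ 0) : (∏ i ∈ s, f i).intDegree ≤ 0 :=
  mem_valR_iff.mp (prod_mem (fun i hi => mem_valR_iff.mpr (h i hi)))

lemma intDegree_sum_le {α : Type*} {s : Finset α} {f : α → RatFunc F} {c : ℤ}
    (h : ∀ i ∈ s, f i ≠ 0 → (f i).intDegree ≤ c) (hne : (∑ i ∈ s, f i) ≠ 0) :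
    (∑ i ∈ s, f i).intDegree ≤ c := by
  classical
  induction s using Finset.induction_on with
  | empty => simp at hne
  | @insert a s ha ih =>
    rw [Finset.sum_insert ha] at hne ⊢
    rcases eq_or_ne (f a) 0 with h0 | h0
    · rw [h0, zero_add] at hne ⊢
      exact ih (fun i hi => h i (Finset.mem_insert_of_mem hi)) hne
    rcases eq_or_ne (∑ i ∈ s, f i) 0 with hs | hs
    · rw [hs, add_zero] at hne ⊢
      exact h a (Finset.mem_insert_self a s) hne
    · refine le_trans (RatFunc.intDegree_add_le hs hne) (sup_le ?_ ?_)
      · exact h a (Finset.mem_insert_self a s) h0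
      · exact ih (fun i hi => h i (Finset.mem_insert_of_mem hi)) hs


def mSet {ρ ι : Type*} [Fintype ρ] [Fintype ι] [DecidableEq ρ] [DecidableEq ι]
    (M : Matrix ρ ι (RatFunc F)) : Set ℝ :=
  {x : ℝ | ∃ g : ρ ↪ ι, (M.submatrix id ⇑g).det ≠ 0 ∧
      x = (((M.submatrix id ⇑g).det.intDegree : ℤ) : ℝ)}

noncomputable def Dv {ρ ι : Type*} [Fintype ρ] [Fintype ι] [DecidableEq ρ] [DecidableEq ι]
    (M : Matrix ρ ι (RatFunc F)) : ℝ := sSup (mSet M)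

variable {ρ ι : Type*} [Fintype ρ] [Fintype ι] [DecidableEq ρ] [DecidableEq ι]

lemma mSet_finite (M : Matrix ρ ι (RatFunc F)) : (mSet M).Finite := by
  apply Set.Finite.subset (Set.finite_range
    (fun g : ρ ↪ ι => (((M.submatrix id ⇑g).det.intDegree : ℤ) : ℝ)))
  rintro x ⟨g, -, rfl⟩
  exact ⟨g, rfl⟩

lemma le_Dv {M : Matrix ρ ι (RatFunc F)} {x : ℝ} (hx : x ∈ mSet M) : x ≤ Dv M :=
  le_csSup (mSet_finite M).bddAbove hx

lemma Dv_mem {M : Matrix ρ ι (RatFunc F)} (h : (mSet M).Nonempty) : Dv M ∈ mSet M :=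
  Set.Nonempty.csSup_mem h (mSet_finite M)

lemma det_mul_expand (M : Matrix ρ ι (RatFunc F)) (N : Matrix ι ρ (RatFunc F)) :
    (M * N).det = ∑ φ : ρ → ι, (∏ i, M i (φ i)) * (N.submatrix φ id).det := by
  have h1 : (M * N).det = Matrix.detRowAlternating (fun i => ∑ k : ι, M i k • N k) := by
    congr 1
    ext i j
    simp [Matrix.mul_apply, Finset.sum_apply]
  rw [h1, ← AlternatingMap.coe_multilinearMap]
  rw [(Matrix.detRowAlternating (R := RatFunc F) (n := ρ)).toMultilinearMap.map_sum
    (fun i k => M i k • N k)]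
  refine Finset.sum_congr rfl fun φ _ => ?_
  rw [(Matrix.detRowAlternating (R := RatFunc F) (n := ρ)).toMultilinearMap.map_smul_univ
    (fun i => M i (φ i)) (fun i => N (φ i))]
  rw [smul_eq_mul, AlternatingMap.coe_multilinearMap]
  congr 1

lemma det_mul_expand' (M : Matrix ρ ι (RatFunc F)) (N : Matrix ι ρ (RatFunc F)) :
    (M * N).det = ∑ φ : ρ → ι, (∏ i, N (φ i) i) * (M.submatrix id φ).det := by
  rw [← Matrix.det_transpose, Matrix.transpose_mul, det_mul_expand]
  refine Finset.sum_congr rfl fun φ _ => ?_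
  congr 1
  rw [← Matrix.det_transpose]
  congr 1

lemma inj_of_det_ne_zero {M : Matrix ρ ι (RatFunc F)} {φ : ρ → ι}
    (h : (M.submatrix id φ).det ≠ 0) : Function.Injective φ := by
  intro j j' hjj
  by_contra hne
  exact h (Matrix.det_zero_of_column_eq hne (fun k => by
    simp [Matrix.submatrix_apply, hjj]))

/-- Right-multiplication by a matrix with entries of nonpositive degree
does not increase the volume. -/
lemma mem_mul_le {ι' : Type*} [Fintype ι'] [DecidableEq ι'] {M : Matrix ρ ι (RatFunc F)}
    {E : Matrix ι ι' (RatFunc F)} (hE : ∀ i j, (E i j).intDegree ≤ 0) {x : ℝ}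
    (hx : x ∈ mSet (M * E)) : x ≤ Dv M := by
  obtain ⟨g, hdet, rfl⟩ := hx
  have hsub : (M * E).submatrix id ⇑g = M * (E.submatrix id ⇑g) := by
    ext i k
    simp [Matrix.mul_apply]
  rw [hsub] at hdet ⊢
  rw [det_mul_expand'] at hdet ⊢
  -- some term is nonzero
  obtain ⟨φ₀, -, hφ₀⟩ := Finset.exists_ne_zero_of_sum_ne_zero hdet
  have hd₀ : (M.submatrix id φ₀).det ≠ 0 := right_ne_zero_of_mul hφ₀
  have hne : (mSet M).Nonempty :=
    ⟨_, ⟨⟨φ₀, inj_of_det_ne_zero hd₀⟩, hd₀, rfl⟩⟩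
  obtain ⟨g₀, hg₀, hz⟩ := Dv_mem hne
  set z₀ : ℤ := ((M.submatrix id ⇑g₀).det).intDegree with hz₀
  rw [hz]
  rw [Int.cast_le]
  apply intDegree_sum_le _ hdet
  intro φ _ hφ
  have hdφ : (M.submatrix id φ).det ≠ 0 := right_ne_zero_of_mul hφ
  have hpφ : (∏ i, (E.submatrix id ⇑g) (φ i) i) ≠ 0 := left_ne_zero_of_mul hφ
  rw [RatFunc.intDegree_mul hpφ hdφ]
  have h1 : (∏ i, (E.submatrix id ⇑g) (φ i) i).intDegree ≤ 0 :=
    intDegree_prod_le (fun i _ => hE _ _)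
  have h2 : ((M.submatrix id φ).det).intDegree ≤ z₀ := by
    have : ((((M.submatrix id φ).det).intDegree : ℤ) : ℝ) ≤ Dv M :=
      le_Dv ⟨⟨φ, inj_of_det_ne_zero hdφ⟩, hdφ, rfl⟩
    rw [hz] at this
    exact_mod_cast this
  omega

lemma mSet_mul_unit {C : Matrix ρ ρ (RatFunc F)} (hC0 : C.det ≠ 0)
    (hCd : C.det.intDegree = 0) (M : Matrix ρ ι (RatFunc F)) :
    mSet (C * M) = mSet M := by
  have key : ∀ g : ρ ↪ ι, ((C * M).submatrix id ⇑g).det = C.det * (M.submatrix id ⇑g).det := by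
    intro g
    have : (C * M).submatrix id ⇑g = C * (M.submatrix id ⇑g) := by
      ext i k
      simp [Matrix.mul_apply]
    rw [this, Matrix.det_mul]
  ext x
  constructor
  · rintro ⟨g, hg, rfl⟩
    rw [key g] at hg ⊢
    have hM : (M.submatrix id ⇑g).det ≠ 0 := right_ne_zero_of_mul hg
    exact ⟨g, hM, by rw [RatFunc.intDegree_mul hC0 hM, hCd, zero_add]⟩
  · rintro ⟨g, hg, rfl⟩
    refine ⟨g, by rw [key g]; exact mul_ne_zero hC0 hg, ?_⟩
    rw [key g, RatFunc.intDegree_mul hC0 hg, hCd, zero_add]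

lemma mSet_reindex_row {ρ' : Type*} [Fintype ρ'] [DecidableEq ρ'] (e : ρ' ≃ ρ)
    (M : Matrix ρ ι (RatFunc F)) : mSet (M.submatrix ⇑e id) = mSet M := by
  have key : ∀ g : ρ' ↪ ι, ((M.submatrix ⇑e id).submatrix id ⇑g).det
      = (M.submatrix id ⇑(e.symm.toEmbedding.trans g)).det := by
    intro g
    have h : (M.submatrix ⇑e id).submatrix id ⇑g
        = (M.submatrix id ⇑(e.symm.toEmbedding.trans g)).submatrix ⇑e ⇑e := by
      ext i j
      simp [Matrix.submatrix_apply, Function.Embedding.trans_apply]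
    rw [h, Matrix.det_submatrix_equiv_self]
  ext x
  constructor
  · rintro ⟨g, hg, rfl⟩
    exact ⟨e.symm.toEmbedding.trans g, by rwa [key g] at hg, by rw [key g]⟩
  · rintro ⟨g, hg, rfl⟩
    have he : e.symm.toEmbedding.trans (e.toEmbedding.trans g) = g := by
      ext j; simp
    refine ⟨e.toEmbedding.trans g, ?_, ?_⟩
    · rw [key _, he]; exact hg
    · rw [key _, he]

lemma mSet_reindex_col {ι' : Type*} [Fintype ι'] [DecidableEq ι'] (e : ι' ≃ ι)
    (M : Matrix ρ ι (RatFunc F)) : mSet (M.submatrix id ⇑e) = mSet M := by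
  have key : ∀ g : ρ ↪ ι', ((M.submatrix id ⇑e).submatrix id ⇑g).det
      = (M.submatrix id ⇑(g.trans e.toEmbedding)).det := by
    intro g
    congr 1
  ext x
  constructor
  · rintro ⟨g, hg, rfl⟩
    exact ⟨g.trans e.toEmbedding, by rwa [key g] at hg, by rw [key g]⟩
  · rintro ⟨g, hg, rfl⟩
    have he : (g.trans e.symm.toEmbedding).trans e.toEmbedding = g := by
      ext j; simp
    refine ⟨g.trans e.symm.toEmbedding, ?_, ?_⟩
    · rw [key _, he]; exact hg
    · rw [key _, he]

lemma exists_right_inverse {M : Matrix ρ ι (RatFunc F)}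
    (h : LinearIndependent (RatFunc F) (fun i : ρ => M i)) :
    ∃ C : Matrix ι ρ (RatFunc F), M * C = 1 := by
  classical
  have hrank : M.rank = Fintype.card ρ := h.rank_matrix
  have hr : Module.finrank (RatFunc F) (LinearMap.range M.mulVecLin) = Fintype.card ρ := hrank
  have htop : LinearMap.range M.mulVecLin = ⊤ := by
    apply Submodule.eq_top_of_finrank_eq
    rw [hr, Module.finrank_pi]
  have hsurj : Function.Surjective M.mulVecLin := LinearMap.range_eq_top.mp htop
  choose c hc using hsurj
  refine ⟨Matrix.of (fun j k => c (Pi.single k 1) j), ?_⟩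
  ext i k
  have := congrFun (hc (Pi.single k 1)) i
  simp only [Matrix.mulVecLin_apply] at this
  rw [Matrix.mul_apply, Matrix.one_apply]
  rw [show (∑ j, M i j * Matrix.of (fun j k => c (Pi.single k 1) j) j k)
    = M.mulVec (c (Pi.single k 1)) i from rfl] at *
  rw [this, Pi.single_apply]

lemma mSet_nonempty {M : Matrix ρ ι (RatFunc F)}
    (h : LinearIndependent (RatFunc F) (fun i : ρ => M i)) : (mSet M).Nonempty := by
  obtain ⟨C, hC⟩ := exists_right_inverse h
  have h1 : (M * C).det ≠ 0 := by rw [hC]; simp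
  rw [det_mul_expand'] at h1
  obtain ⟨φ₀, -, hφ₀⟩ := Finset.exists_ne_zero_of_sum_ne_zero h1
  have hd₀ : (M.submatrix id φ₀).det ≠ 0 := right_ne_zero_of_mul hφ₀
  exact ⟨_, ⟨⟨φ₀, inj_of_det_ne_zero hd₀⟩, hd₀, rfl⟩⟩

lemma card_le_of_rows_supported {κ ρ₁ : Type*} [Fintype κ] [Fintype ρ₁]
    {v : ρ₁ → κ → RatFunc F} (hli : LinearIndependent (RatFunc F) v) (p : κ → Prop)
    [DecidablePred p] (hsupp : ∀ i k, ¬ p k → v i k = 0) :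
    Fintype.card ρ₁ ≤ Fintype.card {k // p k} := by
  have hres : LinearIndependent (RatFunc F) (fun i => (fun k : {k // p k} => v i k)) := by
    rw [Fintype.linearIndependent_iff] at hli ⊢
    intro a ha
    apply hli a
    funext k
    by_cases hk : p k
    · have := congrFun ha ⟨k, hk⟩
      simpa using this
    · have hz : ∀ i ∈ Finset.univ, (a i • v i) k = 0 := fun i _ => by simp [hsupp i k hk]
      rw [show ((0 : κ → RatFunc F) k = 0) from rfl, Finset.sum_apply]
      exact Finset.sum_eq_zero hz
  have h2 := hres.fintype_card_le_finrank
  rwa [Module.finrank_pi] at h2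
variable {ρ₁ ρ₂ ι₁ ι₂ : Type*} [Fintype ρ₁] [Fintype ρ₂] [Fintype ι₁] [Fintype ι₂]
  [DecidableEq ρ₁] [DecidableEq ρ₂] [DecidableEq ι₁] [DecidableEq ι₂]

lemma Dv_fromBlocks {A : Matrix ρ₁ ι₁ (RatFunc F)} {Bm : Matrix ρ₂ ι₂ (RatFunc F)}
    (hA : (mSet A).Nonempty) (hB : (mSet Bm).Nonempty) :
    Dv (fromBlocks A 0 0 Bm) = Dv A + Dv Bm := by
  classical
  obtain ⟨gA, hgA, hxA⟩ := Dv_mem hA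
  obtain ⟨gB, hgB, hxB⟩ := Dv_mem hB
  -- the distinguished block minor
  have hblock : ∀ (a : ρ₁ → ι₁) (b : ρ₂ → ι₂),
      (fromBlocks A 0 0 Bm).submatrix id (Sum.map a b)
        = fromBlocks (A.submatrix id a) 0 0 (Bm.submatrix id b) := by
    intro a b
    ext (i | i) (j | j) <;> simp [Matrix.submatrix_apply]
  -- lower bound element
  have hmem : Dv A + Dv Bm ∈ mSet (fromBlocks A 0 0 Bm) := by
    refine ⟨(gA.sumMap gB), ?_, ?_⟩
    · rw [show ⇑(gA.sumMap gB) = Sum.map ⇑gA ⇑gB from rfl, hblock,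
        Matrix.det_fromBlocks_zero₁₂]
      exact mul_ne_zero hgA hgB
    · rw [show ⇑(gA.sumMap gB) = Sum.map ⇑gA ⇑gB from rfl, hblock,
        Matrix.det_fromBlocks_zero₁₂, RatFunc.intDegree_mul hgA hgB, hxA, hxB]
      push_cast
      ring
  have hne : (mSet (fromBlocks A 0 0 Bm)).Nonempty := ⟨_, hmem⟩
  refine le_antisymm ?_ (le_Dv hmem)
  -- upper bound : every minor degree is at most Dv A + Dv Bm
  refine csSup_le hne ?_
  rintro x ⟨g, hg, rfl⟩
  set N := (fromBlocks A 0 0 Bm).submatrix id ⇑g with hN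
  -- rows are linearly independent
  have hli : LinearIndependent (RatFunc F) (fun k => N k) := by
    show LinearIndependent (RatFunc F) N.row
    rw [Matrix.linearIndependent_rows_iff_isUnit, Matrix.isUnit_iff_isUnit_det]
    exact isUnit_iff_ne_zero.mpr hg
  set p : ρ₁ ⊕ ρ₂ → Prop := fun k => ((g k).isLeft : Prop) with hp
  -- cardinalities
  have hc1 : Fintype.card ρ₁ ≤ Fintype.card {k // p k} := by
    refine card_le_of_rows_supported (hli.comp Sum.inl Sum.inl_injective) p ?_
    intro i k hk
    obtain ⟨b, hb⟩ := Sum.isRight_iff.mp (Sum.not_isLeft.mp (fun h => hk h))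
    show (fromBlocks A 0 0 Bm) (Sum.inl i) (g k) = 0
    rw [hb]
    simp
  have hc2 : Fintype.card ρ₂ ≤ Fintype.card {k // ¬ p k} := by
    refine card_le_of_rows_supported (hli.comp Sum.inr Sum.inr_injective) (fun k => ¬ p k) ?_
    intro i k hk
    rw [not_not] at hk
    obtain ⟨a, ha⟩ := Sum.isLeft_iff.mp hk
    show (fromBlocks A 0 0 Bm) (Sum.inr i) (g k) = 0
    rw [ha]
    simp
  have hcompl : Fintype.card {k // ¬ p k} = Fintype.card (ρ₁ ⊕ ρ₂) - Fintype.card {k // p k} :=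
    Fintype.card_subtype_compl p
  have hcard : Fintype.card {k // p k} ≤ Fintype.card (ρ₁ ⊕ ρ₂) := Fintype.card_subtype_le _
  rw [Fintype.card_sum] at hcompl hcard
  have hc1' : Fintype.card {k // p k} = Fintype.card ρ₁ := by omega
  have hc2' : Fintype.card {k // ¬ p k} = Fintype.card ρ₂ := by omega
  -- build the column permutation
  let e₁ : ρ₁ ≃ {k // p k} := Fintype.equivOfCardEq hc1'.symm
  let e₂ : ρ₂ ≃ {k // ¬ p k} := Fintype.equivOfCardEq hc2'.symm
  let e : ρ₁ ⊕ ρ₂ ≃ ρ₁ ⊕ ρ₂ := (Equiv.sumCongr e₁ e₂).trans (Equiv.sumCompl p)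
  have hpl : ∀ j : ρ₁, p (e (Sum.inl j)) := fun j => by
    simp only [e, Equiv.trans_apply, Equiv.sumCongr_apply, Sum.map_inl, Equiv.sumCompl_apply_inl]
    exact (e₁ j).2
  have hpr : ∀ j : ρ₂, ¬ p (e (Sum.inr j)) := fun j => by
    simp only [e, Equiv.trans_apply, Equiv.sumCongr_apply, Sum.map_inr, Equiv.sumCompl_apply_inr]
    exact (e₂ j).2
  -- extract the column maps
  have hal : ∀ j : ρ₁, ∃ y, g (e (Sum.inl j)) = Sum.inl y :=
    fun j => Sum.isLeft_iff.mp (hpl j)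
  have hbr : ∀ j : ρ₂, ∃ y, g (e (Sum.inr j)) = Sum.inr y :=
    fun j => Sum.isRight_iff.mp (Sum.not_isLeft.mp (hpr j))
  choose a ha using hal
  choose b hb using hbr
  have hainj : Function.Injective a := by
    intro j j' hjj
    have : g (e (Sum.inl j)) = g (e (Sum.inl j')) := by rw [ha, ha, hjj]
    exact Sum.inl_injective (e.injective (g.injective this))
  have hbinj : Function.Injective b := by
    intro j j' hjj
    have : g (e (Sum.inr j)) = g (e (Sum.inr j')) := by rw [hb, hb, hjj]
    exact Sum.inr_injective (e.injective (g.injective this))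
  -- block structure of the permuted minor
  have hNe : N.submatrix id ⇑e = fromBlocks (A.submatrix id a) 0 0 (Bm.submatrix id b) := by
    ext (i | i) (j | j)
    · show (fromBlocks A 0 0 Bm) (Sum.inl i) (g (e (Sum.inl j))) = _
      rw [ha]; simp
    · show (fromBlocks A 0 0 Bm) (Sum.inl i) (g (e (Sum.inr j))) = _
      rw [hb]; simp
    · show (fromBlocks A 0 0 Bm) (Sum.inr i) (g (e (Sum.inl j))) = _
      rw [ha]; simp
    · show (fromBlocks A 0 0 Bm) (Sum.inr i) (g (e (Sum.inr j))) = _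
      rw [hb]; simp
  have hdet' : (N.submatrix id ⇑e).det
      = (A.submatrix id a).det * (Bm.submatrix id b).det := by
    rw [hNe, Matrix.det_fromBlocks_zero₁₂]
  have hperm : (N.submatrix id ⇑e).det = (Equiv.Perm.sign e : ℤ) * N.det :=
    Matrix.det_permute' e N
  have hdetA : (A.submatrix id a).det ≠ 0 := by
    intro h0
    rw [h0, zero_mul] at hdet'
    rw [hperm] at hdet'
    rcases Int.units_eq_one_or (Equiv.Perm.sign e) with hs | hs <;>
      rw [hs] at hdet' <;> simp at hdet' <;> exact hg hdet'
  have hdetB : (Bm.submatrix id b).det ≠ 0 := by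
    intro h0
    rw [h0, mul_zero] at hdet'
    rw [hperm] at hdet'
    rcases Int.units_eq_one_or (Equiv.Perm.sign e) with hs | hs <;>
      rw [hs] at hdet' <;> simp at hdet' <;> exact hg hdet'
  have hintN : (N.det).intDegree
      = ((A.submatrix id a).det).intDegree + ((Bm.submatrix id b).det).intDegree := by
    have : (N.det).intDegree = ((N.submatrix id ⇑e).det).intDegree := by
      rw [hperm]
      rcases Int.units_eq_one_or (Equiv.Perm.sign e) with hs | hs <;> rw [hs]
      · push_cast; rw [one_mul]
      · push_cast
        rw [neg_one_mul, RatFunc.intDegree_neg]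
    rw [this, hdet', RatFunc.intDegree_mul hdetA hdetB]
  have hlA : (((A.submatrix id a).det.intDegree : ℤ) : ℝ) ≤ Dv A :=
    le_Dv ⟨⟨a, hainj⟩, hdetA, rfl⟩
  have hlB : (((Bm.submatrix id b).det.intDegree : ℤ) : ℝ) ≤ Dv Bm :=
    le_Dv ⟨⟨b, hbinj⟩, hdetB, rfl⟩
  rw [hintN]
  push_cast
  exact add_le_add hlA hlB
end Helpers

section Helpers2
set_option linter.unusedSectionVars false
variable {F : Type*} [Field F] {n : ℕ}

lemma exists_fin_basis (W : Submodule (Polynomial F) (Fin n → RatFunc F)) (h : W.FG) :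
    ∃ (m : ℕ), Nonempty (Module.Basis (Fin m) (Polynomial F) ↥W) := by
  have hfin : Module.Finite (Polynomial F) ↥W := (Module.Finite.iff_fg).mpr h
  have hfree : Module.Free (Polynomial F) ↥W := Module.free_of_finite_type_torsion_free'
  let κ := Module.Free.ChooseBasisIndex (Polynomial F) ↥W
  let e : κ ≃ Fin (Fintype.card κ) := Fintype.equivFin κ
  exact ⟨Fintype.card κ, ⟨(Module.Free.chooseBasis (Polynomial F) ↥W).reindex e⟩⟩

lemma coe_basis_linIndep {m : ℕ} {W : Submodule (Polynomial F) (Fin n → RatFunc F)}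
    (b : Module.Basis (Fin m) (Polynomial F) ↥W) :
    LinearIndependent (RatFunc F) (fun i => ((b i : Fin n → RatFunc F))) := by
  have h1 : LinearIndependent (Polynomial F) (fun i => ((b i : Fin n → RatFunc F))) :=
    b.linearIndependent.map' W.subtype (Submodule.ker_subtype W)
  exact h1.localization (RatFunc F) (nonZeroDivisors (Polynomial F))

end Helpers2

/-- parallelogram constraint / subadditivity of the logarithmic volume in a
volume space over `Z = F[t]`: for finitely generated `Z`-submodules `W₁, W₂`,
`logvol_{W₁ ⊓ W₂}(S) + logvol_{W₁ + W₂}(S) ≤ logvol_{W₁}(S) + logvol_{W₂}(S)`. -/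
theorem logvol_subadditive (F : Type*) [Field F] [Finite F] (n : ℕ)
    (S : Submodule (valR F) (Fin n → RatFunc F))
    (B : Module.Basis (Fin n) (valR F) S)
    (hBspan : Submodule.span (RatFunc F)
      (Set.range (fun j => (B j : Fin n → RatFunc F))) = ⊤)
    (W₁ W₂ : Submodule (Polynomial F) (Fin n → RatFunc F))
    (h₁ : W₁.FG) (h₂ : W₂.FG)
    (l₁ l₂ li ls : ℝ)
    (hl₁ : IsLogVolume F (fun j => (B j : Fin n → RatFunc F)) W₁ l₁)
    (hl₂ : IsLogVolume F (fun j => (B j : Fin n → RatFunc F)) W₂ l₂)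
    (hli : IsLogVolume F (fun j => (B j : Fin n → RatFunc F)) (W₁ ⊓ W₂) li)
    (hls : IsLogVolume F (fun j => (B j : Fin n → RatFunc F)) (W₁ ⊔ W₂) ls) :
    li + ls ≤ l₁ + l₂ := by
  classical
  -- ambient K-basis coming from the lattice basis
  have hcard : Fintype.card (Fin n) = Module.finrank (RatFunc F) (Fin n → RatFunc F) := by
    simp [Module.finrank_pi]
  set BK : Module.Basis (Fin n) (RatFunc F) (Fin n → RatFunc F) :=
    basisOfTopLeSpanOfCardEqFinrank (fun j => (B j : Fin n → RatFunc F)) hBspan.ge hcard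
    with hBKdef
  have hBK : ⇑BK = fun j => (B j : Fin n → RatFunc F) :=
    coe_basisOfTopLeSpanOfCardEqFinrank _ _ _
  -- coordinate matrix of a family of vectors
  let lamOf : ∀ {m : ℕ}, (Fin m → (Fin n → RatFunc F)) → Matrix (Fin m) (Fin n) (RatFunc F) :=
    fun {m} w => Matrix.of fun i j => BK.repr (w i) j
  have hsum : ∀ {m : ℕ} (w : Fin m → (Fin n → RatFunc F)) (i : Fin m),
      w i = ∑ j, lamOf w i j • (B j : Fin n → RatFunc F) := by
    intro m w i
    conv_lhs => rw [← BK.sum_repr (w i)]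
    refine Finset.sum_congr rfl fun j _ => ?_
    rw [hBK]
    rfl
  have hrows : ∀ {m : ℕ} {W : Submodule (Polynomial F) (Fin n → RatFunc F)}
      (b : Module.Basis (Fin m) (Polynomial F) ↥W),
      LinearIndependent (RatFunc F) (fun i => lamOf (fun i => ↑(b i)) i) := by
    intro m W b
    have h1 := coe_basis_linIndep b
    have h2 : LinearIndependent (RatFunc F) (fun i => BK.equivFun ↑(b i)) :=
      h1.map' BK.equivFun.toLinearMap
        (LinearMap.ker_eq_bot_of_injective BK.equivFun.injective)
    have hfe : (fun i => lamOf (fun i => ↑(b i)) i) = (fun i => BK.equivFun ↑(b i)) := by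
      funext i j
      simp [lamOf, Module.Basis.equivFun_apply]
    rw [hfe]
    exact h2
  -- bases of the four lattices
  obtain ⟨m₁, ⟨b₁⟩⟩ := exists_fin_basis W₁ h₁
  obtain ⟨m₂, ⟨b₂⟩⟩ := exists_fin_basis W₂ h₂
  obtain ⟨s, ⟨bS⟩⟩ := exists_fin_basis (W₁ ⊔ W₂) (h₁.sup h₂)
  have hUfg : (W₁ ⊓ W₂).FG := by
    have hW1 : IsNoetherian (Polynomial F) ↥W₁ := isNoetherian_of_fg_of_noetherian W₁ h₁
    have hfg := (IsNoetherian.noetherian (Submodule.comap W₁.subtype (W₁ ⊓ W₂))).map W₁.subtype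
    rwa [Submodule.map_comap_subtype, inf_eq_right.mpr inf_le_left] at hfg
  obtain ⟨r, ⟨bU⟩⟩ := exists_fin_basis (W₁ ⊓ W₂) hUfg
  -- coordinate matrices
  set lam₁ := lamOf (fun i => ↑(b₁ i)) with hlam₁
  set lam₂ := lamOf (fun i => ↑(b₂ i)) with hlam₂
  set lamU := lamOf (fun i => ↑(bU i)) with hlamU
  set lamS := lamOf (fun i => ↑(bS i)) with hlamS
  have he1 : l₁ = Dv lam₁ := hl₁ m₁ b₁ lam₁ (fun i => hsum (fun i => ↑(b₁ i)) i)
  have he2 : l₂ = Dv lam₂ := hl₂ m₂ b₂ lam₂ (fun i => hsum (fun i => ↑(b₂ i)) i)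
  have heU : li = Dv lamU := hli r bU lamU (fun i => hsum (fun i => ↑(bU i)) i)
  have heS : ls = Dv lamS := hls s bS lamS (fun i => hsum (fun i => ↑(bS i)) i)
  have hne₁ : (mSet lam₁).Nonempty := mSet_nonempty (hrows b₁)
  have hne₂ : (mSet lam₂).Nonempty := mSet_nonempty (hrows b₂)
  have hneU : (mSet lamU).Nonempty := mSet_nonempty (hrows bU)
  have hneS : (mSet lamS).Nonempty := mSet_nonempty (hrows bS)
  -- doubled space
  set BK2 : Module.Basis (Fin n ⊕ Fin n) (RatFunc F)
      ((Fin n → RatFunc F) × (Fin n → RatFunc F)) := BK.prod BK with hBK2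
  set emb : (↥W₁ × ↥W₂) →ₗ[Polynomial F] ((Fin n → RatFunc F) × (Fin n → RatFunc F)) :=
    (W₁.subtype).prodMap (W₂.subtype) with hemb
  have hembinj : Function.Injective ⇑emb := by
    have : ⇑emb = Prod.map (W₁.subtype) (W₂.subtype) := rfl
    rw [this]
    exact Function.Injective.prodMap Subtype.val_injective Subtype.val_injective
  -- splitting of 0 → U → W₁ × W₂ → W₁ ⊔ W₂ → 0
  have hf0mem : ∀ x : ↥W₁ × ↥W₂,
      ((W₁.subtype.comp (LinearMap.fst (Polynomial F) ↥W₁ ↥W₂))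
        - (W₂.subtype.comp (LinearMap.snd (Polynomial F) ↥W₁ ↥W₂))) x ∈ W₁ ⊔ W₂ := by
    intro x
    exact sub_mem ((le_sup_left : W₁ ≤ W₁ ⊔ W₂) x.1.2) ((le_sup_right : W₂ ≤ W₁ ⊔ W₂) x.2.2)
  set π : (↥W₁ × ↥W₂) →ₗ[Polynomial F] ↥(W₁ ⊔ W₂) :=
    LinearMap.codRestrict (W₁ ⊔ W₂) _ hf0mem with hπdef
  have hπ : ∀ x : ↥W₁ × ↥W₂, (↑(π x) : Fin n → RatFunc F) = ↑x.1 - ↑x.2 := fun x => rfl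
  have hπs : Function.Surjective ⇑π := by
    rintro ⟨y, hy⟩
    obtain ⟨a, ha, b, hb, hab⟩ := Submodule.mem_sup.mp hy
    refine ⟨(⟨a, ha⟩, ⟨-b, neg_mem hb⟩), Subtype.ext ?_⟩
    rw [hπ]
    simp only
    rw [sub_neg_eq_add, hab]
  have hfinSup : Module.Finite (Polynomial F) ↥(W₁ ⊔ W₂) :=
    (Module.Finite.iff_fg).mpr (h₁.sup h₂)
  have hfreeSup : Module.Free (Polynomial F) ↥(W₁ ⊔ W₂) :=
    Module.free_of_finite_type_torsion_free'
  have hprojSup : Module.Projective (Polynomial F) ↥(W₁ ⊔ W₂) := Module.Projective.of_free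
  obtain ⟨σ, hσ⟩ := Module.projective_lifting_property π LinearMap.id hπs
  have hσ' : ∀ z, π (σ z) = z := fun z => by
    have := LinearMap.ext_iff.mp hσ z
    simpa using this
  set ιU : ↥(W₁ ⊓ W₂) →ₗ[Polynomial F] (↥W₁ × ↥W₂) :=
    (Submodule.inclusion inf_le_left).prod (Submodule.inclusion inf_le_right) with hιU
  have hιUcoe : ∀ u : ↥(W₁ ⊓ W₂), emb (ιU u) = ((u : Fin n → RatFunc F), (u : Fin n → RatFunc F)) :=
    fun u => rfl
  have hπιU : ∀ u, π (ιU u) = 0 := by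
    intro u
    apply Subtype.ext
    rw [hπ]
    show ((u : Fin n → RatFunc F)) - ↑u = _
    simp
  set L : (↥(W₁ ⊓ W₂) × ↥(W₁ ⊔ W₂)) →ₗ[Polynomial F] (↥W₁ × ↥W₂) := ιU.coprod σ with hL
  have hLapp : ∀ u z, L (u, z) = ιU u + σ z := fun u z => rfl
  have hLinj : Function.Injective ⇑L := by
    rw [injective_iff_map_eq_zero]
    rintro ⟨u, z⟩ h
    rw [hLapp] at h
    have h1 : π (ιU u + σ z) = 0 := by rw [h, map_zero]
    rw [map_add, hπιU, zero_add, hσ'] at h1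
    subst h1
    rw [map_zero, add_zero] at h
    have : (↑u : Fin n → RatFunc F) = 0 := by
      have := congrArg (fun w => ((w : ↥W₁ × ↥W₂).1 : Fin n → RatFunc F)) h
      simpa [hιU] using this
    exact Prod.ext (Subtype.ext this) rfl
  have hLsurj : Function.Surjective ⇑L := by
    intro w
    have hker : π (w - σ (π w)) = 0 := by
      rw [map_sub, hσ', sub_self]
    have hcoe : ((w - σ (π w)).1 : Fin n → RatFunc F) = ↑(w - σ (π w)).2 := by
      have := congrArg (Subtype.val) hker
      rw [hπ] at this
      simpa [sub_eq_zero] using this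
    have hmemU : ((w - σ (π w)).1 : Fin n → RatFunc F) ∈ W₁ ⊓ W₂ :=
      Submodule.mem_inf.mpr ⟨(w - σ (π w)).1.2, hcoe ▸ (w - σ (π w)).2.2⟩
    refine ⟨(⟨_, hmemU⟩, π w), ?_⟩
    rw [hLapp]
    have hval : ιU ⟨_, hmemU⟩ = w - σ (π w) := by
      apply Prod.ext <;> apply Subtype.ext
      · rfl
      · exact hcoe
    rw [hval]
    abel
  set eqv : (↥(W₁ ⊓ W₂) × ↥(W₁ ⊔ W₂)) ≃ₗ[Polynomial F] (↥W₁ × ↥W₂) :=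
    LinearEquiv.ofBijective L ⟨hLinj, hLsurj⟩ with heqv
  set bf : Module.Basis (Fin r ⊕ Fin s) (Polynomial F) (↥W₁ × ↥W₂) := (bU.prod bS).map eqv with hbf
  set b₁₂ : Module.Basis (Fin m₁ ⊕ Fin m₂) (Polynomial F) (↥W₁ × ↥W₂) := b₁.prod b₂ with hb₁₂
  set e0 : (Fin r ⊕ Fin s) ≃ (Fin m₁ ⊕ Fin m₂) := bf.indexEquiv b₁₂ with he0
  set bf' : Module.Basis (Fin m₁ ⊕ Fin m₂) (Polynomial F) (↥W₁ × ↥W₂) := bf.reindex e0 with hbf'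
  -- the three coordinate matrices in the doubled space
  set Mf : Matrix (Fin r ⊕ Fin s) (Fin n ⊕ Fin n) (RatFunc F) :=
    Matrix.of fun k j => BK2.repr (emb (bf k)) j with hMf
  set Mf' : Matrix (Fin m₁ ⊕ Fin m₂) (Fin n ⊕ Fin n) (RatFunc F) :=
    Matrix.of fun k j => BK2.repr (emb (bf' k)) j with hMf'
  set M12 : Matrix (Fin m₁ ⊕ Fin m₂) (Fin n ⊕ Fin n) (RatFunc F) :=
    Matrix.of fun k j => BK2.repr (emb (b₁₂ k)) j with hM12d
  -- M12 is block diagonal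
  have hM12 : M12 = Matrix.fromBlocks lam₁ 0 0 lam₂ := by
    ext (k | k) (j | j)
    · show BK2.repr (emb (b₁₂ (Sum.inl k))) (Sum.inl j) = lam₁ k j
      rw [hBK2, Module.Basis.prod_repr_inl]
      show BK.repr (↑((b₁₂ (Sum.inl k)).1)) j = _
      rw [hb₁₂, Module.Basis.prod_apply_inl_fst]
      rfl
    · show BK2.repr (emb (b₁₂ (Sum.inl k))) (Sum.inr j) = 0
      rw [hBK2, Module.Basis.prod_repr_inr]
      show BK.repr (↑((b₁₂ (Sum.inl k)).2)) j = _
      rw [hb₁₂, Module.Basis.prod_apply_inl_snd]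
      simp
    · show BK2.repr (emb (b₁₂ (Sum.inr k))) (Sum.inl j) = 0
      rw [hBK2, Module.Basis.prod_repr_inl]
      show BK.repr (↑((b₁₂ (Sum.inr k)).1)) j = _
      rw [hb₁₂, Module.Basis.prod_apply_inr_fst]
      simp
    · show BK2.repr (emb (b₁₂ (Sum.inr k))) (Sum.inr j) = lam₂ k j
      rw [hBK2, Module.Basis.prod_repr_inr]
      show BK.repr (↑((b₁₂ (Sum.inr k)).2)) j = _
      rw [hb₁₂, Module.Basis.prod_apply_inr_snd]
      rfl
  -- change of basis relation
  set C : Matrix (Fin m₁ ⊕ Fin m₂) (Fin m₁ ⊕ Fin m₂) (Polynomial F) :=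
    (b₁₂.toMatrix ⇑bf')ᵀ with hC
  have hCrel : Mf' = C.map (algebraMap (Polynomial F) (RatFunc F)) * M12 := by
    ext k j
    show BK2.repr (emb (bf' k)) j = _
    conv_lhs => rw [← b₁₂.sum_repr (bf' k)]
    rw [map_sum, map_sum, Finsupp.finset_sum_apply]
    rw [Matrix.mul_apply]
    refine Finset.sum_congr rfl fun l _ => ?_
    rw [LinearMap.map_smul, ← algebraMap_smul (RatFunc F) (b₁₂.repr (bf' k) l) (emb (b₁₂ l)),
      _root_.map_smul, Finsupp.smul_apply, smul_eq_mul]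
    rw [Matrix.map_apply, hC, Matrix.transpose_apply, Module.Basis.toMatrix_apply]
    rfl
  have hCdet : IsUnit C.det := by
    rw [hC, Matrix.det_transpose]
    have := b₁₂.invertibleToMatrix bf'
    exact Matrix.isUnit_det_of_invertible _
  have hCK0 : (C.map (algebraMap (Polynomial F) (RatFunc F))).det ≠ 0 := by
    rw [show C.map ⇑(algebraMap (Polynomial F) (RatFunc F))
        = (algebraMap (Polynomial F) (RatFunc F)).mapMatrix C from rfl,
      ← RingHom.map_det]
    exact RatFunc.algebraMap_ne_zero hCdet.ne_zero
  have hCKdeg : ((C.map (algebraMap (Polynomial F) (RatFunc F))).det).intDegree = 0 := by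
    rw [show C.map ⇑(algebraMap (Polynomial F) (RatFunc F))
        = (algebraMap (Polynomial F) (RatFunc F)).mapMatrix C from rfl,
      ← RingHom.map_det, RatFunc.intDegree_polynomial,
      Polynomial.natDegree_eq_zero_of_isUnit hCdet]
    rfl
  -- chain of equalities for the volumes
  have hDv1 : Dv Mf = Dv Mf' := by
    have hrw : Mf' = Mf.submatrix ⇑e0.symm id := by
      ext k j
      show BK2.repr (emb (bf' k)) j = BK2.repr (emb (bf (e0.symm k))) j
      rw [hbf', Module.Basis.reindex_apply]
    rw [hrw]
    show sSup _ = sSup _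
    rw [mSet_reindex_row e0.symm Mf]
  have hDv2 : Dv Mf' = Dv M12 := by
    rw [hCrel]
    show sSup _ = sSup _
    rw [mSet_mul_unit hCK0 hCKdeg]
  have hDv3 : Dv M12 = Dv lam₁ + Dv lam₂ := by
    rw [hM12]
    exact Dv_fromBlocks hne₁ hne₂
  -- the elementary column operation matrix
  set T : Matrix (Fin n ⊕ Fin n) (Fin n ⊕ Fin n) (RatFunc F) :=
    Matrix.fromBlocks 1 0 (-1) 1 with hT
  have hTdeg : ∀ i j, (T i j).intDegree ≤ 0 := by
    rintro (i | i) (j | j) <;>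
      simp only [hT, Matrix.fromBlocks_apply₁₁, Matrix.fromBlocks_apply₁₂,
        Matrix.fromBlocks_apply₂₁, Matrix.fromBlocks_apply₂₂, Matrix.zero_apply,
        Matrix.neg_apply, Matrix.one_apply] <;>
      [skip; rw [RatFunc.intDegree_zero]; rw [RatFunc.intDegree_neg]; skip] <;>
      split <;>
      simp [RatFunc.intDegree_one, RatFunc.intDegree_zero]
  -- rows of Mf
  have hU1 : ∀ i : Fin r, emb (bf (Sum.inl i))
      = ((bU i : Fin n → RatFunc F), (bU i : Fin n → RatFunc F)) := by
    intro i
    rw [hbf, Module.Basis.map_apply, Module.Basis.prod_apply]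
    show emb (eqv (bU i, 0)) = _
    rw [show eqv (bU i, (0 : ↥(W₁ ⊔ W₂))) = L (bU i, 0) from rfl, hLapp, map_zero, add_zero]
    exact hιUcoe (bU i)
  have hS1 : ∀ i : Fin s,
      (emb (bf (Sum.inr i))).1 - (emb (bf (Sum.inr i))).2 = (bS i : Fin n → RatFunc F) := by
    intro i
    rw [hbf, Module.Basis.map_apply, Module.Basis.prod_apply]
    show (emb (eqv (0, bS i))).1 - (emb (eqv (0, bS i))).2 = _
    rw [show eqv ((0 : ↥(W₁ ⊓ W₂)), bS i) = L (0, bS i) from rfl, hLapp, map_zero, zero_add]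
    have := hσ' (bS i)
    have h2 := congrArg Subtype.val this
    rw [hπ] at h2
    exact h2
  -- entries of Mf
  have hMfU1 : ∀ (i : Fin r) (j : Fin n), Mf (Sum.inl i) (Sum.inl j) = lamU i j := by
    intro i j
    show BK2.repr (emb (bf (Sum.inl i))) (Sum.inl j) = _
    rw [hU1, hBK2, Module.Basis.prod_repr_inl]
    rfl
  have hMfU2 : ∀ (i : Fin r) (j : Fin n), Mf (Sum.inl i) (Sum.inr j) = lamU i j := by
    intro i j
    show BK2.repr (emb (bf (Sum.inl i))) (Sum.inr j) = _
    rw [hU1, hBK2, Module.Basis.prod_repr_inr]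
    rfl
  have hMfS : ∀ (i : Fin s) (j : Fin n),
      Mf (Sum.inr i) (Sum.inl j) - Mf (Sum.inr i) (Sum.inr j) = lamS i j := by
    intro i j
    show BK2.repr (emb (bf (Sum.inr i))) (Sum.inl j)
      - BK2.repr (emb (bf (Sum.inr i))) (Sum.inr j) = _
    rw [hBK2, Module.Basis.prod_repr_inl, Module.Basis.prod_repr_inr, ← Finsupp.sub_apply, ← map_sub, hS1]
    rfl
  -- columns of Mf * T
  have hMT1 : ∀ (k) (j : Fin n),
      (Mf * T) k (Sum.inl j) = Mf k (Sum.inl j) - Mf k (Sum.inr j) := by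
    intro k j
    rw [Matrix.mul_apply, Fintype.sum_sum_type]
    simp [hT, Matrix.one_apply, mul_ite, sub_eq_add_neg]
  have hMT2 : ∀ (k) (j : Fin n),
      (Mf * T) k (Sum.inr j) = Mf k (Sum.inr j) := by
    intro k j
    rw [Matrix.mul_apply, Fintype.sum_sum_type]
    simp [hT, Matrix.one_apply, mul_ite]
  -- pick witnessing minors for U and S
  obtain ⟨gU, hgU, hxU⟩ := Dv_mem hneU
  obtain ⟨gS, hgS, hxS⟩ := Dv_mem hneS
  -- the embedding of columns
  have gginj : Function.Injective
      (Sum.elim (Sum.inr ∘ ⇑gU) (Sum.inl ∘ ⇑gS) : (Fin r ⊕ Fin s) → (Fin n ⊕ Fin n)) := by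
    rintro (a | a) (b | b) h
    · exact congrArg Sum.inl (gU.injective (Sum.inr_injective h))
    · simp at h
    · simp at h
    · exact congrArg Sum.inr (gS.injective (Sum.inl_injective h))
  set gg : (Fin r ⊕ Fin s) ↪ (Fin n ⊕ Fin n) :=
    ⟨Sum.elim (Sum.inr ∘ ⇑gU) (Sum.inl ∘ ⇑gS), gginj⟩ with hgg
  set Q : Matrix (Fin s) (Fin r) (RatFunc F) :=
    Matrix.of fun i i' => Mf (Sum.inr i) (Sum.inr (gU i')) with hQ
  have hblock : (Mf * T).submatrix id ⇑gg
      = Matrix.fromBlocks (lamU.submatrix id ⇑gU) 0 Q (lamS.submatrix id ⇑gS) := by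
    ext (i | i) (j | j)
    · show (Mf * T) (Sum.inl i) (Sum.inr (gU j)) = lamU i (gU j)
      rw [hMT2, hMfU2]
    · show (Mf * T) (Sum.inl i) (Sum.inl (gS j)) = 0
      rw [hMT1, hMfU1, hMfU2, sub_self]
    · show (Mf * T) (Sum.inr i) (Sum.inr (gU j)) = Q i j
      rw [hMT2]
      rfl
    · show (Mf * T) (Sum.inr i) (Sum.inl (gS j)) = lamS i (gS j)
      rw [hMT1, hMfS]
  have hkey : li + ls ≤ Dv Mf := by
    apply mem_mul_le hTdeg
    refine ⟨gg, ?_, ?_⟩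
    · rw [hblock, Matrix.det_fromBlocks_zero₁₂]
      exact mul_ne_zero hgU hgS
    · rw [hblock, Matrix.det_fromBlocks_zero₁₂, RatFunc.intDegree_mul hgU hgS,
        heU, heS, hxU, hxS]
      push_cast
      ring
  calc li + ls ≤ Dv Mf := hkey
    _ = Dv lam₁ + Dv lam₂ := by rw [hDv1, hDv2, hDv3]
    _ = l₁ + l₂ := by rw [he1, he2]
end

section
/- Let (V,S) be a volume space over Z = F[t] with F finite, and C ∈ ℝ. Then there are only finitely many Z-submodules W ⊆ V with logvol_W(res_W(S)) ≤ C. -/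
set_option synthInstance.maxHeartbeats 1000000
set_option maxHeartbeats 1000000

open Module Submodule Set Matrix Polynomial


lemma exists_minor_ne_zero {K : Type*} [Field K] {m n : ℕ}
    (L : Matrix (Fin m) (Fin n) K) (h : LinearIndependent K (fun i => L i)) :
    ∃ g : Fin m ↪ Fin n, (L.submatrix id ⇑g).det ≠ 0 := by
  classical
  have hrank : L.rank = m := by simpa using h.rank_matrix
  have hspan : Submodule.span K (Set.range Lᵀ) = ⊤ := by
    have h1 : finrank K (Submodule.span K (Set.range Lᵀ)) = m := by
      exact (Matrix.rank_eq_finrank_span_cols L).symm.trans hrank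
    apply Submodule.eq_top_of_finrank_eq
    simpa using h1
  obtain ⟨b, hbsub, hbspan, hbind⟩ := exists_linearIndependent K (Set.range Lᵀ)
  rw [hspan] at hbspan
  have : FiniteDimensional K (Fin m → K) := inferInstance
  have hfin : b.Finite := hbind.setFinite
  haveI := hfin.fintype
  have hbB : Basis b K (Fin m → K) := Basis.mk hbind (by rw [Subtype.range_coe, hbspan])
  have hcard : Fintype.card b = m := by
    have := Module.finrank_eq_card_basis hbB
    simpa using this.symm
  obtain ⟨e⟩ : Nonempty (Fin m ≃ b) := ⟨(Fintype.equivFinOfCardEq hcard).symm⟩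
  have hchoice : ∀ x : b, ∃ j : Fin n, Lᵀ j = (x : Fin m → K) := fun x => hbsub x.2
  choose f hf using hchoice
  have hginj : Function.Injective (fun i => f (e i)) := by
    intro i i' hii
    simp only at hii
    have : ((e i : Set.Elem b) : Fin m → K) = ((e i' : Set.Elem b) : Fin m → K) := by
      rw [← hf (e i), ← hf (e i'), hii]
    exact e.injective (Subtype.coe_injective this)
  refine ⟨⟨fun i => f (e i), hginj⟩, ?_⟩
  have hcols : LinearIndependent K (fun k => (L.submatrix id (fun i => f (e i)))ᵀ k) := by
    have : (fun k => (L.submatrix id (fun i => f (e i)))ᵀ k)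
        = fun k => ((e k : Set.Elem b) : Fin m → K) := by
      funext k
      rw [← hf (e k)]
      rfl
    rw [this]
    exact hbind.comp e e.injective
  have := Matrix.linearIndependent_cols_iff_isUnit.mp hcols
  have hdet := (Matrix.isUnit_iff_isUnit_det _).mp this
  simpa using hdet.ne_zero


lemma entry_eq_minor {K : Type*} [Field K] {m n : ℕ} (L : Matrix (Fin m) (Fin n) K)
    (g₀ : Fin m ↪ Fin n) (hg₀ : L.submatrix id ⇑g₀ = 1) (i : Fin m) (j : Fin n)
    (hj : j ∉ Set.range ⇑g₀) :
    L i j = (L.submatrix id (Function.update ⇑g₀ i j)).det := by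
  have hsub : L.submatrix id (Function.update ⇑g₀ i j)
      = (1 : Matrix (Fin m) (Fin m) K).updateCol i (fun k => L k j) := by
    ext k i'
    by_cases hii : i' = i
    · subst hii
      simp [Matrix.updateCol_apply, Function.update_self]
    · have h1 : Function.update (⇑g₀) i j i' = g₀ i' := Function.update_of_ne hii _ _
      have := congrFun (congrFun hg₀ k) i'
      simp only [Matrix.submatrix_apply, id_eq] at this ⊢
      rw [h1, Matrix.updateCol_apply, if_neg hii, this]
  rw [hsub, ← Matrix.cramer_apply, Matrix.cramer_one]
  rfl

lemma normalized_eq_of_minors_eq {K : Type*} [Field K] {m n : ℕ}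
    (L L' : Matrix (Fin m) (Fin n) K) (g₀ : Fin m ↪ Fin n)
    (h : L.submatrix id ⇑g₀ = 1) (h' : L'.submatrix id ⇑g₀ = 1)
    (hmin : ∀ g : Fin m ↪ Fin n, (L.submatrix id ⇑g).det = (L'.submatrix id ⇑g).det) :
    L = L' := by
  ext i j
  by_cases hj : j ∈ Set.range ⇑g₀
  · obtain ⟨i', rfl⟩ := hj
    have h1 := congrFun (congrFun h i) i'
    have h2 := congrFun (congrFun h' i) i'
    simp only [Matrix.submatrix_apply, id_eq] at h1 h2
    rw [h1, h2]
  · have hinj : Function.Injective (Function.update (⇑g₀) i j) := by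
      intro a b hab
      by_cases ha : a = i <;> by_cases hb : b = i
      · rw [ha, hb]
      · exfalso; rw [ha, Function.update_self, Function.update_of_ne hb] at hab
        exact hj ⟨b, hab.symm⟩
      · exfalso; rw [hb, Function.update_self, Function.update_of_ne ha] at hab
        exact hj ⟨a, hab⟩
      · rw [Function.update_of_ne ha, Function.update_of_ne hb] at hab
        exact g₀.injective hab
    have := hmin ⟨Function.update (⇑g₀) i j, hinj⟩
    rw [entry_eq_minor L g₀ h i j hj, entry_eq_minor L' g₀ h' i j hj]
    exact this

lemma span_smul_matrix {K : Type*} [Field K] {M : Type*} [AddCommGroup M] [Module K M]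
    {m : ℕ} (w : Fin m → M) (P : Matrix (Fin m) (Fin m) K) (hP : IsUnit P.det) :
    Submodule.span K (Set.range fun i => ∑ k, P i k • w k) = Submodule.span K (Set.range w) := by
  have hle : ∀ (Q : Matrix (Fin m) (Fin m) K) (v : Fin m → M),
      Submodule.span K (Set.range fun i => ∑ k, Q i k • v k) ≤ Submodule.span K (Set.range v) := by
    intro Q v
    rw [Submodule.span_le]
    rintro _ ⟨i, rfl⟩
    exact Submodule.sum_mem _ fun k _ =>
      Submodule.smul_mem _ _ (Submodule.subset_span (Set.mem_range_self k))
  refine le_antisymm (hle P w) ?_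
  have hw : ∀ i, w i = ∑ k, P⁻¹ i k • (∑ l, P k l • w l) := by
    intro i
    have : ∀ k, P⁻¹ i k • (∑ l, P k l • w l) = ∑ l, (P⁻¹ i k * P k l) • w l := by
      intro k; rw [Finset.smul_sum]; simp [smul_smul]
    simp_rw [this]
    rw [Finset.sum_comm]
    have : ∀ l, ∑ k, (P⁻¹ i k * P k l) • w l = ((P⁻¹ * P) i l) • w l := by
      intro l; rw [Matrix.mul_apply, Finset.sum_smul]
    simp_rw [this, Matrix.nonsing_inv_mul P hP]
    simp [Matrix.one_apply, Finset.sum_ite_eq]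
  rw [Submodule.span_le]
  rintro _ ⟨i, rfl⟩
  rw [hw i]
  exact Submodule.sum_mem _ fun k _ =>
    Submodule.smul_mem _ _ (Submodule.subset_span (Set.mem_range_self k))


lemma submatrix_id_mul {K : Type*} [CommRing K] {m n : ℕ}
    (Q : Matrix (Fin m) (Fin m) K) (A : Matrix (Fin m) (Fin n) K) (g : Fin m → Fin n) :
    (Q * A).submatrix id g = Q * (A.submatrix id g) := by
  ext i j
  simp [Matrix.mul_apply, Matrix.submatrix_apply]

lemma comb_mul {K : Type*} [Field K] {M : Type*} [AddCommGroup M] [Module K M]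
    {m m' n : ℕ} (Q : Matrix (Fin m) (Fin m') K) (L : Matrix (Fin m') (Fin n) K)
    (Bv : Fin n → M) (v : Fin m' → M) (hv : ∀ k, v k = ∑ j, L k j • Bv j) (i : Fin m) :
    ∑ k, Q i k • v k = ∑ j, (Q * L) i j • Bv j := by
  have : ∀ k, Q i k • v k = ∑ j, (Q i k * L k j) • Bv j := by
    intro k; rw [hv k, Finset.smul_sum]; simp [smul_smul]
  simp_rw [this]
  rw [Finset.sum_comm]
  congr 1
  funext j
  rw [Matrix.mul_apply, Finset.sum_smul]


lemma span_eq_of_minors_eq {K : Type*} [Field K] {M : Type*} [AddCommGroup M] [Module K M]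
    {m n : ℕ} (Bv : Fin n → M) (w w' : Fin m → M) (L L' : Matrix (Fin m) (Fin n) K)
    (hw : ∀ i, w i = ∑ j, L i j • Bv j) (hw' : ∀ i, w' i = ∑ j, L' i j • Bv j)
    (hmin : ∀ g : Fin m ↪ Fin n, (L.submatrix id ⇑g).det = (L'.submatrix id ⇑g).det)
    (hne : ∃ g₀ : Fin m ↪ Fin n, (L.submatrix id ⇑g₀).det ≠ 0) :
    Submodule.span K (Set.range w) = Submodule.span K (Set.range w') := by
  obtain ⟨g₀, h0⟩ := hne
  have h0' : (L'.submatrix id ⇑g₀).det ≠ 0 := by rw [← hmin g₀]; exact h0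
  set P := (L.submatrix id ⇑g₀)⁻¹ with hP
  set P' := (L'.submatrix id ⇑g₀)⁻¹ with hP'
  have hPdet : P.det = (L.submatrix id ⇑g₀).det⁻¹ := by
    rw [hP, Matrix.det_nonsing_inv, Ring.inverse_eq_inv']
  have hP'det : P'.det = (L'.submatrix id ⇑g₀).det⁻¹ := by
    rw [hP', Matrix.det_nonsing_inv, Ring.inverse_eq_inv']
  have hPne : P.det ≠ 0 := by rw [hPdet]; exact inv_ne_zero h0
  have hP'ne : P'.det ≠ 0 := by rw [hP'det]; exact inv_ne_zero h0'
  have hnorm : (P * L).submatrix id ⇑g₀ = 1 := by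
    rw [submatrix_id_mul, hP, Matrix.nonsing_inv_mul _ (isUnit_iff_ne_zero.2 h0)]
  have hnorm' : (P' * L').submatrix id ⇑g₀ = 1 := by
    rw [submatrix_id_mul, hP', Matrix.nonsing_inv_mul _ (isUnit_iff_ne_zero.2 h0')]
  have hminPL : ∀ g : Fin m ↪ Fin n,
      ((P * L).submatrix id ⇑g).det = ((P' * L').submatrix id ⇑g).det := by
    intro g
    rw [submatrix_id_mul, submatrix_id_mul, Matrix.det_mul, Matrix.det_mul, hPdet, hP'det,
      hmin g, hmin g₀]
  have hLL : P * L = P' * L' := normalized_eq_of_minors_eq _ _ g₀ hnorm hnorm' hminPL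
  have e1 : Submodule.span K (Set.range fun i => ∑ k, P i k • w k)
      = Submodule.span K (Set.range w) := span_smul_matrix w P (isUnit_iff_ne_zero.2 hPne)
  have e2 : Submodule.span K (Set.range fun i => ∑ k, P' i k • w' k)
      = Submodule.span K (Set.range w') := span_smul_matrix w' P' (isUnit_iff_ne_zero.2 hP'ne)
  rw [← e1, ← e2]
  have hwn : (fun i => ∑ k, P i k • w k) = fun i => ∑ j, (P * L) i j • Bv j := by
    funext i; exact comb_mul P L Bv w hw i
  have hwn' : (fun i => ∑ k, P' i k • w' k) = fun i => ∑ j, (P' * L') i j • Bv j := by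
    funext i; exact comb_mul P' L' Bv w' hw' i
  rw [hwn, hwn', hLL]

lemma exists_common_denom (F : Type*) [Field F] {n : ℕ}
    (KB : Basis (Fin n) (RatFunc F) (Fin n → RatFunc F))
    (V₀ : Submodule (Polynomial F) (Fin n → RatFunc F)) (hfg : V₀.FG) :
    ∃ d : Polynomial F, d ≠ 0 ∧ ∀ x ∈ V₀, ∀ j, ∃ p : Polynomial F,
      algebraMap (Polynomial F) (RatFunc F) d * KB.repr x j
        = algebraMap (Polynomial F) (RatFunc F) p := by
  classical
  obtain ⟨s, hs⟩ := hfg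
  refine ⟨∏ y ∈ s, ∏ j, (KB.repr y j).denom, ?_, ?_⟩
  · exact Finset.prod_ne_zero_iff.2 fun y _ =>
      Finset.prod_ne_zero_iff.2 fun j _ => RatFunc.denom_ne_zero _
  · set d : Polynomial F := ∏ y ∈ s, ∏ j, (KB.repr y j).denom with hd
    intro x hx
    rw [← hs] at hx
    induction hx using Submodule.span_induction with
    | mem y hy =>
      intro j
      have hdvd : (KB.repr y j).denom ∣ d := by
        exact dvd_trans (Finset.dvd_prod_of_mem (fun j => (KB.repr y j).denom)
          (Finset.mem_univ j))
          (Finset.dvd_prod_of_mem (fun y => ∏ j, (KB.repr y j).denom) hy)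
      obtain ⟨e, he⟩ := hdvd
      refine ⟨e * (KB.repr y j).num, ?_⟩
      have hden : algebraMap (Polynomial F) (RatFunc F) (KB.repr y j).denom ≠ 0 :=
        RatFunc.algebraMap_ne_zero (RatFunc.denom_ne_zero _)
      have hnum : algebraMap (Polynomial F) (RatFunc F) (KB.repr y j).denom * KB.repr y j
          = algebraMap (Polynomial F) (RatFunc F) (KB.repr y j).num := by
        rw [mul_comm]
        exact ((div_eq_iff hden).mp (RatFunc.num_div_denom (KB.repr y j))).symm
      rw [he, _root_.map_mul, _root_.map_mul,
        mul_comm (algebraMap (Polynomial F) (RatFunc F) (KB.repr y j).denom), mul_assoc, hnum]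
    | zero => intro j; exact ⟨0, by simp⟩
    | add u v _ _ hu hv =>
      intro j
      obtain ⟨p, hp⟩ := hu j
      obtain ⟨q, hq⟩ := hv j
      refine ⟨p + q, ?_⟩
      have : KB.repr (u + v) j = KB.repr u j + KB.repr v j := by simp
      rw [this, mul_add, hp, hq, ← _root_.map_add]
    | smul r u _ hu =>
      intro j
      obtain ⟨p, hp⟩ := hu j
      refine ⟨r * p, ?_⟩
      have : KB.repr (r • u) = algebraMap (Polynomial F) (RatFunc F) r • KB.repr u := by
        rw [← algebraMap_smul (RatFunc F) r u, _root_.map_smul]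
      rw [this]
      simp only [Finsupp.smul_apply, smul_eq_mul]
      rw [mul_left_comm, hp, _root_.map_mul]

lemma interval_finite {F : Type*} [Field F] [Finite F] {MM : Type*} [AddCommGroup MM]
    [Module (Polynomial F) MM] (N : Submodule (Polynomial F) MM) {m : ℕ}
    (bN : Basis (Fin m) (Polynomial F) N) (p₀ : Polynomial F) (hp : p₀.Monic) :
    {W : Submodule (Polynomial F) MM | W ≤ N ∧ ∀ x ∈ N, p₀ • x ∈ W}.Finite := by
  classical
  set NN : Submodule (Polynomial F) ↥N := (Ideal.span {p₀}) • ⊤ with hNN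
  have hpNN : ∀ z : ↥N, p₀ • z ∈ NN :=
    fun z => Submodule.smul_mem_smul (Ideal.mem_span_singleton_self p₀) trivial
  -- the quotient is finite
  have hQfin : Finite (↥N ⧸ NN) := by
    have hDfin : Finite ↥(Polynomial.degreeLT F p₀.natDegree) :=
      Finite.of_equiv _ (Polynomial.degreeLTEquiv F p₀.natDegree).toEquiv.symm
    refine Finite.of_surjective
      (fun r : Fin m → ↥(Polynomial.degreeLT F p₀.natDegree) =>
        Submodule.Quotient.mk (p := NN) (∑ k, (r k : Polynomial F) • bN k)) ?_
    intro q
    obtain ⟨y, rfl⟩ := Submodule.Quotient.mk_surjective NN q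
    set c : Fin m → Polynomial F := fun k => bN.repr y k with hc
    have hy : y = ∑ k, c k • bN k := by
      rw [hc]; exact (bN.sum_repr y).symm
    refine ⟨fun k => ⟨c k %ₘ p₀, ?_⟩, ?_⟩
    · rw [Polynomial.mem_degreeLT]
      exact lt_of_lt_of_le (Polynomial.degree_modByMonic_lt _ hp)
        Polynomial.degree_le_natDegree
    · rw [Submodule.Quotient.eq]
      rw [hy, ← Finset.sum_sub_distrib]
      refine Submodule.sum_mem _ fun k _ => ?_
      show (c k %ₘ p₀) • bN k - c k • bN k ∈ NN
      rw [← @sub_smul (Polynomial F) _ _ _ _ _ _ (bN k)]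
      have h := Polynomial.modByMonic_add_div (c k) p₀
      have hmod : c k %ₘ p₀ - c k = -(p₀ * (c k /ₘ p₀)) := by linear_combination h
      rw [hmod, neg_smul, mul_comm, mul_smul]
      exact Submodule.neg_mem _ (Submodule.smul_mem _ _ (hpNN _))
  -- injection of the interval into submodules of the quotient
  have hSubFin : Finite (Submodule (Polynomial F) (↥N ⧸ NN)) :=
    Finite.of_injective (fun p => (p : Set (↥N ⧸ NN))) SetLike.coe_injective
  set S := {W : Submodule (Polynomial F) MM | W ≤ N ∧ ∀ x ∈ N, p₀ • x ∈ W} with hS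
  have hinj : Function.Injective
      (fun W : ↥S => Submodule.map NN.mkQ (Submodule.comap N.subtype (W : Submodule (Polynomial F) MM))) := by
    rintro ⟨W, hWN, hWp⟩ ⟨W', hWN', hWp'⟩ h
    simp only [Subtype.mk.injEq] at h ⊢
    have hNNle : ∀ (W'' : Submodule (Polynomial F) MM), W'' ∈ S →
        NN ≤ Submodule.comap N.subtype W'' := by
      rintro W'' ⟨hle, hsm⟩
      rw [hNN]
      refine Submodule.smul_le.2 fun r hr z _ => ?_
      obtain ⟨a, ha⟩ := Ideal.mem_span_singleton'.1 hr
      rw [Submodule.mem_comap]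
      have : N.subtype (r • z) = a • (p₀ • (z : MM)) := by
        rw [Submodule.subtype_apply, Submodule.coe_smul, ← ha, mul_smul]
      rw [this]
      exact Submodule.smul_mem _ _ (hsm _ z.2)
    have e1 : Submodule.comap N.subtype W = Submodule.comap N.subtype W' := by
      have c1 := congrArg (Submodule.comap NN.mkQ) h
      rwa [Submodule.comap_map_mkQ, Submodule.comap_map_mkQ,
        sup_eq_right.2 (hNNle W ⟨hWN, hWp⟩), sup_eq_right.2 (hNNle W' ⟨hWN', hWp'⟩)] at c1
    have := congrArg (Submodule.map N.subtype) e1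
    rwa [Submodule.map_comap_subtype, Submodule.map_comap_subtype,
      inf_eq_right.2 hWN, inf_eq_right.2 hWN'] at this
  have : Finite ↥S := Finite.of_injective _ hinj
  exact S.toFinite

section helpers
variable {F : Type*} [Field F] {n : ℕ}

lemma repr_rows_indep {m : ℕ} (KB : Basis (Fin n) (RatFunc F) (Fin n → RatFunc F))
    (v : Fin m → (Fin n → RatFunc F)) (h : LinearIndependent (RatFunc F) v) :
    LinearIndependent (RatFunc F) (fun k => (fun j => KB.repr (v k) j)) := by
  set e := KB.repr ≪≫ₗ Finsupp.linearEquivFunOnFinite (RatFunc F) (RatFunc F) (Fin n) with he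
  have := h.map' e.toLinearMap e.ker
  exact this

lemma coeff_unique (KB : Basis (Fin n) (RatFunc F) (Fin n → RatFunc F))
    (Bv : Fin n → (Fin n → RatFunc F)) (hKB : ⇑KB = Bv) (x : Fin n → RatFunc F)
    (c c' : Fin n → RatFunc F) (h : x = ∑ j, c j • Bv j) (h' : x = ∑ j, c' j • Bv j) :
    c = c' := by
  subst hKB
  have h1 : ⇑(KB.repr x) = c := by rw [h, KB.repr_sum_self]
  have h2 : ⇑(KB.repr x) = c' := by rw [h', KB.repr_sum_self]
  rw [← h1, ← h2]

lemma repr_expand (KB : Basis (Fin n) (RatFunc F) (Fin n → RatFunc F))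
    (Bv : Fin n → (Fin n → RatFunc F)) (hKB : ⇑KB = Bv) (x : Fin n → RatFunc F) :
    x = ∑ j, KB.repr x j • Bv j := by
  have := KB.sum_repr x
  rw [hKB] at this
  exact this.symm

lemma span_range_coe {R : Type*} [CommRing R] {MM : Type*} [AddCommGroup MM] [Module R MM]
    (N : Submodule R MM) {ι : Type*} (b : Basis ι R N) :
    Submodule.span R (Set.range (fun k => ((b k : ↥N) : MM))) = N := by
  have h1 : Set.range (fun k => ((b k : ↥N) : MM)) = N.subtype '' (Set.range b) := by
    rw [← Set.range_comp]; rfl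
  rw [h1, ← Submodule.map_span, b.span_eq, Submodule.map_top, Submodule.range_subtype]

end helpers

lemma fiber_finite {F : Type*} [Field F] [Finite F] {n : ℕ}
    (V₀ : Submodule (Polynomial F) (Fin n → RatFunc F)) (hfg : V₀.FG)
    (Bv : Fin n → (Fin n → RatFunc F))
    (KB : Basis (Fin n) (RatFunc F) (Fin n → RatFunc F)) (hKB : ⇑KB = Bv) {m : ℕ}
    (c : (Fin m ↪ Fin n) → RatFunc F) (hne : ∃ g₀, c g₀ ≠ 0)
    (bv₀ : Fin m → (Fin n → RatFunc F)) (lam₀ : Matrix (Fin m) (Fin n) (RatFunc F))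
    (h₀V : ∀ i, bv₀ i ∈ V₀)
    (h₀comb : ∀ i, bv₀ i = ∑ j, lam₀ i j • Bv j)
    (h₀ind : LinearIndependent (RatFunc F) bv₀)
    (h₀min : ∀ g : Fin m ↪ Fin n, (lam₀.submatrix id ⇑g).det = c g) :
    {W : Submodule (Polynomial F) (Fin n → RatFunc F) | W ≤ V₀ ∧
      ∃ (bv : Fin m → (Fin n → RatFunc F)) (lam : Matrix (Fin m) (Fin n) (RatFunc F)),
        (∀ i, bv i ∈ W) ∧ Submodule.span (Polynomial F) (Set.range bv) = W ∧
        (∀ i, bv i = ∑ j, lam i j • Bv j) ∧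
        (∀ g : Fin m ↪ Fin n, (lam.submatrix id ⇑g).det = c g)}.Finite := by
  classical
  set S := {W : Submodule (Polynomial F) (Fin n → RatFunc F) | W ≤ V₀ ∧
      ∃ (bv : Fin m → (Fin n → RatFunc F)) (lam : Matrix (Fin m) (Fin n) (RatFunc F)),
        (∀ i, bv i ∈ W) ∧ Submodule.span (Polynomial F) (Set.range bv) = W ∧
        (∀ i, bv i = ∑ j, lam i j • Bv j) ∧
        (∀ g : Fin m ↪ Fin n, (lam.submatrix id ⇑g).det = c g)} with hSdef
  set U := Submodule.span (RatFunc F) (Set.range bv₀) with hU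
  set N : Submodule (Polynomial F) (Fin n → RatFunc F) :=
    (Submodule.restrictScalars (Polynomial F) U) ⊓ V₀ with hN
  have hNV₀ : N ≤ V₀ := inf_le_right
  haveI : IsNoetherian (Polynomial F) ↥V₀ := isNoetherian_of_fg_of_noetherian V₀ hfg
  have hNfg : N.FG := by
    have h1 : (Submodule.comap V₀.subtype N).FG := IsNoetherian.noetherian _
    have h2 : Submodule.map V₀.subtype (Submodule.comap V₀.subtype N) = N := by
      rw [Submodule.map_comap_subtype, inf_eq_right.2 hNV₀]
    rw [← h2]
    exact h1.map _
  haveI : Module.Finite (Polynomial F) ↥N := Module.Finite.iff_fg.2 hNfg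
  haveI : Module.Free (Polynomial F) ↥N := Module.free_of_finite_type_torsion_free'
  set bN0 : Basis (Module.Free.ChooseBasisIndex (Polynomial F) ↥N) (Polynomial F) ↥N :=
    Module.Free.chooseBasis (Polynomial F) ↥N with hbN0
  set bNvec0 : Module.Free.ChooseBasisIndex (Polynomial F) ↥N → (Fin n → RatFunc F) :=
    fun k => ((bN0 k : ↥N) : Fin n → RatFunc F) with hbNvec0
  have hNspan0 : Submodule.span (Polynomial F) (Set.range bNvec0) = N := span_range_coe N bN0
  have hbN0R : LinearIndependent (Polynomial F) bNvec0 :=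
    bN0.linearIndependent.map' N.subtype (Submodule.ker_subtype N)
  have hbN0K : LinearIndependent (RatFunc F) bNvec0 :=
    hbN0R.localization (Rₛ := RatFunc F) (nonZeroDivisors (Polynomial F))
  have hbNU : Submodule.span (RatFunc F) (Set.range bNvec0) = U := by
    apply le_antisymm
    · rw [Submodule.span_le]
      rintro _ ⟨k, rfl⟩
      have hk : bNvec0 k ∈ N := by
        rw [← hNspan0]; exact Submodule.subset_span (Set.mem_range_self k)
      have := (Submodule.mem_inf.1 hk).1
      rwa [Submodule.restrictScalars_mem] at this
    · rw [hU, Submodule.span_le]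
      rintro _ ⟨i, rfl⟩
      have hmemN : bv₀ i ∈ N := by
        refine Submodule.mem_inf.2 ⟨?_, h₀V i⟩
        rw [Submodule.restrictScalars_mem]
        exact Submodule.subset_span (Set.mem_range_self i)
      rw [← hNspan0] at hmemN
      exact Submodule.span_le_restrictScalars (Polynomial F) (RatFunc F) _ hmemN
  have hcard : Fintype.card (Module.Free.ChooseBasisIndex (Polynomial F) ↥N) = m := by
    have c1 : Module.finrank (RatFunc F) ↥(Submodule.span (RatFunc F) (Set.range bv₀)) = m := by
      rw [Module.finrank_eq_card_basis (Basis.span h₀ind), Fintype.card_fin]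
    have c2 : Module.finrank (RatFunc F) ↥(Submodule.span (RatFunc F) (Set.range bNvec0))
        = Fintype.card (Module.Free.ChooseBasisIndex (Polynomial F) ↥N) :=
      Module.finrank_eq_card_basis (Basis.span hbN0K)
    rw [← hU] at c1
    rw [hbNU] at c2
    exact c2.symm.trans c1
  set bN : Basis (Fin m) (Polynomial F) ↥N := bN0.reindex (Fintype.equivFinOfCardEq hcard)
    with hbN
  set bNvec : Fin m → (Fin n → RatFunc F) := fun k => ((bN k : ↥N) : Fin n → RatFunc F)
    with hbNvec
  have hNspan : Submodule.span (Polynomial F) (Set.range bNvec) = N := span_range_coe N bN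
  set lamN : Matrix (Fin m) (Fin n) (RatFunc F) := fun k j => KB.repr (bNvec k) j with hlamN
  have hcombN : ∀ k, bNvec k = ∑ j, lamN k j • Bv j := fun k => repr_expand KB Bv hKB _
  rcases S.eq_empty_or_nonempty with hSe | ⟨W₁, hW₁⟩
  · rw [hSe]; exact Set.finite_empty
  obtain ⟨g₀, hg₀⟩ := hne
  have main : ∀ W ∈ S, ∃ A : Matrix (Fin m) (Fin m) (Polynomial F),
      W ≤ N ∧ algebraMap (Polynomial F) (RatFunc F) A.det * (lamN.submatrix id ⇑g₀).det = c g₀ ∧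
      (∀ k, A.det • bNvec k ∈ W) := by
    rintro W ⟨hWV, bv, lam, hmemW, hspanW, hcomb, hminW⟩
    have hUW : Submodule.span (RatFunc F) (Set.range bv) = U := by
      rw [hU]
      exact span_eq_of_minors_eq Bv bv bv₀ lam lam₀ hcomb h₀comb
        (fun g => by rw [hminW g, h₀min g]) ⟨g₀, by rw [hminW g₀]; exact hg₀⟩
    have hWN : W ≤ N := by
      refine le_inf ?_ hWV
      rw [← hspanW]
      intro x hx
      have hx2 := Submodule.span_le_restrictScalars (Polynomial F) (RatFunc F)
        (Set.range bv) hx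
      rw [Submodule.restrictScalars_mem] at hx2
      rw [Submodule.restrictScalars_mem]
      rwa [hUW] at hx2
    have hmemN : ∀ i, bv i ∈ N := fun i => hWN (hmemW i)
    set bvN : Fin m → ↥N := fun i => ⟨bv i, hmemN i⟩ with hbvN
    set A : Matrix (Fin m) (Fin m) (Polynomial F) := fun i k => bN.repr (bvN i) k with hA
    have hbvAN : ∀ i, bvN i = ∑ k, A i k • bN k := fun i => (bN.sum_repr (bvN i)).symm
    have hbvA : ∀ i, bv i = ∑ k, A i k • bNvec k := by
      intro i
      have h2 := congrArg N.subtype (hbvAN i)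
      simpa [hbvN, hbNvec] using h2
    have hbvA' : ∀ i, bv i = ∑ k, algebraMap (Polynomial F) (RatFunc F) (A i k) • bNvec k := by
      intro i
      rw [hbvA i]
      exact (Finset.sum_congr rfl fun k _ => by rw [algebraMap_smul]).symm
    have hlamA : lam = (A.map (algebraMap (Polynomial F) (RatFunc F))) * lamN := by
      have hrow : ∀ i, (fun j => lam i j)
          = (fun j => ((A.map (algebraMap (Polynomial F) (RatFunc F))) * lamN) i j) := by
        intro i
        refine coeff_unique KB Bv hKB (bv i) _ _ (hcomb i) ?_
        rw [← comb_mul (A.map (algebraMap (Polynomial F) (RatFunc F))) lamN Bv bNvec hcombN i]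
        exact hbvA' i
      ext i j
      exact congrFun (hrow i) j
    have hcg : ∀ g : Fin m ↪ Fin n,
        algebraMap (Polynomial F) (RatFunc F) A.det * (lamN.submatrix id ⇑g).det = c g := by
      intro g
      calc algebraMap (Polynomial F) (RatFunc F) A.det * (lamN.submatrix id ⇑g).det
          = ((A.map (algebraMap (Polynomial F) (RatFunc F))) * lamN.submatrix id ⇑g).det := by
            rw [Matrix.det_mul, RingHom.map_det, RingHom.mapMatrix_apply]
        _ = (((A.map (algebraMap (Polynomial F) (RatFunc F))) * lamN).submatrix id ⇑g).det := by
            rw [submatrix_id_mul]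
        _ = (lam.submatrix id ⇑g).det := by rw [hlamA]
        _ = c g := hminW g
    refine ⟨A, hWN, hcg g₀, ?_⟩
    intro k
    have keyN : (∑ i, A.adjugate k i • bvN i) = A.det • bN k := by
      have h3 : ∀ i, A.adjugate k i • bvN i = ∑ l, (A.adjugate k i * A i l) • bN l := by
        intro i
        rw [hbvAN i, Finset.smul_sum]
        exact Finset.sum_congr rfl fun l _ => by rw [smul_smul]
      simp_rw [h3]
      rw [Finset.sum_comm]
      have h4 : ∀ l, (∑ i, (A.adjugate k i * A i l) • bN l)
          = ((A.adjugate * A) k l) • bN l := by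
        intro l
        rw [Matrix.mul_apply, Finset.sum_smul]
      simp_rw [h4, Matrix.adjugate_mul]
      simp only [Matrix.smul_apply, Matrix.one_apply, smul_eq_mul, mul_ite, mul_one,
        mul_zero, ite_smul, zero_smul, Finset.sum_ite_eq, Finset.mem_univ, if_true]
    have h5 := congrArg N.subtype keyN
    simp only [map_sum, _root_.map_smul, Submodule.subtype_apply] at h5
    have h6 : (A.det • bNvec k : Fin n → RatFunc F) = ∑ i, A.adjugate k i • bv i := by
      rw [← h5]
    rw [h6]
    exact Submodule.sum_mem _ fun i _ => Submodule.smul_mem _ _ (hmemW i)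
  obtain ⟨A₁, hWN₁, hcg₁, hsm₁⟩ := main W₁ hW₁
  have hlamNg₀ : (lamN.submatrix id ⇑g₀).det ≠ 0 := by
    intro h0
    rw [h0, mul_zero] at hcg₁
    exact hg₀ hcg₁.symm
  have hp₀ne : A₁.det ≠ 0 := by
    intro h0
    rw [h0, _root_.map_zero, zero_mul] at hcg₁
    exact hg₀ hcg₁.symm
  set p₀ := A₁.det with hp₀
  set p₁ := p₀ * Polynomial.C (p₀.leadingCoeff)⁻¹ with hp₁def
  have hp₁ : p₁.Monic := Polynomial.monic_mul_leadingCoeff_inv hp₀ne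
  have hsub : S ⊆ {W : Submodule (Polynomial F) (Fin n → RatFunc F) |
      W ≤ N ∧ ∀ x ∈ N, p₁ • x ∈ W} := by
    intro W hW
    obtain ⟨A, hWN, hcg, hsm⟩ := main W hW
    have hdetEq : A.det = p₀ := by
      have h9 := hcg.trans hcg₁.symm
      have h7 := mul_right_cancel₀ hlamNg₀ h9
      exact IsFractionRing.injective (Polynomial F) (RatFunc F) h7
    refine ⟨hWN, ?_⟩
    have hp₀W : ∀ x ∈ N, p₀ • x ∈ W := by
      intro x hx
      rw [← hNspan] at hx
      have hle : Submodule.span (Polynomial F) (Set.range bNvec)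
          ≤ Submodule.comap (LinearMap.lsmul (Polynomial F) (Fin n → RatFunc F) p₀) W := by
        rw [Submodule.span_le]
        rintro _ ⟨k, rfl⟩
        simp only [SetLike.mem_coe, Submodule.mem_comap, LinearMap.lsmul_apply]
        rw [← hdetEq]
        exact hsm k
      exact hle hx
    intro x hx
    have h8 : p₁ • x = Polynomial.C (p₀.leadingCoeff)⁻¹ • (p₀ • x) := by
      rw [hp₁def, mul_comm, mul_smul]
    rw [h8]
    exact Submodule.smul_mem _ _ (hp₀W x hx)
  exact (interval_finite N bN p₁ hp₁).subset hsub

/-- in a volume space `(V, S)` over `F[t]` with `F` finite, for every real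
`C` there are only finitely many `F[t]`-submodules `W ⊆ V` with `logvol_W(S) ≤ C`. -/
theorem finitely_many_small_submodules (F : Type*) [Field F] [Finite F] (n : ℕ)
    (S : Submodule (valR F) (Fin n → RatFunc F))
    (B : Module.Basis (Fin n) (valR F) S)
    (hBspan : Submodule.span (RatFunc F)
      (Set.range (fun j => (B j : Fin n → RatFunc F))) = ⊤)
    (V₀ : Submodule (Polynomial F) (Fin n → RatFunc F)) (hfg : V₀.FG)
    (logvol : Submodule (Polynomial F) (Fin n → RatFunc F) → ℝ)
    (hlog : ∀ W : Submodule (Polynomial F) (Fin n → RatFunc F),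
      IsLogVolume F (fun j => (B j : Fin n → RatFunc F)) W (logvol W))
    (C : ℝ) :
    {W : Submodule (Polynomial F) (Fin n → RatFunc F) |
      W ≤ V₀ ∧ logvol W ≤ C}.Finite := by

  classical
  set Bv : Fin n → (Fin n → RatFunc F) := fun j => (B j : Fin n → RatFunc F) with hBv
  have hcardn : Fintype.card (Fin n) = Module.finrank (RatFunc F) (Fin n → RatFunc F) := by
    simp
  set KB : Basis (Fin n) (RatFunc F) (Fin n → RatFunc F) :=
    basisOfTopLeSpanOfCardEqFinrank Bv (le_of_eq hBspan.symm) hcardn with hKBdef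
  have hKB : ⇑KB = Bv := coe_basisOfTopLeSpanOfCardEqFinrank _ _ _
  obtain ⟨d, hd0, hdprop⟩ := exists_common_denom F KB V₀ hfg
  set D : ℕ := (⌊C⌋).toNat + n * d.natDegree with hD
  have hPfin : {p : Polynomial F | p.natDegree ≤ D}.Finite := by
    have h1 : Finite ↥(Polynomial.degreeLT F (D + 1)) :=
      Finite.of_equiv _ (Polynomial.degreeLTEquiv F (D + 1)).toEquiv.symm
    have h2 : ((Polynomial.degreeLT F (D + 1) : Submodule F (Polynomial F)) :
        Set (Polynomial F)).Finite := Set.toFinite _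
    refine h2.subset ?_
    intro p hp
    simp only [SetLike.mem_coe, Polynomial.mem_degreeLT]
    refine lt_of_le_of_lt Polynomial.degree_le_natDegree ?_
    exact_mod_cast Nat.lt_succ_of_le hp
  set Φ₀ : Set (RatFunc F) := (fun p : Polynomial F =>
      algebraMap (Polynomial F) (RatFunc F) p / algebraMap (Polynomial F) (RatFunc F) (d ^ n)) ''
      {p : Polynomial F | p.natDegree ≤ D} with hΦ₀
  have hΦfin : Φ₀.Finite := hPfin.image _
  haveI : IsNoetherian (Polynomial F) ↥V₀ := isNoetherian_of_fg_of_noetherian V₀ hfg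
  -- the family of auxiliary sets
  set T : ℕ → Set (Submodule (Polynomial F) (Fin n → RatFunc F)) := fun m =>
    {W : Submodule (Polynomial F) (Fin n → RatFunc F) | W ≤ V₀ ∧
      ∃ (bv : Fin m → (Fin n → RatFunc F)) (lam : Matrix (Fin m) (Fin n) (RatFunc F)),
        (∀ i, bv i ∈ W) ∧ Submodule.span (Polynomial F) (Set.range bv) = W ∧
        LinearIndependent (RatFunc F) bv ∧
        (∀ i, bv i = ∑ j, lam i j • Bv j) ∧
        (∀ g : Fin m ↪ Fin n, (lam.submatrix id ⇑g).det ∈ Φ₀) ∧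
        (∃ g : Fin m ↪ Fin n, (lam.submatrix id ⇑g).det ≠ 0)} with hT
  -- every small submodule is in some T m with m ≤ n
  have hsub : {W : Submodule (Polynomial F) (Fin n → RatFunc F) |
      W ≤ V₀ ∧ logvol W ≤ C} ⊆ ⋃ m ∈ Finset.range (n + 1), T m := by
    rintro W ⟨hWV, hWC⟩
    have hWfg : W.FG := by
      have h1 : (Submodule.comap V₀.subtype W).FG := IsNoetherian.noetherian _
      have h2 : Submodule.map V₀.subtype (Submodule.comap V₀.subtype W) = W := by
        rw [Submodule.map_comap_subtype, inf_eq_right.2 hWV]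
      rw [← h2]; exact h1.map _
    haveI : Module.Finite (Polynomial F) ↥W := Module.Finite.iff_fg.2 hWfg
    haveI : Module.Free (Polynomial F) ↥W := Module.free_of_finite_type_torsion_free'
    set m : ℕ := Fintype.card (Module.Free.ChooseBasisIndex (Polynomial F) ↥W) with hm
    set bW : Basis (Fin m) (Polynomial F) ↥W :=
      (Module.Free.chooseBasis (Polynomial F) ↥W).reindex (Fintype.equivFin _) with hbW
    set bv : Fin m → (Fin n → RatFunc F) := fun i => ((bW i : ↥W) : Fin n → RatFunc F)
      with hbv
    set lam : Matrix (Fin m) (Fin n) (RatFunc F) := fun i j => KB.repr (bv i) j with hlam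
    have hmemW : ∀ i, bv i ∈ W := fun i => (bW i).2
    have hspanW : Submodule.span (Polynomial F) (Set.range bv) = W := span_range_coe W bW
    have hindR : LinearIndependent (Polynomial F) bv :=
      bW.linearIndependent.map' W.subtype (Submodule.ker_subtype W)
    have hindK : LinearIndependent (RatFunc F) bv :=
      hindR.localization (Rₛ := RatFunc F) (nonZeroDivisors (Polynomial F))
    have hcomb : ∀ i, bv i = ∑ j, lam i j • Bv j := fun i => repr_expand KB Bv hKB (bv i)
    have hmn : m ≤ n := by
      have h1 := hindK.fintype_card_le_finrank
      rw [← hcardn, Fintype.card_fin] at h1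
      simpa using h1
    have hlv : logvol W = sSup {x : ℝ | ∃ g : Fin m ↪ Fin n,
        (lam.submatrix id ⇑g).det ≠ 0 ∧
        x = (((lam.submatrix id ⇑g).det.intDegree : ℤ) : ℝ)} := hlog W m bW lam hcomb
    have hbound : ∀ g : Fin m ↪ Fin n, (lam.submatrix id ⇑g).det ≠ 0 →
        (lam.submatrix id ⇑g).det.intDegree ≤ ⌊C⌋ := by
      intro g hg
      have hx : (((lam.submatrix id ⇑g).det.intDegree : ℤ) : ℝ) ∈ {x : ℝ |
          ∃ g : Fin m ↪ Fin n, (lam.submatrix id ⇑g).det ≠ 0 ∧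
          x = (((lam.submatrix id ⇑g).det.intDegree : ℤ) : ℝ)} := ⟨g, hg, rfl⟩
      have hfinSS : {x : ℝ | ∃ g : Fin m ↪ Fin n, (lam.submatrix id ⇑g).det ≠ 0 ∧
          x = (((lam.submatrix id ⇑g).det.intDegree : ℤ) : ℝ)}.Finite := by
        have h1 : {x : ℝ | ∃ g : Fin m ↪ Fin n, (lam.submatrix id ⇑g).det ≠ 0 ∧
            x = (((lam.submatrix id ⇑g).det.intDegree : ℤ) : ℝ)} ⊆
            (fun g : Fin m ↪ Fin n => (((lam.submatrix id ⇑g).det.intDegree : ℤ) : ℝ)) ''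
              Set.univ := by
          rintro x ⟨g, _, rfl⟩
          exact ⟨g, trivial, rfl⟩
        exact (Set.finite_univ.image _).subset h1
      have h2 := le_csSup hfinSS.bddAbove hx
      rw [← hlv] at h2
      exact Int.le_floor.mpr (h2.trans hWC)
    have hminΦ : ∀ g : Fin m ↪ Fin n, (lam.submatrix id ⇑g).det ∈ Φ₀ := by
      intro g
      have hq : ∀ i j, ∃ p : Polynomial F,
          algebraMap (Polynomial F) (RatFunc F) d * lam i j
            = algebraMap (Polynomial F) (RatFunc F) p :=
        fun i j => hdprop (bv i) (hWV (hmemW i)) j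
      choose qm hqm using hq
      set qM : Matrix (Fin m) (Fin n) (Polynomial F) := Matrix.of qm with hqM
      have hmat : (qM.submatrix id ⇑g).map (algebraMap (Polynomial F) (RatFunc F))
          = algebraMap (Polynomial F) (RatFunc F) d • (lam.submatrix id ⇑g) := by
        ext i k
        simp only [Matrix.map_apply, Matrix.submatrix_apply, Matrix.smul_apply, smul_eq_mul,
          id_eq]
        show algebraMap (Polynomial F) (RatFunc F) (qm i (g k))
          = algebraMap (Polynomial F) (RatFunc F) d * lam i (g k)
        rw [← hqm]
      have hdet : algebraMap (Polynomial F) (RatFunc F) (qM.submatrix id ⇑g).det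
          = (algebraMap (Polynomial F) (RatFunc F) d) ^ m * (lam.submatrix id ⇑g).det := by
        rw [RingHom.map_det, RingHom.mapMatrix_apply, hmat, Matrix.det_smul, Fintype.card_fin]
      by_cases hzero : (lam.submatrix id ⇑g).det = 0
      · rw [hzero, hΦ₀]
        exact ⟨0, by simp, by simp⟩
      · have hdK : algebraMap (Polynomial F) (RatFunc F) d ≠ 0 :=
          RatFunc.algebraMap_ne_zero hd0
        have hq0 : (qM.submatrix id ⇑g).det ≠ 0 := by
          intro h0
          rw [h0, _root_.map_zero] at hdet
          exact hzero (by
            rcases mul_eq_zero.1 hdet.symm with h | h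
            · exact absurd h (pow_ne_zero _ hdK)
            · exact h)
        have hid := congrArg RatFunc.intDegree hdet
        rw [RatFunc.intDegree_polynomial,
          RatFunc.intDegree_mul (pow_ne_zero _ hdK) hzero] at hid
        have hpow : ((algebraMap (Polynomial F) (RatFunc F) d) ^ m).intDegree
            = ((m * d.natDegree : ℕ) : ℤ) := by
          rw [← map_pow, RatFunc.intDegree_polynomial, Polynomial.natDegree_pow]
        rw [hpow] at hid
        have hbC := hbound g hzero
        refine ⟨(qM.submatrix id ⇑g).det * d ^ (n - m), ?_, ?_⟩
        · simp only [Set.mem_setOf_eq]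
          rw [Polynomial.natDegree_mul hq0 (pow_ne_zero _ hd0), Polynomial.natDegree_pow]
          have hsplit : (m : ℤ) * d.natDegree + ((n : ℤ) - m) * d.natDegree
              = (n : ℤ) * d.natDegree := by ring
          have hfloor : (⌊C⌋ : ℤ) ≤ (⌊C⌋.toNat : ℤ) := Int.self_le_toNat _
          have hgoal : ((qM.submatrix id ⇑g).det.natDegree : ℤ)
              + ((n - m : ℕ) : ℤ) * d.natDegree ≤ (D : ℤ) := by
            rw [Nat.cast_sub hmn, hD]
            push_cast
            rw [hid]
            push_cast
            nlinarith [hsplit, hfloor, hbC]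
          exact_mod_cast hgoal
        · show algebraMap (Polynomial F) (RatFunc F) ((qM.submatrix id ⇑g).det * d ^ (n - m))
              / algebraMap (Polynomial F) (RatFunc F) (d ^ n) = (lam.submatrix id ⇑g).det
          rw [div_eq_iff (RatFunc.algebraMap_ne_zero (pow_ne_zero _ hd0))]
          refine Eq.symm ?_
          calc (lam.submatrix id ⇑g).det * algebraMap (Polynomial F) (RatFunc F) (d ^ n)
              = (lam.submatrix id ⇑g).det
                  * (algebraMap (Polynomial F) (RatFunc F) d) ^ (m + (n - m)) := by
                rw [Nat.add_sub_cancel' hmn, map_pow]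
            _ = ((algebraMap (Polynomial F) (RatFunc F) d) ^ m * (lam.submatrix id ⇑g).det)
                  * (algebraMap (Polynomial F) (RatFunc F) d) ^ (n - m) := by
                rw [pow_add]; ring
            _ = algebraMap (Polynomial F) (RatFunc F) (qM.submatrix id ⇑g).det
                  * (algebraMap (Polynomial F) (RatFunc F) d) ^ (n - m) := by rw [hdet]
            _ = algebraMap (Polynomial F) (RatFunc F) ((qM.submatrix id ⇑g).det * d ^ (n - m)) := by
                rw [_root_.map_mul, map_pow]
    have hneW : ∃ g : Fin m ↪ Fin n, (lam.submatrix id ⇑g).det ≠ 0 := by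
      apply exists_minor_ne_zero
      exact repr_rows_indep KB bv hindK
    refine Set.mem_biUnion (Finset.mem_range.2 (Nat.lt_succ_of_le hmn)) ?_
    exact ⟨hWV, bv, lam, hmemW, hspanW, hindK, hcomb, hminΦ, hneW⟩
  -- each T m is finite
  have hTfin : ∀ m : ℕ, (T m).Finite := by
    intro m
    have hch : ∀ W : Submodule (Polynomial F) (Fin n → RatFunc F), W ∈ T m →
        ∃ (bv : Fin m → (Fin n → RatFunc F)) (lam : Matrix (Fin m) (Fin n) (RatFunc F)),
        (∀ i, bv i ∈ W) ∧ Submodule.span (Polynomial F) (Set.range bv) = W ∧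
        LinearIndependent (RatFunc F) bv ∧
        (∀ i, bv i = ∑ j, lam i j • Bv j) ∧
        (∀ g : Fin m ↪ Fin n, (lam.submatrix id ⇑g).det ∈ Φ₀) ∧
        (∃ g : Fin m ↪ Fin n, (lam.submatrix id ⇑g).det ≠ 0) := fun W hW => hW.2
    choose! bvf lamf hmemf hspanf hindf hcombf hminf hnef using hch
    set Ψ : Submodule (Polynomial F) (Fin n → RatFunc F) → ((Fin m ↪ Fin n) → RatFunc F) :=
      fun W => fun g => (((lamf W).submatrix id ⇑g).det) with hΨ
    have hTuples : {cc : (Fin m ↪ Fin n) → RatFunc F | ∀ g, cc g ∈ Φ₀}.Finite := by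
      have hEq : {cc : (Fin m ↪ Fin n) → RatFunc F | ∀ g, cc g ∈ Φ₀}
          = Set.pi Set.univ (fun _ : Fin m ↪ Fin n => Φ₀) := by
        ext cc; simp [Set.mem_pi]
      rw [hEq]
      exact Set.Finite.pi fun _ => hΦfin
    have hcover : T m ⊆ ⋃ cc ∈ {cc : (Fin m ↪ Fin n) → RatFunc F | ∀ g, cc g ∈ Φ₀},
        {W ∈ T m | Ψ W = cc} := by
      intro W hW
      refine Set.mem_biUnion ?_ ⟨hW, rfl⟩
      intro g
      exact hminf W hW g
    refine Set.Finite.subset (Set.Finite.biUnion hTuples ?_) hcover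
    intro cc _
    rcases Set.eq_empty_or_nonempty {W ∈ T m | Ψ W = cc} with he | ⟨W₀, hW₀T, hΨ₀⟩
    · rw [he]; exact Set.finite_empty
    have hne : ∃ g₀, cc g₀ ≠ 0 := by
      obtain ⟨g, hg⟩ := hnef W₀ hW₀T
      exact ⟨g, by rw [← hΨ₀]; exact hg⟩
    have h₀min : ∀ g : Fin m ↪ Fin n, ((lamf W₀).submatrix id ⇑g).det = cc g :=
      fun g => congrFun hΨ₀ g
    have hfib := fiber_finite V₀ hfg Bv KB hKB cc hne (bvf W₀) (lamf W₀)
      (fun i => hW₀T.1 (hmemf W₀ hW₀T i)) (hcombf W₀ hW₀T) (hindf W₀ hW₀T) h₀min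
    refine hfib.subset ?_
    rintro W ⟨hWT, hΨW⟩
    exact ⟨hWT.1, bvf W, lamf W, hmemf W hWT, hspanf W hWT, hcombf W hWT,
      fun g => congrFun hΨW g⟩
  exact Set.Finite.subset
    (Set.Finite.biUnion (Finset.range (n + 1)).finite_toSet fun m _ => hTfin m) hsub
end

section
/- Every x ∈ ℝ^n can be written uniquely as a convex combination x = Σ_{i=0}^m μᵢ pᵢ with pᵢ ∈ ℤ^n, 0 < μᵢ ≤ 1, Σ μᵢ = 1, such that p₀ < p₁ < … < p_m ≤ p₀ + (1,…,1), where a ≤ b means aᵢ ≤ bᵢ for all i and a < b means a ≤ b and a ≠ b. In particular m ≤ n. -/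
/-- Telescoping sum over `Ico`. -/
lemma usd_tele (T : ℕ → ℝ) (a : ℕ) : ∀ b, a ≤ b →
    ∑ i ∈ Finset.Ico a b, (T i - T (i+1)) = T a - T b := by
  intro b hb
  induction b, hb using Nat.le_induction with
  | base => simp
  | succ b hb ih =>
    rw [Finset.sum_Ico_succ_top hb, ih]; ring

/-- Strict antitonicity from adjacent decrease. -/
lemma usd_anti (T : ℕ → ℝ) (M : ℕ) (h : ∀ i < M, T (i+1) < T i) :
    ∀ j ≤ M, ∀ i < j, T j < T i := by
  intro j
  induction j with
  | zero => omega
  | succ k ih =>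
    intro hk i hi
    rcases Nat.lt_or_ge i k with h' | h'
    · exact (h k (by omega)).trans (ih (by omega) i h')
    · have : i = k := by omega
      subst this; exact h i (by omega)

lemma usd_anti_le_iff (T : ℕ → ℝ) (M : ℕ) (h : ∀ i < M, T (i+1) < T i)
    {i l : ℕ} (hi : i ≤ M) (hl : l ≤ M) : T i ≤ T l ↔ l ≤ i := by
  constructor
  · intro hle
    by_contra hc
    exact absurd hle (not_le.mpr (usd_anti T M h l hl i (by omega)))
  · intro hle
    rcases eq_or_lt_of_le hle with rfl | hlt
    · exact le_refl _
    · exact (usd_anti T M h i hi l hlt).le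

/-- every `x ∈ ℝ^n` is uniquely a convex combination of a strictly
increasing chain `p₀ < … < p_m` in `ℤ^n` with `p_m ≤ p₀ + (1,…,1)` and all coefficients
positive; in particular `m ≤ n`.  (This is the standard triangulation of `ℝ^n`.) -/
theorem unique_simplicial_decomposition (n : ℕ) (x : Fin n → ℝ) :
    ∃! q : Σ m : ℕ, (Fin (m + 1) → (Fin n → ℤ)) × (Fin (m + 1) → ℝ),
      q.1 ≤ n ∧
      (∀ i j : Fin (q.1 + 1), i < j → q.2.1 i < q.2.1 j) ∧
      (∀ i : Fin (q.1 + 1), q.2.1 i ≤ q.2.1 0 + 1) ∧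
      (∀ i : Fin (q.1 + 1), 0 < q.2.2 i ∧ q.2.2 i ≤ 1) ∧
      (∑ i : Fin (q.1 + 1), q.2.2 i = 1) ∧
      (x = ∑ i : Fin (q.1 + 1), q.2.2 i • (fun j => ((q.2.1 i j : ℝ)))) := by
  classical
  set f : Fin n → ℝ := fun j => Int.fract (x j) with hfdef
  have hf0 : ∀ j, 0 ≤ f j := fun j => Int.fract_nonneg _
  have hf1 : ∀ j, f j < 1 := fun j => Int.fract_lt_one _
  set S : Finset ℝ := (Finset.image f Finset.univ).filter (fun c => c ≠ 0) with hSdef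
  have hSf : ∀ c ∈ S, ∃ j, f j = c := by
    intro c hc
    rw [hSdef, Finset.mem_filter, Finset.mem_image] at hc
    obtain ⟨⟨j, _, hj⟩, _⟩ := hc
    exact ⟨j, hj⟩
  have hSmem : ∀ c ∈ S, 0 < c ∧ c < 1 := by
    intro c hc
    have hne : c ≠ 0 := (Finset.mem_filter.mp hc).2
    obtain ⟨j, hj⟩ := hSf c hc
    refine ⟨lt_of_le_of_ne (hj ▸ hf0 j) (Ne.symm hne), hj ▸ hf1 j⟩
  have hfS : ∀ j, f j ≠ 0 → f j ∈ S := by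
    intro j hj
    rw [hSdef, Finset.mem_filter]
    exact ⟨Finset.mem_image_of_mem f (Finset.mem_univ j), hj⟩
  set m : ℕ := S.card with hmdef
  have hcard : S.card = m := hmdef.symm
  set w : Fin m ↪o ℝ := S.orderEmbOfFin hcard with hwdef
  have hwm : ∀ k, w k ∈ S := fun k => Finset.orderEmbOfFin_mem S hcard k
  have hwmono : StrictMono w := (S.orderEmbOfFin hcard).strictMono
  set ws : ℕ → ℝ := fun k => if h : k < m then w ⟨k, h⟩ else 0 with hwsdef
  have hws : ∀ k (h : k < m), ws k = w ⟨k, h⟩ := by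
    intro k h; simp [hwsdef, h]
  set T : ℕ → ℝ := fun i => if i = 0 then 1 else if i ≤ m then ws (m - i) else 0 with hTdef
  have hT0 : T 0 = 1 := by simp [hTdef]
  have hTtop : ∀ i, m < i → T i = 0 := by
    intro i hi
    have h1 : i ≠ 0 := by omega
    have h2 : ¬ i ≤ m := by omega
    simp [hTdef, h1, h2]
  have hTval : ∀ i, 1 ≤ i → i ≤ m → T i = ws (m - i) := by
    intro i h1 h2
    have h1' : i ≠ 0 := by omega
    rw [hTdef]
    simp only [h1', if_false, if_pos h2]
  have hTmem : ∀ i, 1 ≤ i → i ≤ m → T i ∈ S := by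
    intro i h1 h2
    rw [hTval i h1 h2, hws _ (by omega)]
    exact hwm _
  have hTadj : ∀ i < m + 1, T (i+1) < T i := by
    intro i hi
    rcases Nat.eq_zero_or_pos i with rfl | hi1
    · rcases Nat.eq_zero_or_pos m with hm0 | hm1
      · rw [hT0, hTtop 1 (by omega)]; norm_num
      · rw [hT0]
        exact (hSmem _ (hTmem 1 le_rfl hm1)).2
    · rcases Nat.lt_or_ge i m with him | him
      · rw [hTval i hi1 (by omega), hTval (i+1) (by omega) (by omega),
          hws (m - i) (by omega), hws (m - (i+1)) (by omega)]
        exact hwmono (Fin.mk_lt_mk.mpr (by omega))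
      · have hieq : i = m := by omega
        rw [hieq, hTtop (m+1) (by omega)]
        exact (hSmem _ (hTmem m (by omega) le_rfl)).1
  have hTpos : ∀ i ≤ m, 0 < T i := by
    intro i hi
    have := usd_anti T (m+1) hTadj (m+1) le_rfl i (by omega)
    rwa [hTtop (m+1) (by omega)] at this
  have hT01 : ∀ i, 0 ≤ T i ∧ T i ≤ 1 := by
    intro i
    rcases Nat.lt_or_ge m i with hi | hi
    · rw [hTtop i hi]; norm_num
    · refine ⟨(hTpos i hi).le, ?_⟩
      rcases Nat.eq_zero_or_pos i with rfl | hi1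
      · rw [hT0]
      · exact (hSmem _ (hTmem i hi1 hi)).2.le
  have hTsurj : ∀ c ∈ S, ∃ i, 1 ≤ i ∧ i ≤ m ∧ T i = c := by
    intro c hc
    have : (c : ℝ) ∈ Set.range (S.orderEmbOfFin hcard) := by
      rw [Finset.range_orderEmbOfFin]; exact hc
    obtain ⟨k, hk⟩ := this
    have hkm : (k : ℕ) < m := k.isLt
    refine ⟨m - k, by omega, by omega, ?_⟩
    rw [hTval (m - k) (by omega) (by omega)]
    have h2 : m - (m - (k:ℕ)) = (k:ℕ) := by omega
    rw [h2, hws _ hkm, ← hk]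
  set p : ℕ → Fin n → ℤ := fun i j => ⌊x j⌋ + if T i ≤ f j then 1 else 0 with hpdef
  set μ : ℕ → ℝ := fun i => T i - T (i+1) with hμdef
  have hp0 : ∀ j, p 0 j = ⌊x j⌋ := by
    intro j
    rw [hpdef]
    simp only [hT0, if_neg (not_le.mpr (hf1 j)), add_zero]
  have hkey : ∀ j, ∑ i ∈ Finset.range (m+1), μ i * (if T i ≤ f j then 1 else 0) = f j := by
    intro j
    rcases eq_or_ne (f j) 0 with h0 | h0
    · rw [h0]
      apply Finset.sum_eq_zero
      intro i hi
      rw [Finset.mem_range] at hi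
      rw [if_neg (not_le.mpr (hTpos i (by omega))), mul_zero]
    · obtain ⟨l, hl1, hlm, hlv⟩ := hTsurj (f j) (hfS j h0)
      have : ∀ i ∈ Finset.range (m+1), μ i * (if T i ≤ f j then 1 else 0)
          = if T i ≤ f j then μ i else 0 := by
        intro i _; split_ifs <;> ring
      rw [Finset.sum_congr rfl this, ← Finset.sum_filter]
      have hflt : Finset.filter (fun i => T i ≤ f j) (Finset.range (m+1))
          = Finset.Ico l (m+1) := by
        ext i
        simp only [Finset.mem_filter, Finset.mem_range, Finset.mem_Ico]
        constructor
        · rintro ⟨hi, hle⟩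
          rw [← hlv] at hle
          exact ⟨(usd_anti_le_iff T (m+1) hTadj (by omega) (by omega)).mp hle, hi⟩
        · rintro ⟨hli, hi⟩
          rw [← hlv]
          exact ⟨hi, (usd_anti_le_iff T (m+1) hTadj (by omega) (by omega)).mpr hli⟩
      rw [hflt]
      have := usd_tele T l (m+1) (by omega)
      simp only [hμdef]
      rw [this, hTtop (m+1) (by omega), hlv, sub_zero]
  have hpcast : ∀ i j, ((p i j : ℤ) : ℝ) = (⌊x j⌋ : ℝ) + (if T i ≤ f j then (1:ℝ) else 0) := by
    intro i j
    by_cases h : T i ≤ f j <;> simp [hpdef, h]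
  refine ⟨⟨m, fun i => p i, fun i => μ i⟩, ⟨?_, ?_, ?_, ?_, ?_, ?_⟩, ?_⟩
  · -- m ≤ n
    calc m = S.card := hcard.symm
    _ ≤ (Finset.image f Finset.univ).card := Finset.card_filter_le _ _
    _ ≤ Finset.univ.card := Finset.card_image_le
    _ = n := by simp
  · -- chain
    intro i j hij
    have hij' : (i : ℕ) < (j : ℕ) := hij
    have hjm : (j : ℕ) < m + 1 := j.isLt
    have him : (i : ℕ) < m + 1 := i.isLt
    have hji : T (j : ℕ) ≤ T (i : ℕ) :=
      (usd_anti T (m+1) hTadj j (by omega) i hij').le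
    rw [lt_iff_le_and_ne]
    constructor
    · intro c
      show p (i:ℕ) c ≤ p (j:ℕ) c
      simp only [hpdef]
      split_ifs with h1 h2
      · exact le_refl _
      · exact absurd (hji.trans h1) h2
      · simp
      · exact le_refl _
    · have hm1 : 1 ≤ (i:ℕ)+1 := by omega
      have hm2 : (i:ℕ)+1 ≤ m := by omega
      obtain ⟨c, hc⟩ := hSf _ (hTmem ((i:ℕ)+1) hm1 hm2)
      intro heq
      have heqc : p (i:ℕ) c = p (j:ℕ) c := congrFun heq c
      have hTi : ¬ (T (i:ℕ) ≤ f c) := by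
        rw [hc]
        exact not_le.mpr (hTadj i (by omega))
      have hTj : T (j:ℕ) ≤ f c := by
        rw [hc]
        exact (usd_anti_le_iff T (m+1) hTadj (by omega) (by omega)).mpr (by omega)
      simp only [hpdef] at heqc
      rw [if_neg hTi, if_pos hTj] at heqc
      omega
  · -- bound
    intro i
    intro c
    show p (i:ℕ) c ≤ p ((0 : Fin (m+1)):ℕ) c + 1
    have h0' : ((0 : Fin (m+1)):ℕ) = 0 := rfl
    rw [h0', hp0 c]
    simp only [hpdef]
    split_ifs <;> omega
  · -- coefficients in (0,1]
    intro i
    constructor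
    · simp only [hμdef]
      exact sub_pos.mpr (hTadj i i.isLt)
    · simp only [hμdef]
      have h1 := (hT01 (i:ℕ)).2
      have h2 := (hT01 ((i:ℕ)+1)).1
      linarith
  · -- sum of coefficients
    rw [Fin.sum_univ_eq_sum_range (fun i => μ i) (m+1)]
    simp only [hμdef]
    rw [Finset.range_eq_Ico, usd_tele T 0 (m+1) (by omega), hT0, hTtop (m+1) (by omega), sub_zero]
  · -- convex combination equals x
    funext j
    rw [Finset.sum_apply]
    have : ∀ i : Fin (m+1), (μ (i:ℕ) • fun c => ((p (i:ℕ) c : ℤ) : ℝ)) j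
        = μ (i:ℕ) * ((⌊x j⌋ : ℝ) + (if T (i:ℕ) ≤ f j then (1:ℝ) else 0)) := by
      intro i
      rw [Pi.smul_apply, smul_eq_mul, hpcast]
    rw [Finset.sum_congr rfl (fun i _ => this i)]
    have expand : ∀ i : Fin (m+1), μ (i:ℕ) * ((⌊x j⌋ : ℝ) + (if T (i:ℕ) ≤ f j then (1:ℝ) else 0))
        = μ (i:ℕ) * (⌊x j⌋ : ℝ) + μ (i:ℕ) * (if T (i:ℕ) ≤ f j then (1:ℝ) else 0) := by
      intro i; ring
    rw [Finset.sum_congr rfl (fun i _ => expand i), Finset.sum_add_distrib, ← Finset.sum_mul]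
    rw [Fin.sum_univ_eq_sum_range (fun i => μ i) (m+1)]
    rw [Fin.sum_univ_eq_sum_range (fun i => μ i * (if T i ≤ f j then (1:ℝ) else 0)) (m+1)]
    have hsum1 : ∑ i ∈ Finset.range (m+1), μ i = 1 := by
      simp only [hμdef]
      rw [Finset.range_eq_Ico, usd_tele T 0 (m+1) (by omega), hT0, hTtop (m+1) (by omega), sub_zero]
    rw [hsum1, hkey j, one_mul]
    exact (Int.floor_add_fract (x j)).symm
  · -- uniqueness
    rintro ⟨m', p', μ'⟩ ⟨hm'n, hchain, hbd, hpos, hsum, hx⟩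
    dsimp only at hm'n hchain hbd hpos hsum hx
    set T' : ℕ → ℝ := fun i => ∑ k : Fin (m'+1), if i ≤ (k:ℕ) then μ' k else 0 with hT'def
    have hT'0 : T' 0 = 1 := by
      simp only [hT'def, Nat.zero_le, if_true]
      exact hsum
    have hT'top : ∀ i, m' < i → T' i = 0 := by
      intro i hi
      simp only [hT'def]
      apply Finset.sum_eq_zero
      intro k _
      rw [if_neg (by have := k.isLt; omega)]
    have hT'diff : ∀ i (hi : i < m'+1), T' i - T' (i+1) = μ' ⟨i, hi⟩ := by
      intro i hi
      simp only [hT'def]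
      rw [← Finset.sum_sub_distrib]
      have hterm : ∀ k : Fin (m'+1),
          ((if i ≤ (k:ℕ) then μ' k else 0) - (if i+1 ≤ (k:ℕ) then μ' k else 0))
          = if k = ⟨i, hi⟩ then μ' k else 0 := by
        intro k
        rcases eq_or_ne k ⟨i, hi⟩ with rfl | hne
        · simp
        · have hkv : (k:ℕ) ≠ i := fun h => hne (Fin.ext h)
          rw [if_neg hne]
          by_cases h1 : i ≤ (k:ℕ)
          · rw [if_pos h1, if_pos (by omega), sub_self]
          · rw [if_neg h1, if_neg (by omega), sub_self]
      rw [Finset.sum_congr rfl (fun k _ => hterm k)]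
      simp
    have hT'adj : ∀ i < m'+1, T' (i+1) < T' i := by
      intro i hi
      have hd := hT'diff i hi
      have hp := (hpos ⟨i, hi⟩).1
      linarith
    have hT'pos : ∀ i ≤ m', 0 < T' i := by
      intro i hi
      have := usd_anti T' (m'+1) hT'adj (m'+1) le_rfl i (by omega)
      rwa [hT'top (m'+1) (by omega)] at this
    have hmono' : ∀ i k : Fin (m'+1), i ≤ k → ∀ c, p' i c ≤ p' k c := by
      intro i k hik c
      rcases eq_or_lt_of_le hik with rfl | hlt
      · exact le_refl _
      · exact (le_of_lt (hchain i k hlt)) c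
    have hbd' : ∀ (i : Fin (m'+1)) (c : Fin n), p' 0 c ≤ p' i c ∧ p' i c ≤ p' 0 c + 1 := by
      intro i c
      refine ⟨hmono' 0 i (Fin.zero_le i) c, ?_⟩
      have := hbd i c
      simpa using this
    set A : Fin n → Finset (Fin (m'+1)) :=
      fun c => Finset.filter (fun i => p' 0 c < p' i c) Finset.univ with hAdef
    have hA0 : ∀ c, (0 : Fin (m'+1)) ∉ A c := by
      intro c
      simp [hAdef]
    have hrep : ∀ (i : Fin (m'+1)) (c : Fin n),
        p' i c = p' 0 c + (if i ∈ A c then 1 else 0) := by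
      intro i c
      have h1 := (hbd' i c).1
      have h2 := (hbd' i c).2
      by_cases h : i ∈ A c
      · rw [if_pos h]
        have := (Finset.mem_filter.mp h).2
        omega
      · rw [if_neg h]
        have hnl : ¬ p' 0 c < p' i c := fun hcon =>
          h (Finset.mem_filter.mpr ⟨Finset.mem_univ i, hcon⟩)
        omega
    have hup : ∀ (c : Fin n) (i k : Fin (m'+1)), i ∈ A c → i ≤ k → k ∈ A c := by
      intro c i k hi hik
      have := (Finset.mem_filter.mp hi).2
      exact Finset.mem_filter.mpr ⟨Finset.mem_univ k, lt_of_lt_of_le this (hmono' i k hik c)⟩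
    have hxc : ∀ c, x c = (p' 0 c : ℝ) + ∑ i ∈ A c, μ' i := by
      intro c
      have hx1 : x c = ∑ i : Fin (m'+1), μ' i * ((p' i c : ℤ) : ℝ) := by
        have hx2 := congrFun hx c
        rw [Finset.sum_apply] at hx2
        simpa [Pi.smul_apply, smul_eq_mul] using hx2
      rw [hx1]
      have hterm : ∀ i : Fin (m'+1), μ' i * ((p' i c : ℤ) : ℝ)
          = μ' i * (p' 0 c : ℝ) + (if i ∈ A c then μ' i else 0) := by
        intro i
        rw [hrep i c]
        split_ifs <;> push_cast <;> ring
      rw [Finset.sum_congr rfl (fun i _ => hterm i), Finset.sum_add_distrib,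
        ← Finset.sum_mul, hsum, one_mul]
      congr 1
      rw [Finset.sum_ite_mem, Finset.univ_inter]
    have hs0 : ∀ c, 0 ≤ ∑ i ∈ A c, μ' i :=
      fun c => Finset.sum_nonneg fun i _ => (hpos i).1.le
    have hs1 : ∀ c, ∑ i ∈ A c, μ' i < 1 := by
      intro c
      have hsub : A c ⊆ Finset.univ.erase 0 := by
        intro i hi
        refine Finset.mem_erase.mpr ⟨?_, Finset.mem_univ i⟩
        rintro rfl; exact hA0 c hi
      have hle : ∑ i ∈ A c, μ' i ≤ ∑ i ∈ Finset.univ.erase 0, μ' i :=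
        Finset.sum_le_sum_of_subset_of_nonneg hsub (fun i _ _ => (hpos i).1.le)
      have herase : μ' 0 + ∑ i ∈ Finset.univ.erase 0, μ' i = 1 := by
        rw [Finset.add_sum_erase _ _ (Finset.mem_univ 0)]
        exact hsum
      have := (hpos 0).1
      linarith
    have hfloor : ∀ c, (p' 0 c : ℤ) = ⌊x c⌋ ∧ Int.fract (x c) = ∑ i ∈ A c, μ' i := by
      intro c
      constructor
      · have hfl : ⌊x c⌋ = p' 0 c + ⌊∑ i ∈ A c, μ' i⌋ := by
          rw [hxc c]
          exact Int.floor_intCast_add _ _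
        rw [hfl, Int.floor_eq_zero_iff.mpr (Set.mem_Ico.mpr ⟨hs0 c, hs1 c⟩), add_zero]
      · rw [hxc c, Int.fract_intCast_add, Int.fract_eq_self.mpr ⟨hs0 c, hs1 c⟩]
    have hsumA : ∀ (c : Fin n) (i₀ : Fin (m'+1)), (∀ i, i ∈ A c ↔ i₀ ≤ i) →
        ∑ i ∈ A c, μ' i = T' (i₀:ℕ) := by
      intro c i₀ hiff
      have hAeq : A c = Finset.filter (fun k : Fin (m'+1) => (i₀:ℕ) ≤ (k:ℕ)) Finset.univ := by
        refine Finset.ext fun k => ?_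
        simp only [Finset.mem_filter, Finset.mem_univ, true_and]
        exact ⟨fun h => (hiff k).mp h, fun h => (hiff k).mpr h⟩
      rw [hAeq, Finset.sum_filter]
    have hminchar : ∀ c, Int.fract (x c) ≠ 0 →
        ∃ i₀ : Fin (m'+1), 1 ≤ (i₀:ℕ) ∧ (∀ i, i ∈ A c ↔ i₀ ≤ i)
          ∧ T' (i₀:ℕ) = Int.fract (x c) := by
      intro c hc
      have hne : (A c).Nonempty := by
        by_contra h
        rw [Finset.not_nonempty_iff_eq_empty] at h
        rw [(hfloor c).2, h, Finset.sum_empty] at hc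
        exact hc rfl
      set i₀ := (A c).min' hne with hi₀
      have hi₀mem : i₀ ∈ A c := (A c).min'_mem hne
      have hi₀min : ∀ k ∈ A c, i₀ ≤ k := fun k hk => (A c).min'_le k hk
      have hiff : ∀ i, i ∈ A c ↔ i₀ ≤ i :=
        fun i => ⟨fun h => hi₀min i h, fun h => hup c i₀ i hi₀mem h⟩
      have h1 : 1 ≤ (i₀:ℕ) := by
        rcases Nat.eq_zero_or_pos (i₀:ℕ) with h | h
        · exfalso
          have h0' : i₀ = 0 := Fin.ext h
          rw [h0'] at hi₀mem
          exact hA0 c hi₀mem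
        · exact h
      exact ⟨i₀, h1, hiff, by rw [← hsumA c i₀ hiff]; exact ((hfloor c).2).symm⟩
    have hTS' : ∀ i : ℕ, 1 ≤ i → i ≤ m' → T' i ∈ S := by
      intro i h1 h2
      set I : Fin (m'+1) := ⟨i, by omega⟩ with hI
      set J : Fin (m'+1) := ⟨i-1, by omega⟩ with hJ
      have hlt := hchain J I (by rw [Fin.lt_def]; simp only [hI, hJ]; omega)
      rw [lt_iff_le_and_ne] at hlt
      obtain ⟨hle, hne⟩ := hlt
      obtain ⟨c, hc⟩ := Function.ne_iff.mp hne
      have hc' : p' J c < p' I c := lt_of_le_of_ne (hle c) hc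
      have hImem : I ∈ A c := Finset.mem_filter.mpr ⟨Finset.mem_univ I,
        lt_of_le_of_lt (hmono' 0 J (Fin.zero_le J) c) hc'⟩
      have hImin : ∀ k, k ∈ A c → I ≤ k := by
        intro k hk
        by_contra hcon
        rw [not_le, Fin.lt_def] at hcon
        have hkJ : k ≤ J := by
          rw [Fin.le_def]
          simp only [hI] at hcon
          simp only [hJ]
          omega
        have h3 := (Finset.mem_filter.mp hk).2
        have h4 : p' k c ≤ p' J c := hmono' k J hkJ c
        have h5 := (hbd' I c).2
        omega
      have hiff : ∀ k, k ∈ A c ↔ I ≤ k :=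
        fun k => ⟨fun h => hImin k h, fun h => hup c I k hImem h⟩
      have hfr : Int.fract (x c) = T' i := by
        rw [(hfloor c).2, hsumA c I hiff]
      have hpos' : (0:ℝ) < T' i := hT'pos i h2
      have hfc : f c = T' i := hfr
      have hmem : f c ∈ S := hfS c (by rw [hfc]; exact ne_of_gt hpos')
      rwa [hfc] at hmem
    have hTsurj' : ∀ c' ∈ S, ∃ i, 1 ≤ i ∧ i ≤ m' ∧ T' i = c' := by
      intro c' hc'
      obtain ⟨c, hc⟩ := hSf c' hc'
      have hne0 : Int.fract (x c) ≠ 0 := by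
        show f c ≠ 0
        rw [hc]
        exact ne_of_gt (hSmem c' hc').1
      obtain ⟨i₀, h1, hiff, hval⟩ := hminchar c hne0
      refine ⟨(i₀:ℕ), h1, by have := i₀.isLt; omega, ?_⟩
      rw [hval]
      show f c = c'
      exact hc
    set g : Fin m' → ℝ := fun k => T' (m' - (k:ℕ)) with hgdef
    have hgS : ∀ k, g k ∈ S := by
      intro k
      have := k.isLt
      exact hTS' (m' - (k:ℕ)) (by omega) (by omega)
    have hgmono : StrictMono g := by
      intro a b hab
      have ha := a.isLt
      have hb := b.isLt
      rw [Fin.lt_def] at hab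
      exact usd_anti T' (m'+1) hT'adj (m' - (a:ℕ)) (by omega) (m' - (b:ℕ)) (by omega)
    have himg : Finset.image g Finset.univ = S := by
      apply Finset.Subset.antisymm
      · intro c hc
        obtain ⟨k, _, rfl⟩ := Finset.mem_image.mp hc
        exact hgS k
      · intro c hc
        obtain ⟨i, h1, h2, h3⟩ := hTsurj' c hc
        refine Finset.mem_image.mpr ⟨⟨m' - i, by omega⟩, Finset.mem_univ _, ?_⟩
        show T' (m' - (m' - i)) = c
        rw [(by omega : m' - (m' - i) = i)]
        exact h3
    have hm'm : m' = m := by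
      have h1 : (Finset.image g Finset.univ).card = m' := by
        rw [Finset.card_image_of_injective _ hgmono.injective, Finset.card_univ,
          Fintype.card_fin]
      rw [himg, hcard] at h1
      exact h1.symm
    subst hm'm
    have hguniq : g = ⇑(S.orderEmbOfFin hcard) :=
      Finset.orderEmbOfFin_unique hcard (fun k => hgS k) hgmono
    have hTT : ∀ i, i ≤ m + 1 → T' i = T i := by
      intro i hi
      rcases Nat.eq_zero_or_pos i with rfl | h1
      · rw [hT'0, hT0]
      rcases Nat.lt_or_ge m i with h2 | h2
      · rw [hT'top i (by omega), hTtop i (by omega)]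
      · have hg1 : g ⟨m - i, by omega⟩ = T' i := by
          show T' (m - (m - i)) = T' i
          rw [(by omega : m - (m - i) = i)]
        rw [← hg1, hguniq, hTval i h1 h2, hws (m - i) (by omega)]
    have hμeq : μ' = fun i : Fin (m+1) => μ (i:ℕ) := by
      funext i
      have hi := i.isLt
      have hd := hT'diff (i:ℕ) hi
      rw [Fin.eta] at hd
      rw [← hd, hTT (i:ℕ) (by omega), hTT ((i:ℕ)+1) (by omega)]
    have hpeq : p' = fun i : Fin (m+1) => p (i:ℕ) := by
      funext i c
      have hi := i.isLt
      have hrep' := hrep i c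
      have hfl := (hfloor c).1
      by_cases h0 : Int.fract (x c) = 0
      · have hAem : i ∉ A c := by
          intro hmem
          have hsp : 0 < ∑ k ∈ A c, μ' k :=
            Finset.sum_pos (fun k _ => (hpos k).1) ⟨i, hmem⟩
          rw [(hfloor c).2] at h0
          linarith
        have hTle : ¬ T (i:ℕ) ≤ f c := by
          show ¬ T (i:ℕ) ≤ Int.fract (x c)
          rw [h0]
          exact not_le.mpr (hTpos (i:ℕ) (by omega))
        rw [hrep', if_neg hAem]
        simp only [hpdef]
        rw [if_neg hTle, hfl]
      · obtain ⟨i₀, h1, hiff, hval⟩ := hminchar c h0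
        have hi₀ := i₀.isLt
        have hfi : f c = T (i₀:ℕ) := by
          show Int.fract (x c) = T (i₀:ℕ)
          rw [← hval]
          exact hTT (i₀:ℕ) (by omega)
        have hiT : i ∈ A c ↔ T (i:ℕ) ≤ f c := by
          rw [hiff i, hfi, Fin.le_def]
          exact (usd_anti_le_iff T (m+1) hTadj (by omega) (by omega)).symm
        rw [hrep']
        simp only [hpdef]
        rw [hfl]
        by_cases hh : i ∈ A c
        · rw [if_pos hh, if_pos (hiT.mp hh)]
        · rw [if_neg hh, if_neg (fun hcon => hh (hiT.mpr hcon))]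
    show (⟨m, (p', μ')⟩ : Σ m : ℕ, (Fin (m + 1) → (Fin n → ℤ)) × (Fin (m + 1) → ℝ))
        = ⟨m, (fun i => p (i:ℕ), fun i => μ (i:ℕ))⟩
    rw [hpeq, hμeq]
end

section
/- Let q > 1 and n ≥ 2. For k ∈ {1,…,n−1} define f(k) = ∏_{i=1}^{k} (q^i − 1)/(q − 1) · ∏_{i=1}^{n−k} (q^i − 1)/(q − 1). Then f(k−1)/f(k) = (q^{n−k+1} − 1)/(q^k − 1) > 1 for 2 ≤ k ≤ ⌊n/2⌋, so f is strictly decreasing on {1,…,⌊n/2⌋}; consequently f(k) = f(k') with 1 ≤ k, k' ≤ n−1 implies k' = k or k' = n − k. -/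
/-- for `q > 1` and `n ≥ 2`, the function
`f(k) = ∏_{i=1}^{k} (q^i − 1)/(q − 1) · ∏_{i=1}^{n−k} (q^i − 1)/(q − 1)` satisfies
`f(k−1)/f(k) = (q^{n−k+1} − 1)/(q^k − 1) > 1` for `2 ≤ k ≤ ⌊n/2⌋`, is strictly
decreasing on `{1, …, ⌊n/2⌋}`, and `f(k) = f(k')` for `1 ≤ k, k' ≤ n−1` forces
`k' = k` or `k' = n − k`. -/
theorem flag_count_determines_label (q : ℝ) (hq : 1 < q) (n : ℕ) (hn : 2 ≤ n)
    (f : ℕ → ℝ)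
    (hf : ∀ k : ℕ, f k = (∏ i ∈ Finset.Icc 1 k, (q ^ i - 1) / (q - 1)) *
      ∏ i ∈ Finset.Icc 1 (n - k), (q ^ i - 1) / (q - 1)) :
    (∀ k : ℕ, 2 ≤ k → k ≤ n / 2 →
      f (k - 1) / f k = (q ^ (n - k + 1) - 1) / (q ^ k - 1) ∧ 1 < f (k - 1) / f k) ∧
    StrictAntiOn f (Set.Icc 1 (n / 2)) ∧
    (∀ k k' : ℕ, 1 ≤ k → k ≤ n - 1 → 1 ≤ k' → k' ≤ n - 1 →
      f k = f k' → k' = k ∨ k' = n - k) := by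
  have hq0 : (0:ℝ) < q - 1 := by linarith
  have hpow : ∀ i : ℕ, 1 ≤ i → 1 < q ^ i := by
    intro i hi
    calc (1:ℝ) < q := hq
    _ = q ^ 1 := (pow_one q).symm
    _ ≤ q ^ i := pow_le_pow_right₀ (le_of_lt hq) hi
  let P : ℕ → ℝ := fun m => ∏ i ∈ Finset.Icc 1 m, (q ^ i - 1) / (q - 1)
  have hfP : ∀ k, f k = P k * P (n - k) := hf
  have hPpos : ∀ m, 0 < P m := by
    intro m
    apply Finset.prod_pos
    intro i hi
    have hi1 : 1 ≤ i := (Finset.mem_Icc.mp hi).1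
    exact div_pos (by linarith [hpow i hi1]) hq0
  have hfpos : ∀ k, 0 < f k := by
    intro k; rw [hfP]; exact mul_pos (hPpos _) (hPpos _)
  have hPsucc : ∀ m : ℕ, P (m + 1) = P m * ((q ^ (m + 1) - 1) / (q - 1)) := by
    intro m
    exact Finset.prod_Icc_succ_top (by omega) _
  -- ratio formula
  have hratio : ∀ k, 2 ≤ k → k ≤ n / 2 →
      f (k - 1) / f k = (q ^ (n - k + 1) - 1) / (q ^ k - 1) := by
    intro k h2 hh
    have hkn : k ≤ n := le_trans hh (Nat.div_le_self n 2)
    have e1 : f (k - 1) = P (k - 1) * P (n - k + 1) := by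
      rw [hfP, show n - (k - 1) = n - k + 1 by omega]
    have e2 : f k = P k * P (n - k) := hfP k
    have ek : P k = P (k - 1) * ((q ^ k - 1) / (q - 1)) := by
      have := hPsucc (k - 1)
      rwa [show k - 1 + 1 = k by omega] at this
    have hqk : (0:ℝ) < q ^ k - 1 := by linarith [hpow k (by omega)]
    have hqn : (0:ℝ) < q ^ (n - k + 1) - 1 := by linarith [hpow (n - k + 1) (by omega)]
    have h1 := hPpos (k - 1)
    have h2' := hPpos (n - k)
    rw [e1, e2, ek, hPsucc (n - k)]
    field_simp
  have hgt : ∀ k, 2 ≤ k → k ≤ n / 2 → 1 < (q ^ (n - k + 1) - 1) / (q ^ k - 1) := by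
    intro k h2 hh
    have h1 : k < n - k + 1 := by omega
    have hlt : q ^ k < q ^ (n - k + 1) := pow_lt_pow_right₀ hq h1
    have hqk : (0:ℝ) < q ^ k - 1 := by linarith [hpow k (by omega)]
    rw [one_lt_div hqk]
    linarith
  have hstep : ∀ k, 1 ≤ k → k + 1 ≤ n / 2 → f (k + 1) < f k := by
    intro k h1 hh
    have hr := hratio (k + 1) (by omega) hh
    have hg := hgt (k + 1) (by omega) hh
    rw [show k + 1 - 1 = k by omega] at hr
    have : 1 < f k / f (k + 1) := by rw [hr]; exact hg
    exact (one_lt_div (hfpos (k + 1))).mp this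
  have hanti : StrictAntiOn f (Set.Icc 1 (n / 2)) := by
    have key : ∀ d a, 1 ≤ a → a + d + 1 ≤ n / 2 → f (a + d + 1) < f a := by
      intro d
      induction d with
      | zero => intro a ha h; simpa using hstep a ha (by omega)
      | succ d ih =>
        intro a ha h
        have h1 : f (a + d + 1 + 1) < f (a + d + 1) := hstep (a + d + 1) (by omega) (by omega)
        have h2 : f (a + d + 1) < f a := ih a ha (by omega)
        calc f (a + (d + 1) + 1) = f (a + d + 1 + 1) := by ring_nf
        _ < f a := lt_trans h1 h2
    intro a ha b hb hab
    obtain ⟨d, rfl⟩ : ∃ d, b = a + d + 1 := ⟨b - a - 1, by omega⟩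
    exact key d a ha.1 hb.2
  refine ⟨fun k h2 hh => ⟨hratio k h2 hh, by rw [hratio k h2 hh]; exact hgt k h2 hh⟩, hanti, ?_⟩
  have hsym : ∀ k, k ≤ n → f (n - k) = f k := by
    intro k hk
    rw [hfP, hfP, show n - (n - k) = k by omega, mul_comm]
  intro k k' hk1 hk2 hk'1 hk'2 hff
  have hm : ∀ j, 1 ≤ j → j ≤ n - 1 → min j (n - j) ∈ Set.Icc 1 (n / 2) ∧
      f (min j (n - j)) = f j := by
    intro j h1 h2
    refine ⟨Set.mem_Icc.mpr ⟨by omega, by omega⟩, ?_⟩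
    rcases le_total j (n - j) with h | h
    · rw [min_eq_left h]
    · rw [min_eq_right h]; exact hsym j (by omega)
  obtain ⟨hmk, hek⟩ := hm k hk1 hk2
  obtain ⟨hmk', hek'⟩ := hm k' hk'1 hk'2
  have := hanti.injOn hmk hmk' (by rw [hek, hek', hff])
  omega
end
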